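/- arXiv:0906.0375 — 5 statements merged into one kernel-verified Lean document; each statement's English description precedes it below -/
import Mathlib

section
/- Let p > 10/3, p > q > 0, F(x) = x^{p/2}/(1 + x^{(p−q)/2}) for x ≥ 0 with F(0)=0, and let F' denote its derivative (extended by F'(0)=0). For every R₀ > 0 there is a constant C > 0 such that for all real R with 0 ≤ R ≤ R₀ and all v ∈ ℂ: | [ F(|R+v|²) + F'(|R+v|²)·|R+v|² ] − [ F(R²) + F'(R²)·R² ] | ≤ C·( R^{p−1}·|v| + |v|^{p} ). -/
set_option maxHeartbeats 1000000

open Real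

private lemma sqr_rpow' {r : ℝ} (hr : 0 < r) (y : ℝ) : (r ^ 2 : ℝ) ^ y = r ^ (2 * y) := by
  rw [← Real.rpow_natCast r 2, ← Real.rpow_mul hr.le]
  norm_num

private lemma phi_deriv' (p q : ℝ) (x : ℝ) (hx : 0 < x) :
    HasDerivAt (fun x : ℝ => x ^ (p / 2) / (1 + x ^ ((p - q) / 2)))
      (((p/2) * x ^ (p/2 - 1) * (1 + x ^ ((p-q)/2))
        - x ^ (p/2) * ((p-q)/2 * x ^ ((p-q)/2 - 1))) / (1 + x ^ ((p-q)/2)) ^ 2) x := by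
  have h1 : HasDerivAt (fun x : ℝ => x ^ (p/2)) ((p/2) * x ^ (p/2 - 1)) x :=
    Real.hasDerivAt_rpow_const (Or.inl hx.ne')
  have h2 : HasDerivAt (fun x : ℝ => 1 + x ^ ((p-q)/2)) ((p-q)/2 * x ^ ((p-q)/2 - 1)) x :=
    (Real.hasDerivAt_rpow_const (Or.inl hx.ne')).const_add 1
  have hd : (1 + x ^ ((p-q)/2)) ≠ 0 := by positivity
  exact h1.div h2 hd

private lemma geqh' (p q r : ℝ) (hr : 0 < r) :
    (r^2:ℝ) ^ (p/2) / (1 + (r^2:ℝ) ^ ((p-q)/2))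
      + (((p/2) * (r^2:ℝ) ^ (p/2 - 1) * (1 + (r^2:ℝ) ^ ((p-q)/2))
        - (r^2:ℝ) ^ (p/2) * ((p-q)/2 * (r^2:ℝ) ^ ((p-q)/2 - 1))) / (1 + (r^2:ℝ) ^ ((p-q)/2)) ^ 2) * r ^ 2
    = r ^ p * ((1 + p/2) + (1 + q/2) * r ^ (p - q)) / (1 + r ^ (p - q)) ^ 2 := by
  have hx1 : (r^2:ℝ) ^ (p/2) = r ^ p := by rw [sqr_rpow' hr]; ring_nf
  have hx2 : (r^2:ℝ) ^ ((p-q)/2) = r ^ (p-q) := by rw [sqr_rpow' hr]; ring_nf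
  have hx3 : (r^2:ℝ) ^ (p/2 - 1) = r ^ p / r ^ 2 := by
    rw [sqr_rpow' hr, eq_div_iff (pow_ne_zero 2 hr.ne'), ← Real.rpow_natCast r 2,
      ← Real.rpow_add hr]
    norm_num
    ring_nf
  have hx4 : (r^2:ℝ) ^ ((p-q)/2 - 1) = r ^ (p-q) / r ^ 2 := by
    rw [sqr_rpow' hr, eq_div_iff (pow_ne_zero 2 hr.ne'), ← Real.rpow_natCast r 2,
      ← Real.rpow_add hr]
    norm_num
    ring_nf
  rw [hx1, hx2, hx3, hx4]
  have hne : (1 + r ^ (p - q)) ≠ 0 := by positivity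
  field_simp
  ring

private noncomputable def Draw' (p q r : ℝ) : ℝ :=
  ((p * r^(p-1) * ((1+p/2) + (1+q/2)*r^(p-q)) + r^p * ((1+q/2) * ((p-q) * r^(p-q-1)))) * (1+r^(p-q))^2
  - (r^p*((1+p/2)+(1+q/2)*r^(p-q))) * (2 * (1+r^(p-q))^1 * ((p-q)*r^(p-q-1)))) / ((1+r^(p-q))^2)^2

private lemma h0_deriv' (p q : ℝ) (r : ℝ) (hr : 0 < r) :
    HasDerivAt (fun r : ℝ => r ^ p * ((1 + p/2) + (1 + q/2) * r ^ (p - q)) / (1 + r ^ (p - q)) ^ 2)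
      (Draw' p q r) r := by
  have hc : HasDerivAt (fun r : ℝ => r ^ p * ((1 + p/2) + (1 + q/2) * r ^ (p - q)))
      (p * r^(p-1) * ((1+p/2) + (1+q/2)*r^(p-q)) + r^p * ((1+q/2) * ((p-q) * r^(p-q-1)))) r :=
    (Real.hasDerivAt_rpow_const (Or.inl hr.ne')).mul
      (((Real.hasDerivAt_rpow_const (Or.inl hr.ne')).const_mul (1+q/2)).const_add (1+p/2))
  have hd : HasDerivAt (fun r : ℝ => (1 + r ^ (p - q)) ^ 2)
      (2 * (1+r^(p-q))^1 * ((p-q)*r^(p-q-1))) r :=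
    ((Real.hasDerivAt_rpow_const (Or.inl hr.ne')).const_add 1).pow 2
  have hne : ((1 + r ^ (p-q)) ^ 2) ≠ 0 := by positivity
  exact hc.div hd hne

private lemma h0_deriv_bound' (p q r : ℝ) (hp : 0 < p) (hq : 0 < q) (hqp : q < p) (hr : 0 < r) :
    |Draw' p q r| ≤ ((p + 2*(p-q)) * ((1+p/2)+(1+q/2)) + (1+q/2)*(p-q)) * r^(p-1) := by
  have hpA : r ^ p = r ^ (p-1) * r := by
    rw [show p = (p-1)+1 by ring, Real.rpow_add_one hr.ne']; ring_nf
  have he : r ^ (p-q-1) = r ^ (p-q) / r := by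
    rw [eq_div_iff hr.ne', ← Real.rpow_add_one hr.ne']; ring_nf
  set s := r ^ (p-q) with hsdef
  have hs : 0 ≤ s := Real.rpow_nonneg hr.le _
  set K : ℝ := (p + 2*(p-q)) * ((1+p/2)+(1+q/2)) + (1+q/2)*(p-q) with hK
  set X : ℝ := p*((1+p/2) + (1+q/2)*s) + (1+q/2)*(p-q)*s with hX
  set Y : ℝ := 2*(p-q)*s*((1+p/2) + (1+q/2)*s) with hY
  have key : Draw' p q r = r^(p-1) * ((X * (1+s)^2 - Y*(1+s)) / (1+s)^4) := by
    rw [Draw', hpA, he, hX, hY]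
    have h1s : (1:ℝ) + s ≠ 0 := by positivity
    field_simp
    ring
  have hXpos : 0 ≤ X := by
    rw [hX]
    nlinarith [mul_nonneg hq.le hs, mul_nonneg hp.le hs]
  have hYpos : 0 ≤ Y := by
    rw [hY]
    nlinarith [mul_nonneg hq.le hs, mul_nonneg hs hs, mul_nonneg (mul_nonneg hq.le hs) hs, mul_nonneg hp.le hs]
  rw [key, abs_mul, abs_of_nonneg (Real.rpow_nonneg hr.le _), abs_div,
    abs_of_nonneg (by positivity : (0:ℝ) ≤ (1+s)^4)]
  rw [mul_comm (K) (r^(p-1))]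
  apply mul_le_mul_of_nonneg_left _ (Real.rpow_nonneg hr.le _)
  rw [div_le_iff₀ (by positivity)]
  have tri : |X * (1+s)^2 - Y*(1+s)| ≤ X * (1+s)^2 + Y*(1+s) := by
    calc |X * (1+s)^2 - Y*(1+s)| ≤ |X * (1+s)^2| + |Y*(1+s)| := abs_sub _ _
    _ = X * (1+s)^2 + Y*(1+s) := by
        rw [abs_of_nonneg (by positivity), abs_of_nonneg (by positivity)]
  refine tri.trans ?_
  rw [hX, hY, hK]
  nlinarith [mul_nonneg hs hs, mul_nonneg (mul_nonneg hs hs) hs,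
      mul_nonneg (mul_nonneg (mul_nonneg hs hs) hs) hs, sq_nonneg s, hq.le, hp.le,
      mul_nonneg hq.le hs, mul_nonneg hp.le hs, mul_nonneg (mul_nonneg hp.le hs) hs,
      mul_nonneg (mul_nonneg hq.le hs) hs,
      mul_nonneg (mul_nonneg (mul_nonneg hp.le hs) hs) hs,
      mul_nonneg (mul_nonneg (mul_nonneg hq.le hs) hs) hs,
      mul_nonneg (mul_nonneg (mul_nonneg (mul_nonneg hp.le hs) hs) hs) hs,
      mul_nonneg (mul_nonneg (mul_nonneg (mul_nonneg hq.le hs) hs) hs) hs]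

theorem stmt_7 (p q : ℝ) (hp : 10 / 3 < p) (hq : 0 < q) (hqp : q < p)
    (F F' : ℝ → ℝ)
    (hF : ∀ x : ℝ, 0 ≤ x → F x = x ^ (p / 2) / (1 + x ^ ((p - q) / 2)))
    (hF' : ∀ x : ℝ, 0 < x → HasDerivAt F (F' x) x)
    (hF'0 : F' 0 = 0) :
    ∀ R₀ : ℝ, 0 < R₀ → ∃ C : ℝ, 0 < C ∧
      ∀ R : ℝ, 0 ≤ R → R ≤ R₀ → ∀ v : ℂ,
        |(F (‖(R : ℂ) + v‖ ^ 2)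
            + F' (‖(R : ℂ) + v‖ ^ 2) * ‖(R : ℂ) + v‖ ^ 2)
          - (F (R ^ 2) + F' (R ^ 2) * R ^ 2)|
          ≤ C * (R ^ (p - 1) * ‖v‖ + ‖v‖ ^ p) := by
  intro R₀ hR₀
  have hp0 : 0 < p := by linarith
  have hp1 : (0:ℝ) ≤ p - 1 := by linarith
  set AB : ℝ := (1 + p/2) + (1 + q/2) with hABdef
  set K : ℝ := (p + 2*(p-q)) * ((1+p/2)+(1+q/2)) + (1+q/2)*(p-q) with hKdef
  have hABpos : 0 < AB := by rw [hABdef]; nlinarith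
  have hKpos : 0 < K := by rw [hKdef]; nlinarith
  have h2p : (1:ℝ) ≤ 2 ^ p := by
    calc (1:ℝ) = 2 ^ (0:ℝ) := by rw [Real.rpow_zero]
    _ ≤ 2 ^ p := Real.rpow_le_rpow_of_exponent_le (by norm_num) hp0.le
  have h2p1 : (2:ℝ) ^ (p-1) ≤ 2 ^ p := Real.rpow_le_rpow_of_exponent_le (by norm_num) (by linarith)
  refine ⟨2 ^ p * (K + AB + 1), by positivity, ?_⟩
  intro R hR _hRR₀ v
  -- derivative facts about G r := F (r^2) + F' (r^2) * r^2
  have hF'eq : ∀ x : ℝ, 0 < x → F' x =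
      ((p/2) * x ^ (p/2 - 1) * (1 + x ^ ((p-q)/2))
        - x ^ (p/2) * ((p-q)/2 * x ^ ((p-q)/2 - 1))) / (1 + x ^ ((p-q)/2)) ^ 2 := by
    intro x hx
    have h2 : HasDerivAt F (((p/2) * x ^ (p/2 - 1) * (1 + x ^ ((p-q)/2))
        - x ^ (p/2) * ((p-q)/2 * x ^ ((p-q)/2 - 1))) / (1 + x ^ ((p-q)/2)) ^ 2) x :=
      (phi_deriv' p q x hx).congr_of_eventuallyEq
        (Filter.eventuallyEq_of_mem (Ioi_mem_nhds hx) fun y hy => hF y (le_of_lt hy))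
    exact (hF' x hx).unique h2
  have hgh : ∀ r : ℝ, 0 < r → F (r^2) + F' (r^2) * r^2
      = r ^ p * ((1 + p/2) + (1 + q/2) * r ^ (p - q)) / (1 + r ^ (p - q)) ^ 2 := by
    intro r hr
    rw [hF (r^2) (by positivity), hF'eq (r^2) (by positivity)]
    exact geqh' p q r hr
  have hgd : ∀ r : ℝ, 0 < r → HasDerivAt (fun r : ℝ => F (r^2) + F' (r^2) * r^2)
      (Draw' p q r) r := by
    intro r hr
    exact (h0_deriv' p q r hr).congr_of_eventuallyEq
      (Filter.eventuallyEq_of_mem (Ioi_mem_nhds hr) fun y hy => hgh y hy)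
  have hgb : ∀ r : ℝ, 0 < r → |F (r^2) + F' (r^2) * r^2| ≤ AB * r ^ p := by
    intro r hr
    rw [hgh r hr]
    set s := r ^ (p-q) with hs_def
    have hs : 0 ≤ s := Real.rpow_nonneg hr.le _
    have hrp : 0 ≤ r ^ p := Real.rpow_nonneg hr.le _
    have hnum : 0 ≤ r ^ p * ((1 + p/2) + (1 + q/2) * s) := by
      apply mul_nonneg hrp
      nlinarith [mul_nonneg hq.le hs]
    rw [abs_of_nonneg (div_nonneg hnum (by positivity))]
    rw [div_le_iff₀ (by positivity), hABdef]
    nlinarith [mul_nonneg hrp hs, mul_nonneg (mul_nonneg hrp hs) hs,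
      mul_nonneg (mul_nonneg hq.le hrp) hs, mul_nonneg (mul_nonneg (mul_nonneg hq.le hrp) hs) hs,
      mul_nonneg (mul_nonneg hp0.le hrp) hs, mul_nonneg (mul_nonneg (mul_nonneg hp0.le hrp) hs) hs]
  have hmvt : ∀ x y : ℝ, 0 < x → x < y →
      |(F (y^2) + F' (y^2) * y^2) - (F (x^2) + F' (x^2) * x^2)| ≤ K * y ^ (p-1) * (y - x) := by
    intro x y hx hxy
    obtain ⟨c, hc, hceq⟩ := exists_hasDerivAt_eq_slope
      (fun r : ℝ => F (r^2) + F' (r^2) * r^2) (Draw' p q) hxy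
      (fun z hz => ((hgd z (lt_of_lt_of_le hx hz.1)).continuousAt).continuousWithinAt)
      (fun z hz => hgd z (hx.trans hz.1))
    have hsub : (F (y^2) + F' (y^2) * y^2) - (F (x^2) + F' (x^2) * x^2)
        = Draw' p q c * (y - x) := by
      rw [hceq, div_mul_cancel₀ _ (sub_ne_zero.2 hxy.ne')]
    rw [hsub, abs_mul, abs_of_nonneg (by linarith : (0:ℝ) ≤ y - x)]
    apply mul_le_mul_of_nonneg_right _ (by linarith : (0:ℝ) ≤ y - x)
    calc |Draw' p q c| ≤ K * c ^ (p-1) :=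
          h0_deriv_bound' p q c hp0 hq hqp (hx.trans hc.1)
    _ ≤ K * y ^ (p-1) := by
        apply mul_le_mul_of_nonneg_left _ hKpos.le
        exact Real.rpow_le_rpow (le_of_lt (hx.trans hc.1)) hc.2.le hp1
  set a : ℝ := ‖(R : ℂ) + v‖ with ha_def
  set w : ℝ := ‖v‖ with hw_def
  have ha : 0 ≤ a := norm_nonneg _
  have hw : 0 ≤ w := norm_nonneg _
  have hwp : 0 ≤ w ^ p := Real.rpow_nonneg hw _
  have hRp1 : 0 ≤ R ^ (p-1) := Real.rpow_nonneg hR _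
  have haRw : a ≤ R + w := by
    rw [ha_def, hw_def]
    calc ‖(R : ℂ) + v‖ ≤ ‖(R : ℂ)‖ + ‖v‖ :=
          norm_add_le _ _
    _ = R + ‖v‖ := by rw [Complex.norm_real, Real.norm_of_nonneg hR]
  have hRaw : R ≤ a + w := by
    have : ‖(R : ℂ)‖ ≤ ‖(R:ℂ) + v‖ + ‖-v‖ := by
      calc ‖(R : ℂ)‖ = ‖((R:ℂ) + v) + (-v)‖ := by ring_nf
      _ ≤ _ := norm_add_le _ _
    rw [Complex.norm_real, Real.norm_of_nonneg hR, norm_neg] at this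
    exact this
  have hRHS0 : 0 ≤ R ^ (p-1) * w + w ^ p := by positivity
  have hgzero : F ((0:ℝ)^2) + F' ((0:ℝ)^2) * (0:ℝ)^2 = 0 := by
    have h0 : ((0:ℝ)^2) = (0:ℝ) := by norm_num
    rw [h0, hF 0 le_rfl, hF'0, Real.zero_rpow (ne_of_gt (half_pos hp0))]
    simp
  have hC1 : AB ≤ 2 ^ p * (K + AB + 1) := by nlinarith [h2p, hKpos, hABpos]
  have hC2 : K ≤ 2 ^ p * (K + AB + 1) := by nlinarith [h2p, hKpos, hABpos]
  have hmax : (R + w) ^ (p-1) ≤ 2 ^ (p-1) * (R ^ (p-1) + w ^ (p-1)) := by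
    have hwp1 : 0 ≤ w ^ (p-1) := Real.rpow_nonneg hw _
    have h2pm : (0:ℝ) ≤ (2:ℝ) ^ (p-1) := Real.rpow_nonneg (by norm_num) _
    rcases le_total R w with hle | hle
    · calc (R + w) ^ (p-1) ≤ (2 * w) ^ (p-1) :=
            Real.rpow_le_rpow (by linarith) (by linarith) hp1
      _ = 2 ^ (p-1) * w ^ (p-1) := Real.mul_rpow (by norm_num) hw
      _ ≤ 2 ^ (p-1) * (R ^ (p-1) + w ^ (p-1)) := by nlinarith
    · calc (R + w) ^ (p-1) ≤ (2 * R) ^ (p-1) :=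
            Real.rpow_le_rpow (by linarith) (by linarith) hp1
      _ = 2 ^ (p-1) * R ^ (p-1) := Real.mul_rpow (by norm_num) hR
      _ ≤ 2 ^ (p-1) * (R ^ (p-1) + w ^ (p-1)) := by nlinarith
  rcases eq_or_lt_of_le hR with hR0 | hRpos
  · -- R = 0
    have hR0' : R = 0 := hR0.symm
    subst hR0'
    have haw : a = w := by rw [ha_def, hw_def]; norm_num
    have hR1 : (0:ℝ) ^ (p-1) = 0 := Real.zero_rpow (ne_of_gt (by linarith : (0:ℝ) < p - 1))
    rw [hgzero, sub_zero, haw, hR1, zero_mul, zero_add]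
    rcases eq_or_lt_of_le hw with hw0 | hwpos
    · have hw0' : w = 0 := hw0.symm
      rw [hw0', hgzero, abs_zero]
      positivity
    · calc |F (w^2) + F' (w^2) * w^2| ≤ AB * w ^ p := hgb w hwpos
      _ ≤ 2 ^ p * (K + AB + 1) * (w ^ p) := mul_le_mul_of_nonneg_right hC1 hwp
  · -- 0 < R
    rcases eq_or_lt_of_le ha with ha0 | hapos
    · -- a = 0, so v = -R, w = R
      have ha0' : a = 0 := ha0.symm
      have hv : (R:ℂ) + v = 0 := by
        rw [ha_def] at ha0'
        exact norm_eq_zero.mp ha0'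
      have hveq : v = -(R:ℂ) := by linear_combination hv
      have hwR : w = R := by
        rw [hw_def, hveq, norm_neg, Complex.norm_real, Real.norm_of_nonneg hR]
      have hRp : R ^ p = R ^ (p-1) * R := by
        rw [show p = (p-1)+1 by ring, Real.rpow_add_one hRpos.ne']; ring_nf
      rw [ha0', hgzero, zero_sub, abs_neg]
      calc |F (R^2) + F' (R^2) * R^2| ≤ AB * R ^ p := hgb R hRpos
      _ = AB * (R ^ (p-1) * R) := by rw [hRp]
      _ = AB * (R ^ (p-1) * w) := by rw [hwR]
      _ ≤ 2 ^ p * (K + AB + 1) * (R ^ (p-1) * w) :=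
            mul_le_mul_of_nonneg_right hC1 (mul_nonneg hRp1 hw)
      _ ≤ 2 ^ p * (K + AB + 1) * (R ^ (p-1) * w + w ^ p) :=
            mul_le_mul_of_nonneg_left (le_add_of_nonneg_right hwp) (by positivity)
    · rcases lt_trichotomy a R with hlt | heq | hgt
      · -- a < R
        have hwRa : R - a ≤ w := by linarith
        calc |(F (a^2) + F' (a^2) * a^2) - (F (R^2) + F' (R^2) * R^2)|
            = |(F (R^2) + F' (R^2) * R^2) - (F (a^2) + F' (a^2) * a^2)| := abs_sub_comm _ _
        _ ≤ K * R ^ (p-1) * (R - a) := hmvt a R hapos hlt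
        _ ≤ K * R ^ (p-1) * w := by
            apply mul_le_mul_of_nonneg_left hwRa (mul_nonneg hKpos.le hRp1)
        _ = K * (R ^ (p-1) * w) := by ring
        _ ≤ 2 ^ p * (K + AB + 1) * (R ^ (p-1) * w) :=
            mul_le_mul_of_nonneg_right hC2 (mul_nonneg hRp1 hw)
        _ ≤ 2 ^ p * (K + AB + 1) * (R ^ (p-1) * w + w ^ p) :=
            mul_le_mul_of_nonneg_left (le_add_of_nonneg_right hwp) (by positivity)
      · rw [heq]
        simp only [sub_self, abs_zero]
        positivity
      · -- R < a
        have hwpos : 0 < w := by linarith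
        have hup : a - R ≤ w := by linarith
        have hwp1 : 0 ≤ w ^ (p-1) := Real.rpow_nonneg hw _
        have h2pm : 0 < (2:ℝ) ^ (p-1) := Real.rpow_pos_of_pos (by norm_num) _
        have hap1 : a ^ (p-1) ≤ 2 ^ (p-1) * (R ^ (p-1) + w ^ (p-1)) :=
          (Real.rpow_le_rpow ha haRw hp1).trans hmax
        have hwpw : w ^ (p-1) * w = w ^ p := by
          rw [← Real.rpow_add_one hwpos.ne']; ring_nf
        calc |(F (a^2) + F' (a^2) * a^2) - (F (R^2) + F' (R^2) * R^2)|
            ≤ K * a ^ (p-1) * (a - R) := hmvt R a hRpos hgt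
        _ ≤ K * a ^ (p-1) * w := by
            apply mul_le_mul_of_nonneg_left hup
              (mul_nonneg hKpos.le (Real.rpow_nonneg ha _))
        _ ≤ K * (2 ^ (p-1) * (R ^ (p-1) + w ^ (p-1))) * w := by
            apply mul_le_mul_of_nonneg_right _ hw
            exact mul_le_mul_of_nonneg_left hap1 hKpos.le
        _ = K * 2 ^ (p-1) * (R ^ (p-1) * w + w ^ p) := by rw [← hwpw]; ring
        _ ≤ 2 ^ p * (K + AB + 1) * (R ^ (p-1) * w + w ^ p) := by
            have hterm : 0 ≤ R ^ (p-1) * w + w ^ p := by positivity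
            have hKK : K * 2 ^ (p-1) ≤ 2 ^ p * (K + AB + 1) := by nlinarith
            exact mul_le_mul_of_nonneg_right hKK hterm
end

section
/- Let p > 10/3, p > q > 0, F(x) = x^{p/2}/(1 + x^{(p−q)/2}) for x ≥ 0 with F(0)=0, and let F' denote its derivative (extended by F'(0)=0). For every R₀ > 0 there is a constant C > 0 such that for all real R with 0 ≤ R ≤ R₀ and all v ∈ ℂ: | F'(|R+v|²)·(R+v)² − F'(R²)·R² | ≤ C·( R^{p−1}·|v| + |v|^{p} ). -/
open Real

noncomputable def myG1 (p q s : ℝ) (x : ℝ) : ℝ :=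
  ((p/2) * x^(p/2-1) + (q/2) * x^(p/2+s-1)) * ((1+x^s)^2)⁻¹

noncomputable def myG2 (p q s : ℝ) (x : ℝ) : ℝ :=
  ((p/2)*((p/2-1)*x^(p/2-2)) + (q/2)*((p/2+s-1)*x^(p/2+s-2))) * ((1+x^s)^2)⁻¹
  + ((p/2) * x^(p/2-1) + (q/2) * x^(p/2+s-1)) *
      (-(2*(1+x^s)*(s*x^(s-1))) / ((1+x^s)^2)^2)

lemma myG1_deriv (p q s : ℝ) {x : ℝ} (hx : 0 < x) :
    HasDerivAt (myG1 p q s) (myG2 p q s x) x := by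
  have hxs : HasDerivAt (fun y : ℝ => y ^ s) (s * x ^ (s-1)) x :=
    Real.hasDerivAt_rpow_const (Or.inl hx.ne')
  have hden : HasDerivAt (fun y : ℝ => 1 + y ^ s) (s * x ^ (s-1)) x := hxs.const_add 1
  have hden2 : HasDerivAt (fun y : ℝ => (1 + y ^ s)^2) (2*(1+x^s)*(s*x^(s-1))) x := by
    have := hden.pow 2
    refine this.congr_deriv ?_
    push_cast
    ring
  have hD : (0:ℝ) < 1 + x ^ s := by positivity
  have hinv : HasDerivAt (fun y : ℝ => ((1 + y ^ s)^2)⁻¹)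
      (-(2*(1+x^s)*(s*x^(s-1))) / ((1+x^s)^2)^2) x := hden2.inv (by positivity)
  have hn1 : HasDerivAt (fun y : ℝ => (p/2) * y ^ (p/2-1)) ((p/2)*((p/2-1)*x^(p/2-2))) x := by
    have := (Real.hasDerivAt_rpow_const (p := p/2-1) (Or.inl hx.ne')).const_mul (p/2)
    refine this.congr_deriv ?_
    rw [show p/2-1-1 = p/2-2 by ring]
  have hn2 : HasDerivAt (fun y : ℝ => (q/2) * y ^ (p/2+s-1)) ((q/2)*((p/2+s-1)*x^(p/2+s-2))) x := by
    have := (Real.hasDerivAt_rpow_const (p := p/2+s-1) (Or.inl hx.ne')).const_mul (q/2)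
    refine this.congr_deriv ?_
    rw [show p/2+s-1-1 = p/2+s-2 by ring]
  have := (hn1.add hn2).mul hinv
  exact this

lemma myG1_bound (p q s : ℝ) (hp : 10/3 < p) (hq : 0 < q) (hqp : q < p) {x : ℝ} (hx : 0 < x) :
    |myG1 p q s x| ≤ p * x ^ (p/2-1) := by
  have hE : 0 < x ^ s := rpow_pos_of_pos hx s
  have hX : 0 < x ^ (p/2-1) := rpow_pos_of_pos hx _
  have key : x ^ (p/2+s-1) = x ^ (p/2-1) * x ^ s := by
    rw [← Real.rpow_add hx]; ring_nf
  have hD : (0:ℝ) < (1 + x^s)^2 := by positivity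
  rw [myG1, abs_of_nonneg (by positivity), key, mul_inv_le_iff₀' hD]
  nlinarith [mul_nonneg hX.le hE.le, mul_nonneg (mul_nonneg hX.le hE.le) hE.le, sq_nonneg (x^s)]

lemma myG2_bound (p q s : ℝ) (hp : 10/3 < p) (hq : 0 < q) (hqp : q < p) (hs : 0 < s)
    {x : ℝ} (hx : 0 < x) :
    |myG2 p q s x| ≤ ((p/2)*(p/2-1) + (q/2)*(p/2+s-1) + s*(p+q)) * x ^ (p/2-2) := by
  have hE : 0 < x ^ s := rpow_pos_of_pos hx s
  have hX : 0 < x ^ (p/2-2) := rpow_pos_of_pos hx _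
  have e1 : x ^ (p/2-1) = x ^ (p/2-2) * x := by
    rw [show p/2-1 = (p/2-2)+1 by ring, Real.rpow_add_one hx.ne']
  have e2 : x ^ (p/2+s-1) = x ^ (p/2-2) * x * x ^ s := by
    rw [show p/2+s-1 = ((p/2-2)+1)+s by ring, Real.rpow_add hx, Real.rpow_add_one hx.ne']
  have e3 : x ^ (p/2+s-2) = x ^ (p/2-2) * x ^ s := by
    rw [show p/2+s-2 = (p/2-2)+s by ring, Real.rpow_add hx]
  have e4 : x ^ (s-1) = x ^ s / x := by
    rw [show s-1 = s + (-1) by ring, Real.rpow_add hx, Real.rpow_neg_one, div_eq_mul_inv]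
  have hD : (0:ℝ) < 1 + x^s := by positivity
  have hD1 : (1:ℝ) ≤ 1 + x^s := by linarith
  have hED : x ^ s ≤ 1 + x ^ s := by linarith
  rw [myG2, e1, e2, e3, e4]
  set X := x ^ (p/2-2) with hXdef
  set E := x ^ s with hEdef
  have habs := abs_add_le
    (((p/2)*((p/2-1)*X) + (q/2)*((p/2+s-1)*(X*E))) * ((1+E)^2)⁻¹)
    (((p/2) * (X*x) + (q/2) * (X*x*E)) * (-(2*(1+E)*(s*(E/x))) / ((1+E)^2)^2))
  refine habs.trans ?_
  have h1 : |((p/2)*((p/2-1)*X) + (q/2)*((p/2+s-1)*(X*E))) * ((1+E)^2)⁻¹|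
      ≤ ((p/2)*(p/2-1) + (q/2)*(p/2+s-1)) * X := by
    have hc1 : (0:ℝ) < p/2-1 := by linarith
    have hc2 : (0:ℝ) < p/2+s-1 := by linarith
    rw [abs_of_nonneg (by positivity), mul_inv_le_iff₀' (by positivity)]
    have hp2 : (0:ℝ) ≤ p/2 := by linarith
    have hq2 : (0:ℝ) ≤ q/2 := by linarith
    nlinarith [mul_nonneg (mul_nonneg (mul_nonneg hp2 hc1.le) hX.le) hE.le,
      mul_nonneg (mul_nonneg (mul_nonneg (mul_nonneg hp2 hc1.le) hX.le) hE.le) hE.le,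
      mul_nonneg (mul_nonneg (mul_nonneg hq2 hc2.le) hX.le) hE.le,
      mul_nonneg (mul_nonneg (mul_nonneg (mul_nonneg hq2 hc2.le) hX.le) hE.le) hE.le,
      mul_nonneg (mul_nonneg hq2 hc2.le) hX.le]
  have h2 : |((p/2) * (X*x) + (q/2) * (X*x*E)) * (-(2*(1+E)*(s*(E/x))) / ((1+E)^2)^2)|
      ≤ s*(p+q) * X := by
    have heq : ((p/2) * (X*x) + (q/2) * (X*x*E)) * ((2*(1+E)*(s*(E/x))) / ((1+E)^2)^2)
        = (2*s*X*E*(p/2 + (q/2)*E)) / (1+E)^3 := by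
      field_simp
    have hp0 : (0:ℝ) < p := by linarith
    rw [neg_div, mul_neg, abs_neg, abs_of_nonneg (by positivity), heq,
      div_le_iff₀ (by positivity)]
    nlinarith [mul_nonneg (mul_nonneg hs.le hX.le) hE.le,
      mul_nonneg (mul_nonneg (mul_nonneg hs.le hX.le) hE.le) hE.le,
      mul_nonneg (mul_nonneg (mul_nonneg (mul_nonneg hs.le hX.le) hE.le) hE.le) hE.le,
      mul_nonneg hs.le hX.le, hp0.le, hq.le]
  linarith


set_option maxHeartbeats 1600000 in
theorem stmt_8 (p q : ℝ) (hp : 10 / 3 < p) (hq : 0 < q) (hqp : q < p)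
    (F F' : ℝ → ℝ)
    (hF : ∀ x : ℝ, 0 ≤ x → F x = x ^ (p / 2) / (1 + x ^ ((p - q) / 2)))
    (hF' : ∀ x : ℝ, 0 < x → HasDerivAt F (F' x) x)
    (hF'0 : F' 0 = 0) :
    ∀ R₀ : ℝ, 0 < R₀ → ∃ C : ℝ, 0 < C ∧
      ∀ R : ℝ, 0 ≤ R → R ≤ R₀ → ∀ v : ℂ,
        ‖((F' (‖(R : ℂ) + v‖ ^ 2) : ℂ) * ((R : ℂ) + v) ^ 2
            - (F' (R ^ 2) : ℂ) * (R : ℂ) ^ 2)‖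
          ≤ C * (R ^ (p - 1) * ‖v‖ + ‖v‖ ^ p) := by
  intro R₀ hR₀
  set s : ℝ := (p - q) / 2 with hsdef
  have hs : 0 < s := by rw [hsdef]; linarith
  have hp1 : (0:ℝ) < p/2 - 1 := by linarith
  -- F' agrees with myG1 on (0, ∞)
  have hFG : ∀ x : ℝ, 0 < x → F' x = myG1 p q s x := by
    intro x hx
    have hnum : HasDerivAt (fun y : ℝ => y ^ (p/2)) ((p/2) * x ^ (p/2-1)) x :=
      Real.hasDerivAt_rpow_const (Or.inl hx.ne')
    have hden : HasDerivAt (fun y : ℝ => 1 + y ^ s) (s * x ^ (s-1)) x :=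
      (Real.hasDerivAt_rpow_const (Or.inl hx.ne')).const_add 1
    have hD : (0:ℝ) < 1 + x ^ s := by positivity
    have hdiv := hnum.div hden hD.ne'
    have hFeq : F =ᶠ[nhds x] (fun y : ℝ => y ^ (p/2) / (1 + y ^ s)) := by
      filter_upwards [Ioi_mem_nhds hx] with y hy
      exact hF y (le_of_lt hy)
    have hF2 : HasDerivAt F
        (((p/2) * x ^ (p/2-1) * (1 + x ^ s) - x ^ (p/2) * (s * x ^ (s-1))) / (1 + x ^ s) ^ 2) x :=
      hdiv.congr_of_eventuallyEq hFeq
    have hEq : ((p/2) * x ^ (p/2-1) * (1 + x ^ s) - x ^ (p/2) * (s * x ^ (s-1))) / (1 + x ^ s) ^ 2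
        = myG1 p q s x := by
      have e2 : x ^ (p/2-1) * x ^ s = x ^ (p/2+s-1) := by rw [← Real.rpow_add hx]; ring_nf
      have e3 : x ^ (p/2) * x ^ (s-1) = x ^ (p/2+s-1) := by rw [← Real.rpow_add hx]; ring_nf
      have hq2 : q/2 = p/2 - s := by rw [hsdef]; ring
      rw [myG1, hq2, div_eq_mul_inv, ← div_eq_mul_inv]
      congr 1
      linear_combination (p/2) * e2 - s * e3
    exact (hF' x hx).unique (hEq ▸ hF2)
  -- bound for F'
  have hF'b : ∀ x : ℝ, 0 ≤ x → |F' x| ≤ p * x ^ (p/2-1) := by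
    intro x hx0
    rcases hx0.eq_or_lt with h | h
    · simp [← h, hF'0, Real.zero_rpow hp1.ne']
    · rw [hFG x h]; exact myG1_bound p q s hp hq hqp h
  -- derivative of F' on (0,∞)
  have hF'd : ∀ x : ℝ, 0 < x → HasDerivAt F' (myG2 p q s x) x := by
    intro x hx
    refine (myG1_deriv p q s hx).congr_of_eventuallyEq ?_
    filter_upwards [Ioi_mem_nhds hx] with y hy
    exact hFG y hy
  set C2 : ℝ := (p/2)*(p/2-1) + (q/2)*(p/2+s-1) + s*(p+q) with hC2def
  have hC2pos : 0 < C2 := by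
    have h1 : (0:ℝ) < p/2+s-1 := by linarith
    rw [hC2def]
    nlinarith
  set K : ℝ := (4:ℝ) ^ (p/2-1) with hKdef
  have hKpos : 0 < K := rpow_pos_of_pos (by norm_num) _
  set M : ℝ := (5*C2 + 4*p) * K with hMdef
  have hMpos : 0 < M := by
    have h1 : (0:ℝ) < 5*C2 + 4*p := by linarith
    exact mul_pos h1 hKpos
  have hppos : (0:ℝ) < p := by linarith
  have h3p : (0:ℝ) < (3:ℝ) ^ p := rpow_pos_of_pos (by norm_num) _
  refine ⟨2*p + p*(3:ℝ)^p + M, by nlinarith [mul_pos hppos h3p], ?_⟩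
  intro R hR0 hRR₀ v
  set a : ℝ := ‖v‖ with hadef
  have ha0 : 0 ≤ a := norm_nonneg v
  -- generic pointwise bound
  have key : ∀ w : ℂ, ‖(F' (‖w‖ ^ 2) : ℂ) * w ^ 2‖
      ≤ p * (‖w‖) ^ p := by
    intro w
    rw [norm_mul, norm_pow, Complex.norm_real, Real.norm_eq_abs]
    set B := ‖w‖ with hB
    have hB0 : 0 ≤ B := norm_nonneg w
    have h1 : |F' (B^2)| ≤ p * (B^2) ^ (p/2-1) := hF'b _ (by positivity)
    have h2 : |F' (B^2)| * B^2 ≤ p * (B^2) ^ (p/2-1) * B^2 :=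
      mul_le_mul_of_nonneg_right h1 (by positivity)
    refine h2.trans_eq ?_
    rcases hB0.eq_or_lt with h | h
    · rw [← h]
      simp [Real.zero_rpow hp1.ne', Real.zero_rpow hppos.ne']
    · rw [mul_assoc]
      congr 1
      rw [← Real.rpow_natCast B 2, ← Real.rpow_mul hB0, ← Real.rpow_add h]
      congr 1
      push_cast
      ring
  by_cases hcase : R ≤ 2*a
  · -- regime 1 : |v| large
    have habs1 : ‖(F' (‖(R:ℂ) + v‖ ^ 2) : ℂ) * ((R:ℂ) + v) ^ 2
          - (F' (R ^ 2) : ℂ) * (R:ℂ) ^ 2‖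
        ≤ p * (‖(R:ℂ)+v‖) ^ p + p * R ^ p := by
      have t1 := key ((R:ℂ) + v)
      have t2 : ‖(F' (R^2) : ℂ) * (R:ℂ)^2‖ ≤ p * R ^ p := by
        have h := key (R:ℂ)
        rwa [Complex.norm_real, Real.norm_eq_abs, abs_of_nonneg hR0] at h
      calc ‖_ - _‖ ≤ ‖(F' (‖(R:ℂ) + v‖ ^ 2) : ℂ) * ((R:ℂ) + v) ^ 2‖
            + ‖(F' (R ^ 2) : ℂ) * (R:ℂ) ^ 2‖ := by
            simpa only [sub_eq_add_neg, norm_neg] using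
              norm_add_le ((F' (‖(R:ℂ) + v‖ ^ 2) : ℂ) * ((R:ℂ) + v) ^ 2)
                (-((F' (R ^ 2) : ℂ) * (R:ℂ) ^ 2))
        _ ≤ _ := add_le_add t1 t2
    have hA3 : ‖(R:ℂ)+v‖ ≤ 3*a := by
      refine (norm_add_le _ _).trans ?_
      rw [Complex.norm_real, Real.norm_eq_abs, abs_of_nonneg hR0, ← hadef]
      linarith
    have hAp : (‖(R:ℂ)+v‖) ^ p ≤ (3:ℝ)^p * a ^ p := by
      rw [← Real.mul_rpow (by norm_num) ha0]
      exact Real.rpow_le_rpow (norm_nonneg _) hA3 hppos.le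
    have hRp : R ^ p ≤ R ^ (p-1) * (2*a) := by
      rcases hR0.eq_or_lt with h | h
      · rw [← h, Real.zero_rpow hppos.ne']
        positivity
      · have e : R ^ p = R^(p-1)*R := by
          rw [← Real.rpow_add_one h.ne' (p-1)]
          norm_num
        have h2 : (0:ℝ) < R ^ (p-1) := rpow_pos_of_pos h _
        rw [e]
        nlinarith
    have hrp1 : (0:ℝ) ≤ R ^ (p-1) * a := by positivity
    have hap : (0:ℝ) ≤ a ^ p := by positivity
    nlinarith [habs1, mul_le_mul_of_nonneg_left hAp hppos.le,
      mul_le_mul_of_nonneg_left hRp hppos.le, mul_nonneg hMpos.le hrp1,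
      mul_nonneg hMpos.le hap, mul_nonneg hppos.le hap, mul_nonneg hppos.le hrp1,
      mul_nonneg (mul_pos hppos h3p).le hrp1]
  · -- regime 2 : |v| < R/2, mean value theorem
    push_neg at hcase
    have hRpos : 0 < R := by linarith
    set u : ℝ → ℝ := fun t => (R + t*v.re)^2 + (t*v.im)^2 with hudef
    set g : ℝ → ℂ := fun t => (R:ℂ) + (t:ℝ)*v with hgdef
    have hg_abs : ∀ t : ℝ, ‖g t‖ ^ 2 = u t := by
      intro t
      rw [hgdef, Complex.sq_norm, Complex.normSq_apply]
      simp only [Complex.add_re, Complex.add_im, Complex.ofReal_re, Complex.ofReal_im,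
        Complex.mul_re, Complex.mul_im, hudef]
      ring
    have hg_ub : ∀ t ∈ Set.Icc (0:ℝ) 1, ‖g t‖ ≤ 2*R := by
      intro t ht
      refine (norm_add_le _ _).trans ?_
      rw [Complex.norm_real, Real.norm_eq_abs, abs_of_nonneg hR0, norm_mul, Complex.norm_real, Real.norm_eq_abs,
        abs_of_nonneg ht.1, ← hadef]
      nlinarith [ht.2, ht.1]
    have hg_lb : ∀ t ∈ Set.Icc (0:ℝ) 1, R/2 ≤ ‖g t‖ := by
      intro t ht
      have habs_tv : ‖(t:ℂ)*v‖ = t * a := by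
        rw [norm_mul, Complex.norm_real, Real.norm_eq_abs, abs_of_nonneg ht.1, hadef]
      have h2 := norm_sub_norm_le (R:ℂ) (-((t:ℂ)*v))
      rw [sub_neg_eq_add, norm_neg] at h2
      rw [Complex.norm_real, Real.norm_eq_abs,
        abs_of_nonneg hR0, habs_tv] at h2
      have h3 : t * a ≤ a := by nlinarith [ht.2, ht.1]
      rw [hgdef]
      simp only []
      linarith
    have hu_pos : ∀ t ∈ Set.Icc (0:ℝ) 1, 0 < u t := by
      intro t ht
      rw [← hg_abs t]
      nlinarith [hg_lb t ht]
    have hu_ub : ∀ t ∈ Set.Icc (0:ℝ) 1, u t ≤ 4*R^2 := by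
      intro t ht
      rw [← hg_abs t]
      nlinarith [hg_ub t ht, norm_nonneg (g t)]
    -- derivative of u
    have hu_d : ∀ t : ℝ, HasDerivAt u (2*(R + t*v.re)*v.re + 2*(t*v.im)*v.im) t := by
      intro t
      have hid : HasDerivAt (fun t:ℝ => t) 1 t := hasDerivAt_id t
      have h1 : HasDerivAt (fun t:ℝ => R + t*v.re) v.re t := by
        simpa using (hid.mul_const v.re).const_add R
      have h2 : HasDerivAt (fun t:ℝ => (R + t*v.re)^2) (2*(R + t*v.re)*v.re) t := by
        have := h1.pow 2
        refine this.congr_deriv ?_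
        push_cast; ring
      have h3 : HasDerivAt (fun t:ℝ => t*v.im) v.im t := by simpa using hid.mul_const v.im
      have h4 : HasDerivAt (fun t:ℝ => (t*v.im)^2) (2*(t*v.im)*v.im) t := by
        have := h3.pow 2
        refine this.congr_deriv ?_
        push_cast; ring
      exact h2.add h4
    have hgd : ∀ t : ℝ, HasDerivAt g v t := by
      intro t
      have h5 : HasDerivAt (fun t:ℝ => ((t:ℂ))) 1 t := by
        exact Complex.ofRealCLM.hasDerivAt (x := t)
      have h6 : HasDerivAt (fun t:ℝ => ((t:ℂ)*v)) v t := by simpa using h5.mul_const v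
      simpa [hgdef] using h6.const_add (R:ℂ)
    have hg2d : ∀ t : ℝ, HasDerivAt (fun t => (g t)^2) (2*(g t)*v) t := by
      intro t
      have h := (hgd t).fun_mul (hgd t)
      have e : (fun t => g t * g t) = fun t => (g t)^2 := by funext y; ring
      rw [e] at h
      refine h.congr_deriv ?_
      ring
    -- bound on u'
    have hu'b : ∀ t ∈ Set.Icc (0:ℝ) 1, |2*(R + t*v.re)*v.re + 2*(t*v.im)*v.im| ≤ 5*R*a := by
      intro t ht
      have hre : |R + t*v.re| ≤ 2*R := by
        have h1 : (g t).re = R + t*v.re := by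
          rw [hgdef]
          simp [Complex.add_re, Complex.mul_re]
        calc |R + t*v.re| = |(g t).re| := by rw [h1]
          _ ≤ ‖g t‖ := Complex.abs_re_le_norm (g t)
          _ ≤ 2*R := hg_ub t ht
      have hvr : |v.re| ≤ a := by rw [hadef]; exact Complex.abs_re_le_norm v
      have hvi : |v.im| ≤ a := by rw [hadef]; exact Complex.abs_im_le_norm v
      have ht1 : |t| ≤ 1 := by rw [abs_of_nonneg ht.1]; exact ht.2
      calc |2*(R + t*v.re)*v.re + 2*(t*v.im)*v.im|
          ≤ |2*(R + t*v.re)*v.re| + |2*(t*v.im)*v.im| := abs_add_le _ _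
        _ = 2 * |R + t*v.re| * |v.re| + 2 * (|t| * |v.im|) * |v.im| := by
            rw [abs_mul, abs_mul, abs_mul, abs_mul, abs_mul, abs_two]
        _ ≤ 2*(2*R)*a + 2*(1*a)*a := by
            have e1 : |R + t*v.re| * |v.re| ≤ (2*R)*a :=
              mul_le_mul hre hvr (abs_nonneg _) (by linarith)
            have e2 : |t| * |v.im| ≤ 1*a :=
              mul_le_mul ht1 hvi (abs_nonneg _) zero_le_one
            have e3 : (|t| * |v.im|) * |v.im| ≤ (1*a)*a :=
              mul_le_mul e2 hvi (abs_nonneg _) (by linarith)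
            nlinarith
        _ ≤ 5*R*a := by nlinarith
    -- rpow bound
    have hkey1 : ∀ t ∈ Set.Icc (0:ℝ) 1, (u t)^(p/2-1) ≤ K * R^(p-2) := by
      intro t ht
      calc (u t)^(p/2-1) ≤ (4*R^2)^(p/2-1) :=
            Real.rpow_le_rpow (hu_pos t ht).le (hu_ub t ht) (by linarith)
        _ = (4:ℝ)^(p/2-1)*(R^2)^(p/2-1) := Real.mul_rpow (by norm_num) (sq_nonneg R)
        _ = K * R^(p-2) := by
            rw [hKdef, ← Real.rpow_natCast R 2, ← Real.rpow_mul hR0]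
            congr 1
            push_cast
            ring
    have hrp : R^(p-1) = R^(p-2)*R := by
      rw [show p-1 = (p-2)+1 by ring, Real.rpow_add_one hRpos.ne']
    -- the path function and its derivative
    set DD : ℝ → ℂ := fun t =>
      ((myG2 p q s (u t) * (2*(R + t*v.re)*v.re + 2*(t*v.im)*v.im) : ℝ) : ℂ) * (g t)^2
        + ((F' (u t) : ℝ) : ℂ) * (2*(g t)*v) with hDDdef
    have hhd : ∀ t ∈ Set.Icc (0:ℝ) 1,
        HasDerivAt (fun t => ((F' (u t) : ℝ) : ℂ) * (g t)^2) (DD t) t := by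
      intro t ht
      have hF'c : HasDerivAt F' (myG2 p q s (u t)) (u t) := hF'd _ (hu_pos t ht)
      have hcomp : HasDerivAt (fun t => F' (u t))
          (myG2 p q s (u t) * (2*(R + t*v.re)*v.re + 2*(t*v.im)*v.im)) t :=
        hF'c.comp t (hu_d t)
      exact hcomp.ofReal_comp.mul (hg2d t)
    -- bound on DD
    have hDDb : ∀ t ∈ Set.Icc (0:ℝ) 1, ‖DD t‖ ≤ M * (R^(p-1)*a) := by
      intro t ht
      have hUt := hu_pos t ht
      have b1 : |myG2 p q s (u t)| ≤ C2 * (u t)^(p/2-2) :=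
        myG2_bound p q s hp hq hqp hs hUt
      have b2 := hu'b t ht
      have hkey2 : (u t)^(p/2-2) * u t = (u t)^(p/2-1) := by
        rw [show p/2-1 = (p/2-2)+1 by ring, Real.rpow_add_one hUt.ne']
      have hX2 : (0:ℝ) < (u t)^(p/2-2) := rpow_pos_of_pos hUt _
      have c1 : |myG2 p q s (u t) * (2*(R + t*v.re)*v.re + 2*(t*v.im)*v.im)|
          ≤ C2 * (u t)^(p/2-2) * (5*R*a) := by
        rw [abs_mul]
        exact mul_le_mul b1 b2 (abs_nonneg _) (by positivity)
      have c2 : |myG2 p q s (u t) * (2*(R + t*v.re)*v.re + 2*(t*v.im)*v.im)| * u t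
          ≤ C2 * (5*R*a) * (u t)^(p/2-1) := by
        calc _ ≤ (C2 * (u t)^(p/2-2) * (5*R*a)) * u t :=
              mul_le_mul_of_nonneg_right c1 hUt.le
          _ = C2 * (5*R*a) * ((u t)^(p/2-2) * u t) := by ring
          _ = C2 * (5*R*a) * (u t)^(p/2-1) := by rw [hkey2]
      have c3 : C2 * (5*R*a) * (u t)^(p/2-1) ≤ C2 * (5*R*a) * (K * R^(p-2)) :=
        mul_le_mul_of_nonneg_left (hkey1 t ht) (by positivity)
      have d1 : |F' (u t)| ≤ p * (u t)^(p/2-1) := by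
        have := hF'b (u t) hUt.le
        exact this
      have d2 : |F' (u t)| ≤ p * (K * R^(p-2)) :=
        d1.trans (mul_le_mul_of_nonneg_left (hkey1 t ht) hppos.le)
      have d3 : ‖(2*(g t)*v : ℂ)‖ ≤ 2*(2*R)*a := by
        rw [norm_mul, norm_mul, Complex.norm_two, ← hadef]
        have := hg_ub t ht
        have h0 := norm_nonneg (g t)
        nlinarith
      have d4 : |F' (u t)| * ‖(2*(g t)*v : ℂ)‖ ≤ (p * (K * R^(p-2))) * (2*(2*R)*a) :=
        mul_le_mul d2 d3 (norm_nonneg _) (by positivity)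
      have hnorm : ‖DD t‖ ≤
          |myG2 p q s (u t) * (2*(R + t*v.re)*v.re + 2*(t*v.im)*v.im)| * u t
          + |F' (u t)| * ‖(2*(g t)*v : ℂ)‖ := by
        rw [hDDdef]
        refine (norm_add_le _ _).trans ?_
        rw [norm_mul, norm_mul, Complex.norm_real, Complex.norm_real, norm_pow,
          hg_abs t]
        exact le_refl _
      have efin : C2 * (5*R*a) * (K * R^(p-2)) + (p * (K * R^(p-2))) * (2*(2*R)*a)
          = M * (R^(p-1)*a) := by
        rw [hMdef, hrp]; ring
      calc ‖DD t‖ ≤ _ := hnorm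
        _ ≤ C2 * (5*R*a) * (K * R^(p-2)) + (p * (K * R^(p-2))) * (2*(2*R)*a) :=
            add_le_add (c2.trans c3) d4
        _ = M * (R^(p-1)*a) := efin
    -- mean value inequality
    have hMVT := Convex.norm_image_sub_le_of_norm_hasDerivWithin_le
      (f := fun t => ((F' (u t) : ℝ) : ℂ) * (g t)^2) (f' := DD)
      (s := Set.Icc (0:ℝ) 1) (C := M * (R^(p-1)*a))
      (fun t ht => (hhd t ht).hasDerivWithinAt) hDDb (convex_Icc 0 1)
      (Set.left_mem_Icc.2 zero_le_one) (Set.right_mem_Icc.2 zero_le_one)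
    have hg1 : g 1 = (R:ℂ) + v := by rw [hgdef]; norm_num
    have hg0 : g 0 = (R:ℂ) := by rw [hgdef]; norm_num
    have hu1 : u 1 = ‖(R:ℂ) + v‖ ^ 2 := by rw [← hg_abs 1, hg1]
    have hu0 : u 0 = R^2 := by rw [hudef]; norm_num
    have hfin : ‖(F' (‖(R:ℂ) + v‖ ^ 2) : ℂ) * ((R:ℂ) + v) ^ 2
          - (F' (R ^ 2) : ℂ) * (R:ℂ) ^ 2‖ ≤ M * (R^(p-1)*a) := by
      have e1 : ((F' (u 1) : ℝ) : ℂ) * (g 1)^2 = (F' (‖(R:ℂ) + v‖ ^ 2) : ℂ) * ((R:ℂ) + v) ^ 2 := by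
        rw [hu1, hg1]
      have e0 : ((F' (u 0) : ℝ) : ℂ) * (g 0)^2 = (F' (R ^ 2) : ℂ) * (R:ℂ) ^ 2 := by
        rw [hu0, hg0]
      calc ‖_‖ = ‖((F' (u 1) : ℝ) : ℂ) * (g 1)^2 - ((F' (u 0) : ℝ) : ℂ) * (g 0)^2‖ := by
            rw [e1, e0]
        _ ≤ M * (R^(p-1)*a) * ‖(1:ℝ) - 0‖ := hMVT
        _ = M * (R^(p-1)*a) := by norm_num
    have hrp1 : (0:ℝ) ≤ R ^ (p-1) * a := by positivity
    have hap : (0:ℝ) ≤ a ^ p := by positivity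
    nlinarith [hfin, mul_nonneg hppos.le hrp1, mul_nonneg (mul_pos hppos h3p).le hrp1,
      mul_nonneg hMpos.le hap, mul_nonneg hppos.le hap,
      mul_nonneg (mul_pos hppos h3p).le hap]
end

section
/- Let p > 10/3, p > q > 0, F(x) = x^{p/2}/(1 + x^{(p−q)/2}) for x ≥ 0 with F(0)=0, and F' its derivative (extended by F'(0)=0). For a ∈ ℂ define G_a(w) = F(|a+w|²)(a+w) − F(|a|²)a − [ F(|a|²) + F'(|a|²)|a|² ]·w − F'(|a|²)a²·conj(w). Then for every A > 0 there is a constant C > 0 such that for all a ∈ ℂ with |a| ≤ A and all w ∈ ℂ with |w| ≤ 1: | G_a(w) | ≤ C·|w|². -/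
open Real

set_option maxHeartbeats 1000000

private lemma key_id (a w : ℂ) (Fs Ft Dt S T : ℝ)
    (hS : ((S : ℝ) : ℂ) = (a + w) * (starRingEnd ℂ) (a + w))
    (hT : ((T : ℝ) : ℂ) = a * (starRingEnd ℂ) a) :
    (Fs : ℂ) * (a + w) - (Ft : ℂ) * a - ((Ft + Dt * T : ℝ) : ℂ) * w
        - ((Dt : ℝ) : ℂ) * a ^ 2 * (starRingEnd ℂ) w
      = ((Fs - Ft - Dt * (S - T) : ℝ) : ℂ) * (a + w)
        + (Dt : ℂ) * (2 * a * (w * (starRingEnd ℂ) w) + (starRingEnd ℂ) a * w ^ 2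
            + w ^ 2 * (starRingEnd ℂ) w) := by
  rw [map_add] at hS
  push_cast
  rw [hS, hT]
  ring

private lemma helper_formula_deriv (α r : ℝ) (x : ℝ) (hx : 0 < x) :
    HasDerivAt (fun y : ℝ => y ^ α / (1 + y ^ r))
      ((α * x ^ (α - 1) + (α - r) * x ^ (α + r - 1)) / (1 + x ^ r) ^ 2) x := by
  have hx' : x ≠ 0 := ne_of_gt hx
  have hxr : (0:ℝ) < x ^ r := Real.rpow_pos_of_pos hx r
  have hD0 : (1 : ℝ) + x ^ r ≠ 0 := by positivity
  have hN : HasDerivAt (fun y : ℝ => y ^ α) (α * x ^ (α - 1)) x :=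
    Real.hasDerivAt_rpow_const (Or.inl hx')
  have hD : HasDerivAt (fun y : ℝ => 1 + y ^ r) (r * x ^ (r - 1)) x :=
    (Real.hasDerivAt_rpow_const (Or.inl hx')).const_add 1
  have h := hN.div hD hD0
  refine h.congr_deriv ?_
  have e1 : x ^ (α - 1) = x ^ α / x := by rw [Real.rpow_sub hx, Real.rpow_one]
  have e2 : x ^ (r - 1) = x ^ r / x := by rw [Real.rpow_sub hx, Real.rpow_one]
  have e3 : x ^ (α + r - 1) = x ^ α * x ^ r / x := by
    rw [show α + r - 1 = α + (r - 1) by ring, Real.rpow_add hx, e2]; ring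
  rw [e1, e2, e3]
  field_simp
  ring

private lemma helper_phi_deriv (b1 b2 α r : ℝ) (x : ℝ) (hx : 0 < x) :
    HasDerivAt (fun y : ℝ => (b1 * y ^ (α - 1) + b2 * y ^ (α + r - 1)) / (1 + y ^ r) ^ 2)
      (((b1 * ((α - 1) * x ^ (α - 1 - 1)) + b2 * ((α + r - 1) * x ^ (α + r - 1 - 1)))
            * (1 + x ^ r) ^ 2
          - (b1 * x ^ (α - 1) + b2 * x ^ (α + r - 1))
            * (2 * (1 + x ^ r) ^ 1 * (r * x ^ (r - 1))))
        / ((1 + x ^ r) ^ 2) ^ 2) x := by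
  have hx' : x ≠ 0 := ne_of_gt hx
  have hxr : (0:ℝ) < x ^ r := Real.rpow_pos_of_pos hx r
  have hD0 : ((1 : ℝ) + x ^ r) ^ 2 ≠ 0 := by positivity
  have hN : HasDerivAt (fun y : ℝ => b1 * y ^ (α - 1) + b2 * y ^ (α + r - 1))
      (b1 * ((α - 1) * x ^ (α - 1 - 1)) + b2 * ((α + r - 1) * x ^ (α + r - 1 - 1))) x :=
    ((Real.hasDerivAt_rpow_const (Or.inl hx')).const_mul b1).add
      ((Real.hasDerivAt_rpow_const (Or.inl hx')).const_mul b2)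
  have hD1 : HasDerivAt (fun y : ℝ => 1 + y ^ r) (r * x ^ (r - 1)) x :=
    (Real.hasDerivAt_rpow_const (Or.inl hx')).const_add 1
  have hD : HasDerivAt (fun y : ℝ => (1 + y ^ r) ^ 2)
      (2 * (1 + x ^ r) ^ 1 * (r * x ^ (r - 1))) x := by
    simpa using hD1.fun_pow 2

  exact hN.div hD hD0

private lemma helper_psi_bound (b1 b2 α r B x : ℝ) (hb1 : 0 ≤ b1) (hb2 : 0 ≤ b2)
    (hα : 1 ≤ α) (hr : 0 < r) (hx : 0 < x) (hxB : x ≤ B) :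
    |((b1 * ((α - 1) * x ^ (α - 1 - 1)) + b2 * ((α + r - 1) * x ^ (α + r - 1 - 1)))
            * (1 + x ^ r) ^ 2
          - (b1 * x ^ (α - 1) + b2 * x ^ (α + r - 1))
            * (2 * (1 + x ^ r) ^ 1 * (r * x ^ (r - 1))))
        / ((1 + x ^ r) ^ 2) ^ 2|
      ≤ ((b1 * α + b2 * (α + r) * B ^ r) * (1 + B ^ r) ^ 2
          + (b1 * B ^ r + b2 * B ^ r * B ^ r) * (2 * (1 + B ^ r) * r)) * x ^ (α - 2) := by
  have hB : 0 < B := lt_of_lt_of_le hx hxB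
  have hxr : (0:ℝ) < x ^ r := Real.rpow_pos_of_pos hx r
  have hBr : (0:ℝ) < B ^ r := Real.rpow_pos_of_pos hB r
  have hrB : x ^ r ≤ B ^ r := Real.rpow_le_rpow hx.le hxB hr.le
  have hxa2 : (0:ℝ) < x ^ (α - 2) := Real.rpow_pos_of_pos hx _
  have e0 : x ^ (α - 1 - 1) = x ^ (α - 2) := by rw [show α - 1 - 1 = α - 2 by ring]
  have e1 : x ^ (α - 1) = x ^ (α - 2) * x := by
    rw [show α - 1 = (α - 2) + 1 by ring, Real.rpow_add hx, Real.rpow_one]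
  have e2 : x ^ (α + r - 1 - 1) = x ^ (α - 2) * x ^ r := by
    rw [show α + r - 1 - 1 = (α - 2) + r by ring, Real.rpow_add hx]
  have e3 : x ^ (α + r - 1) = x ^ (α - 2) * x ^ r * x := by
    rw [show α + r - 1 = (α - 2) + r + 1 by ring, Real.rpow_add hx, Real.rpow_add hx,
      Real.rpow_one]
  have e4 : x ^ (r - 1) = x ^ r / x := by rw [Real.rpow_sub hx, Real.rpow_one]
  have hden0 : (1:ℝ) ≤ (1 + x ^ r) ^ 2 := by nlinarith
  have hden1 : (1:ℝ) ≤ ((1 + x ^ r) ^ 2) ^ 2 := by nlinarith [hden0]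
  set num : ℝ := (b1 * ((α - 1) * x ^ (α - 1 - 1)) + b2 * ((α + r - 1) * x ^ (α + r - 1 - 1)))
            * (1 + x ^ r) ^ 2
          - (b1 * x ^ (α - 1) + b2 * x ^ (α + r - 1))
            * (2 * (1 + x ^ r) ^ 1 * (r * x ^ (r - 1))) with hnumdef
  have hP : num = (b1 * (α - 1) + b2 * (α + r - 1) * x ^ r) * (1 + x ^ r) ^ 2 * x ^ (α - 2)
      - (b1 * x ^ r + b2 * x ^ r * x ^ r) * (2 * (1 + x ^ r) * r) * x ^ (α - 2) := by
    rw [hnumdef, e0, e1, e2, e3, e4]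
    field_simp
  set P : ℝ := (b1 * (α - 1) + b2 * (α + r - 1) * x ^ r) * (1 + x ^ r) ^ 2 * x ^ (α - 2)
    with hPdef
  set Q : ℝ := (b1 * x ^ r + b2 * x ^ r * x ^ r) * (2 * (1 + x ^ r) * r) * x ^ (α - 2)
    with hQdef
  have hPnn : 0 ≤ P := by
    apply mul_nonneg (mul_nonneg _ (by positivity)) hxa2.le
    exact add_nonneg (mul_nonneg hb1 (by linarith)) (mul_nonneg (mul_nonneg hb2 (by linarith)) hxr.le)
  have hQnn : 0 ≤ Q := by
    apply mul_nonneg (mul_nonneg _ _) hxa2.le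
    · exact add_nonneg (mul_nonneg hb1 hxr.le) (mul_nonneg (mul_nonneg hb2 hxr.le) hxr.le)
    · positivity
  have hPb : P ≤ (b1 * α + b2 * (α + r) * B ^ r) * (1 + B ^ r) ^ 2 * x ^ (α - 2) := by
    have h1 : b1 * (α - 1) + b2 * (α + r - 1) * x ^ r ≤ b1 * α + b2 * (α + r) * B ^ r := by
      have h2 : b2 * (α + r - 1) * x ^ r ≤ b2 * (α + r) * B ^ r := by
        apply mul_le_mul _ hrB hxr.le (mul_nonneg hb2 (by linarith))
        nlinarith
      nlinarith
    have h3 : ((1:ℝ) + x ^ r) ^ 2 ≤ (1 + B ^ r) ^ 2 := by nlinarith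
    have hKnn : 0 ≤ b1 * α + b2 * (α + r) * B ^ r :=
      add_nonneg (mul_nonneg hb1 (by linarith))
        (mul_nonneg (mul_nonneg hb2 (by linarith)) hBr.le)
    rw [hPdef]
    have hmain : (b1 * (α - 1) + b2 * (α + r - 1) * x ^ r) * (1 + x ^ r) ^ 2
        ≤ (b1 * α + b2 * (α + r) * B ^ r) * (1 + B ^ r) ^ 2 :=
      mul_le_mul h1 h3 (by positivity) hKnn
    exact mul_le_mul_of_nonneg_right hmain hxa2.le
  have hQb : Q ≤ (b1 * B ^ r + b2 * B ^ r * B ^ r) * (2 * (1 + B ^ r) * r) * x ^ (α - 2) := by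
    have h1 : b1 * x ^ r + b2 * x ^ r * x ^ r ≤ b1 * B ^ r + b2 * B ^ r * B ^ r := by
      have := mul_le_mul hrB hrB hxr.le hBr.le
      nlinarith
    have h2 : 2 * ((1:ℝ) + x ^ r) * r ≤ 2 * (1 + B ^ r) * r := by nlinarith
    have hKnn : 0 ≤ b1 * B ^ r + b2 * B ^ r * B ^ r :=
      add_nonneg (mul_nonneg hb1 hBr.le)
        (mul_nonneg (mul_nonneg hb2 hBr.le) hBr.le)
    rw [hQdef]
    have hmain : (b1 * x ^ r + b2 * x ^ r * x ^ r) * (2 * (1 + x ^ r) * r)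
        ≤ (b1 * B ^ r + b2 * B ^ r * B ^ r) * (2 * (1 + B ^ r) * r) :=
      mul_le_mul h1 h2 (by positivity) hKnn
    exact mul_le_mul_of_nonneg_right hmain hxa2.le
  calc |num / ((1 + x ^ r) ^ 2) ^ 2| = |num| / ((1 + x ^ r) ^ 2) ^ 2 := by
        rw [abs_div, abs_of_nonneg (by positivity : (0:ℝ) ≤ ((1 + x ^ r) ^ 2) ^ 2)]
    _ ≤ |num| := div_le_self (abs_nonneg _) hden1
    _ = |P - Q| := by rw [hP]
    _ ≤ |P| + |Q| := abs_sub _ _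
    _ = P + Q := by rw [abs_of_nonneg hPnn, abs_of_nonneg hQnn]
    _ ≤ (b1 * α + b2 * (α + r) * B ^ r) * (1 + B ^ r) ^ 2 * x ^ (α - 2)
        + (b1 * B ^ r + b2 * B ^ r * B ^ r) * (2 * (1 + B ^ r) * r) * x ^ (α - 2) :=
      add_le_add hPb hQb
    _ = ((b1 * α + b2 * (α + r) * B ^ r) * (1 + B ^ r) ^ 2
          + (b1 * B ^ r + b2 * B ^ r * B ^ r) * (2 * (1 + B ^ r) * r)) * x ^ (α - 2) := by ring

theorem stmt_10 (p q : ℝ) (hp : 10 / 3 < p) (hq : 0 < q) (hqp : q < p)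
    (F F' : ℝ → ℝ)
    (hF : ∀ x : ℝ, 0 ≤ x → F x = x ^ (p / 2) / (1 + x ^ ((p - q) / 2)))
    (hF' : ∀ x : ℝ, 0 < x → HasDerivAt F (F' x) x)
    (hF'0 : F' 0 = 0)
    (Ga : ℂ → ℂ → ℂ)
    (hGa : ∀ a w : ℂ, Ga a w =
      (F (‖a + w‖ ^ 2) : ℂ) * (a + w)
        - (F (‖a‖ ^ 2) : ℂ) * a
        - ((F (‖a‖ ^ 2) + F' (‖a‖ ^ 2) * ‖a‖ ^ 2 : ℝ) : ℂ) * w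
        - ((F' (‖a‖ ^ 2) : ℝ) : ℂ) * a ^ 2 * (starRingEnd ℂ) w) :
    ∀ A : ℝ, 0 < A → ∃ C : ℝ, 0 < C ∧
      ∀ a : ℂ, ‖a‖ ≤ A → ∀ w : ℂ, ‖w‖ ≤ 1 →
        ‖Ga a w‖ ≤ C * ‖w‖ ^ 2 := by
  intro A hA
  set α : ℝ := p / 2 with hαdef
  set r : ℝ := (p - q) / 2 with hrdef
  have hα1 : 1 < α := by rw [hαdef]; linarith
  have hr0 : 0 < r := by rw [hrdef]; linarith
  have hαr : 0 < α - r := by rw [hαdef, hrdef]; linarith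
  set B : ℝ := (A + 1) ^ 2 with hBdef
  have hB0 : (0:ℝ) < B := by positivity
  have hB1 : (1:ℝ) ≤ B := by nlinarith
  have hBr0 : (0:ℝ) < B ^ r := rpow_pos_of_pos hB0 r
  set φ : ℝ → ℝ := fun x => (α * x ^ (α - 1) + (α - r) * x ^ (α + r - 1)) / (1 + x ^ r) ^ 2
    with hφdef
  have hFbounds : ∀ x : ℝ, 0 ≤ x → 0 ≤ F x ∧ F x ≤ x ^ α := by
    intro x hx
    rw [hF x hx]
    have h1 : 0 ≤ x ^ α := rpow_nonneg hx α
    have h2 : 0 ≤ x ^ r := rpow_nonneg hx r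
    constructor
    · positivity
    · apply div_le_self h1; linarith
  have hFφ : ∀ x : ℝ, 0 < x → HasDerivAt F (φ x) x := by
    intro x hx
    have heq : F =ᶠ[nhds x] fun y : ℝ => y ^ α / (1 + y ^ r) := by
      filter_upwards [Ioi_mem_nhds hx] with y hy
      exact hF y (le_of_lt hy)
    exact (helper_formula_deriv α r x hx).congr_of_eventuallyEq heq
  have hF'eq : ∀ x : ℝ, 0 < x → F' x = φ x := fun x hx => (hF' x hx).unique (hFφ x hx)
  have hφnn : ∀ x : ℝ, 0 < x → 0 ≤ φ x := by
    intro x hx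
    have h1 : (0:ℝ) ≤ x ^ (α - 1) := (rpow_pos_of_pos hx _).le
    have h2 : (0:ℝ) ≤ x ^ (α + r - 1) := (rpow_pos_of_pos hx _).le
    have h3 : (0:ℝ) ≤ x ^ r := (rpow_pos_of_pos hx _).le
    apply div_nonneg _ (by positivity)
    have := mul_nonneg hαr.le h2
    nlinarith
  set C1 : ℝ := α + (α - r) * B ^ r with hC1def
  have hC1p : 0 < C1 := add_pos (by linarith) (mul_pos hαr hBr0)
  have hφle : ∀ x : ℝ, 0 < x → x ≤ B → φ x ≤ C1 * x ^ (α - 1) := by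
    intro x hx hxB
    have hxr : (0:ℝ) < x ^ r := rpow_pos_of_pos hx r
    have hxa : (0:ℝ) < x ^ (α - 1) := rpow_pos_of_pos hx _
    have hrB : x ^ r ≤ B ^ r := rpow_le_rpow hx.le hxB hr0.le
    have e3 : x ^ (α + r - 1) = x ^ (α - 1) * x ^ r := by
      rw [show α + r - 1 = (α - 1) + r by ring, Real.rpow_add hx]
    have hnumnn : 0 ≤ α * x ^ (α - 1) + (α - r) * x ^ (α + r - 1) := by
      have h2 : (0:ℝ) ≤ x ^ (α + r - 1) := (rpow_pos_of_pos hx _).le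
      nlinarith
    have hd : (1:ℝ) ≤ (1 + x ^ r) ^ 2 := by nlinarith
    refine le_trans (div_le_self hnumnn hd) ?_
    rw [e3]
    nlinarith [mul_le_mul_of_nonneg_left hrB (mul_nonneg hαr.le hxa.le)]
  have hF'abs : ∀ u : ℝ, 0 ≤ u → u ≤ B → |F' u| ≤ C1 * u ^ (α - 1) := by
    intro u hu huB
    rcases eq_or_lt_of_le hu with h | h
    · rw [← h, hF'0, Real.zero_rpow (by linarith : α - 1 ≠ 0)]
      simp
    · rw [hF'eq u h, abs_of_nonneg (hφnn u h)]
      exact hφle u h huB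
  set M : ℝ := C1 * B ^ (α - 1) with hMdef
  have hMp : 0 < M := mul_pos hC1p (rpow_pos_of_pos hB0 _)
  have hF'M : ∀ u : ℝ, 0 ≤ u → u ≤ B → |F' u| ≤ M := by
    intro u hu huB
    refine (hF'abs u hu huB).trans ?_
    have h1 : u ^ (α - 1) ≤ B ^ (α - 1) := rpow_le_rpow hu huB (by linarith)
    rw [hMdef]
    nlinarith
  set C2 : ℝ := (α * α + (α - r) * (α + r) * B ^ r) * (1 + B ^ r) ^ 2
      + (α * B ^ r + (α - r) * B ^ r * B ^ r) * (2 * (1 + B ^ r) * r) with hC2def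
  have hC2p : 0 < C2 := by
    have h1 : (0:ℝ) < α := by linarith
    have h2 : (0:ℝ) < α + r := by linarith
    have h3 : (0:ℝ) < 1 + B ^ r := by linarith
    have h4 : 0 < (α * α + (α - r) * (α + r) * B ^ r) * (1 + B ^ r) ^ 2 :=
      mul_pos (add_pos (mul_pos h1 h1) (mul_pos (mul_pos hαr h2) hBr0)) (by positivity)
    have h5 : 0 < (α * B ^ r + (α - r) * B ^ r * B ^ r) * (2 * (1 + B ^ r) * r) :=
      mul_pos (add_pos (mul_pos h1 hBr0) (mul_pos (mul_pos hαr hBr0) hBr0)) (by positivity)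
    linarith
  set ψ : ℝ → ℝ := fun x =>
    ((α * ((α - 1) * x ^ (α - 1 - 1)) + (α - r) * ((α + r - 1) * x ^ (α + r - 1 - 1)))
          * (1 + x ^ r) ^ 2
        - (α * x ^ (α - 1) + (α - r) * x ^ (α + r - 1))
          * (2 * (1 + x ^ r) ^ 1 * (r * x ^ (r - 1))))
      / ((1 + x ^ r) ^ 2) ^ 2 with hψdef
  have hφψ : ∀ x : ℝ, 0 < x → HasDerivAt φ (ψ x) x := fun x hx =>
    helper_phi_deriv α (α - r) α r x hx
  have hψb : ∀ x : ℝ, 0 < x → x ≤ B → |ψ x| ≤ C2 * x ^ (α - 2) := fun x hx hxB =>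
    helper_psi_bound α (α - r) α r B x (by linarith) hαr.le hα1.le hr0 hx hxB
  have hTaylor : ∀ m sP tP : ℝ, 0 < m → sP ∈ Set.Icc m B → tP ∈ Set.Icc m B →
      |F sP - F tP - φ tP * (sP - tP)|
        ≤ (C2 * (m ^ (α - 2) + B ^ (α - 2))) * |sP - tP| * |sP - tP| := by
    intro m sP tP hm hsP htP
    set L : ℝ := C2 * (m ^ (α - 2) + B ^ (α - 2)) with hLdef
    have hψL : ∀ u ∈ Set.Icc m B, |ψ u| ≤ L := by
      intro u hu
      have hu0 : 0 < u := lt_of_lt_of_le hm hu.1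
      refine (hψb u hu0 hu.2).trans ?_
      have hx2 : u ^ (α - 2) ≤ m ^ (α - 2) + B ^ (α - 2) := by
        rcases le_total α 2 with h | h
        · have h1 := rpow_le_rpow_of_nonpos hm hu.1 (by linarith : α - 2 ≤ 0)
          have h2 : (0:ℝ) ≤ B ^ (α - 2) := (rpow_pos_of_pos hB0 _).le
          linarith
        · have h1 := rpow_le_rpow hu0.le hu.2 (by linarith : (0:ℝ) ≤ α - 2)
          have h2 : (0:ℝ) ≤ m ^ (α - 2) := (rpow_pos_of_pos hm _).le
          linarith
      rw [hLdef]
      nlinarith only [hx2, hC2p]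
    have hL0 : 0 ≤ L := le_trans (abs_nonneg _) (hψL tP htP)
    have hLip : ∀ x ∈ Set.Icc m B, ∀ y ∈ Set.Icc m B, |φ y - φ x| ≤ L * |y - x| := by
      intro x hx y hy
      have h := Convex.norm_image_sub_le_of_norm_hasDerivWithin_le
        (fun u hu => (hφψ u (lt_of_lt_of_le hm hu.1)).hasDerivWithinAt)
        (fun u hu => by rw [Real.norm_eq_abs]; exact hψL u hu)
        (convex_Icc m B) hx hy
      simpa [Real.norm_eq_abs] using h
    set mn : ℝ := min sP tP with hmndef
    set mx : ℝ := max sP tP with hmxdef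
    have hsub : Set.Icc mn mx ⊆ Set.Icc m B :=
      Set.Icc_subset_Icc (le_min hsP.1 htP.1) (max_le hsP.2 htP.2)
    have hmm : mx - mn = |sP - tP| := by
      rw [abs_sub_comm]; exact max_sub_min_eq_abs sP tP
    have hmem_s : sP ∈ Set.Icc mn mx := ⟨min_le_left _ _, le_max_left _ _⟩
    have hmem_t : tP ∈ Set.Icc mn mx := ⟨min_le_right _ _, le_max_right _ _⟩
    have hg : ∀ u ∈ Set.Icc mn mx,
        HasDerivWithinAt (fun y => F y - φ tP * y) (φ u - φ tP) (Set.Icc mn mx) u := by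
      intro u hu
      have hu0 : 0 < u := lt_of_lt_of_le hm (hsub hu).1
      have h1 : HasDerivAt (fun y => F y - φ tP * y) (φ u - φ tP * 1) u :=
        (hFφ u hu0).sub ((hasDerivAt_id u).const_mul (φ tP))
      simpa using h1.hasDerivWithinAt
    have hgb : ∀ u ∈ Set.Icc mn mx, ‖φ u - φ tP‖ ≤ L * |sP - tP| := by
      intro u hu
      have h1 := hLip tP htP u (hsub hu)
      have h2 : |u - tP| ≤ |sP - tP| := by
        rw [abs_sub_le_iff]
        constructor <;> linarith [hu.1, hu.2, hmem_t.1, hmem_t.2]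
      calc ‖φ u - φ tP‖ = |φ u - φ tP| := Real.norm_eq_abs _
        _ ≤ L * |u - tP| := h1
        _ ≤ L * |sP - tP| := mul_le_mul_of_nonneg_left h2 hL0
    have h := Convex.norm_image_sub_le_of_norm_hasDerivWithin_le hg hgb
      (convex_Icc mn mx) hmem_t hmem_s
    rw [Real.norm_eq_abs, Real.norm_eq_abs] at h
    calc |F sP - F tP - φ tP * (sP - tP)|
        = |(F sP - φ tP * sP) - (F tP - φ tP * tP)| := by rw [show
          F sP - F tP - φ tP * (sP - tP) = (F sP - φ tP * sP) - (F tP - φ tP * tP) by ring]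
      _ ≤ L * |sP - tP| * |sP - tP| := h
  set K1 : ℝ := 9 ^ α + 4 ^ α + C1 * 4 ^ α * 13 with hK1def
  set K2 : ℝ := 45 * C2 * B ^ (α - 1) with hK2def
  have h9p : (0:ℝ) < 9 ^ α := rpow_pos_of_pos (by norm_num) α
  have h4p : (0:ℝ) < 4 ^ α := rpow_pos_of_pos (by norm_num) α
  have hK1p : 0 < K1 := by rw [hK1def]; nlinarith
  have hK2p : 0 < K2 := by
    rw [hK2def]
    have := rpow_pos_of_pos hB0 (α - 1)
    nlinarith
  refine ⟨(K1 + K2) * (A + 1) + M * (3 * A + 1) + 1,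
    by nlinarith only [hK1p, hK2p, hMp, hA], ?_⟩
  intro a ha w hw
  rcases eq_or_ne w 0 with rfl | hw0
  · rw [hGa]
    simp
  · have hwpos : 0 < ‖w‖ := norm_pos_iff.mpr hw0
    have hw2pos : 0 < ‖w‖ ^ 2 := by positivity
    have hw2le : ‖w‖ ^ 2 ≤ 1 := by
      nlinarith only [hw, norm_nonneg w]
    set s : ℝ := ‖a + w‖ ^ 2 with hsdef
    set t : ℝ := ‖a‖ ^ 2 with htdef
    have hs0 : 0 ≤ s := by rw [hsdef]; positivity
    have ht0 : 0 ≤ t := by rw [htdef]; positivity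
    have habsaw : ‖a + w‖ ≤ A + 1 :=
      le_trans (norm_add_le a w) (by linarith)
    have hsB : s ≤ B := by
      rw [hsdef, hBdef]
      nlinarith only [habsaw, norm_nonneg (a + w)]
    have htB : t ≤ B := by
      rw [htdef, hBdef]
      nlinarith only [ha, hA, norm_nonneg a]
    have hS : ((s : ℝ) : ℂ) = (a + w) * (starRingEnd ℂ) (a + w) := by
      rw [Complex.mul_conj]
      have : s = Complex.normSq (a + w) := by rw [hsdef, Complex.sq_norm]
      rw [this]
    have hT : ((t : ℝ) : ℂ) = a * (starRingEnd ℂ) a := by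
      rw [Complex.mul_conj]
      have : t = Complex.normSq a := by rw [htdef, Complex.sq_norm]
      rw [this]
    set X : ℂ := 2 * a * (w * (starRingEnd ℂ) w) + (starRingEnd ℂ) a * w ^ 2
        + w ^ 2 * (starRingEnd ℂ) w with hXdef
    have hid : Ga a w = ((F s - F t - F' t * (s - t) : ℝ) : ℂ) * (a + w)
        + ((F' t : ℝ) : ℂ) * X := by
      rw [hGa]
      exact key_id a w (F s) (F t) (F' t) s t hS hT
    have hXb : ‖X‖ ≤ (3 * A + 1) * ‖w‖ ^ 2 := by
      rw [hXdef]
      have h1 := norm_add_le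
        (2 * a * (w * (starRingEnd ℂ) w) + (starRingEnd ℂ) a * w ^ 2)
        (w ^ 2 * (starRingEnd ℂ) w)
      have h2 := norm_add_le (2 * a * (w * (starRingEnd ℂ) w))
        ((starRingEnd ℂ) a * w ^ 2)
      have c1 : ‖2 * a * (w * (starRingEnd ℂ) w)‖
          = 2 * ‖a‖ * (‖w‖ * ‖w‖) := by
        simp only [norm_mul, Complex.norm_conj, Complex.norm_two]
      have c2 : ‖(starRingEnd ℂ) a * w ^ 2‖
          = ‖a‖ * ‖w‖ ^ 2 := by
        simp only [norm_mul, norm_pow, Complex.norm_conj]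
      have c3 : ‖w ^ 2 * (starRingEnd ℂ) w‖
          = ‖w‖ ^ 2 * ‖w‖ := by
        simp only [norm_mul, norm_pow, Complex.norm_conj]
      rw [c1, c2] at h2
      rw [c3] at h1
      have e1 : ‖a‖ * ‖w‖ ^ 2 ≤ A * ‖w‖ ^ 2 :=
        mul_le_mul_of_nonneg_right ha (sq_nonneg _)
      have e2 : ‖w‖ ^ 2 * ‖w‖ ≤ ‖w‖ ^ 2 * 1 :=
        mul_le_mul_of_nonneg_left hw (sq_nonneg _)
      nlinarith only [h1, h2, e1, e2, sq_abs (‖w‖)]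
    have hrem : |F s - F t - F' t * (s - t)| ≤ (K1 + K2) * ‖w‖ ^ 2 := by
      rcases le_or_gt (‖a‖) (2 * ‖w‖) with hcase | hcase
      · -- small a
        have hs9 : s ≤ 9 * ‖w‖ ^ 2 := by
          have h3 : ‖a + w‖ ≤ 3 * ‖w‖ :=
            le_trans (norm_add_le a w) (by linarith)
          rw [hsdef]
          nlinarith only [h3, norm_nonneg (a + w), norm_nonneg w]
        have ht4 : t ≤ 4 * ‖w‖ ^ 2 := by
          rw [htdef]
          nlinarith only [hcase, norm_nonneg a, norm_nonneg w]
        have hFs : F s ≤ 9 ^ α * ‖w‖ ^ 2 := by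
          have h1 := (hFbounds s hs0).2
          have h2 : s ^ α ≤ (9 * ‖w‖ ^ 2) ^ α := rpow_le_rpow hs0 hs9 (by linarith)
          have h3 : (9 * ‖w‖ ^ 2 : ℝ) ^ α = 9 ^ α * (‖w‖ ^ 2) ^ α :=
            mul_rpow (by norm_num) (sq_nonneg _)
          have h4 : ((‖w‖ ^ 2 : ℝ)) ^ α ≤ (‖w‖ ^ 2 : ℝ) ^ (1:ℝ) :=
            rpow_le_rpow_of_exponent_ge hw2pos hw2le (by linarith)
          rw [rpow_one] at h4
          nlinarith only [h1, h2, h3, h4, h9p]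
        have hFt : F t ≤ 4 ^ α * ‖w‖ ^ 2 := by
          have h1 := (hFbounds t ht0).2
          have h2 : t ^ α ≤ (4 * ‖w‖ ^ 2) ^ α := rpow_le_rpow ht0 ht4 (by linarith)
          have h3 : (4 * ‖w‖ ^ 2 : ℝ) ^ α = 4 ^ α * (‖w‖ ^ 2) ^ α :=
            mul_rpow (by norm_num) (sq_nonneg _)
          have h4 : ((‖w‖ ^ 2 : ℝ)) ^ α ≤ (‖w‖ ^ 2 : ℝ) ^ (1:ℝ) :=
            rpow_le_rpow_of_exponent_ge hw2pos hw2le (by linarith)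
          rw [rpow_one] at h4
          nlinarith only [h1, h2, h3, h4, h4p]
        have hδ : |s - t| ≤ 13 * ‖w‖ ^ 2 := by
          rw [abs_sub_le_iff]
          constructor <;> linarith only [hs9, ht4, hs0, ht0]
        have hF't : |F' t| ≤ C1 * 4 ^ α := by
          refine (hF'abs t ht0 htB).trans ?_
          have h1 : t ^ (α - 1) ≤ (4 * ‖w‖ ^ 2) ^ (α - 1) :=
            rpow_le_rpow ht0 ht4 (by linarith)
          have h2 : (4 * ‖w‖ ^ 2 : ℝ) ^ (α - 1)
              = 4 ^ (α - 1) * (‖w‖ ^ 2) ^ (α - 1) := mul_rpow (by norm_num) (sq_nonneg _)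
          have h3 : ((‖w‖ ^ 2 : ℝ)) ^ (α - 1) ≤ 1 :=
            rpow_le_one (sq_nonneg _) hw2le (by linarith)
          have h4 : (4:ℝ) ^ (α - 1) ≤ 4 ^ α :=
            rpow_le_rpow_of_exponent_le (by norm_num) (by linarith)
          have h5 : (0:ℝ) < 4 ^ (α - 1) := rpow_pos_of_pos (by norm_num) _
          have h6 : t ^ (α - 1) ≤ 4 ^ α := by nlinarith only [h1, h2, h3, h4, h5]
          exact mul_le_mul_of_nonneg_left h6 hC1p.le
        have hstep : |F s - F t - F' t * (s - t)| ≤ |F s| + |F t| + |F' t| * |s - t| := by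
          calc |F s - F t - F' t * (s - t)| ≤ |F s - F t| + |F' t * (s - t)| := abs_sub _ _
            _ ≤ |F s| + |F t| + |F' t| * |s - t| := by
                rw [abs_mul]
                have h6 := abs_sub (F s) (F t)
                linarith only [h6]
        have hmul : |F' t| * |s - t| ≤ C1 * 4 ^ α * (13 * ‖w‖ ^ 2) :=
          mul_le_mul hF't hδ (abs_nonneg _) (by positivity)
        have hFs' : |F s| ≤ 9 ^ α * ‖w‖ ^ 2 := by
          rw [abs_of_nonneg (hFbounds s hs0).1]; exact hFs
        have hFt' : |F t| ≤ 4 ^ α * ‖w‖ ^ 2 := by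
          rw [abs_of_nonneg (hFbounds t ht0).1]; exact hFt
        rw [hK1def]
        nlinarith only [hstep, hFs', hFt', hmul, hK2p, sq_nonneg (‖w‖)]
      · -- large a
        have ha0 : 0 < ‖a‖ := lt_of_le_of_lt (by positivity) hcase
        have ht0' : 0 < t := by rw [htdef]; exact pow_pos ha0 2
        have h1 : ‖a‖ ≤ ‖a + w‖ + ‖w‖ := by
          have h := norm_add_le (a + w) (-w)
          simpa using h
        have h2 : ‖a‖ / 2 ≤ ‖a + w‖ := by
          linarith only [h1, hcase]
        have hts : t / 4 ≤ s := by
          rw [hsdef, htdef]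
          nlinarith only [h2, norm_nonneg (a + w), norm_nonneg a]
        have hmem_s : s ∈ Set.Icc (t / 4) B := ⟨hts, hsB⟩
        have hmem_t : t ∈ Set.Icc (t / 4) B := ⟨by linarith, htB⟩
        have htay := hTaylor (t / 4) s t (by linarith) hmem_s hmem_t
        rw [← hF'eq t ht0'] at htay
        have hd1 : |‖a + w‖ - ‖a‖| ≤ ‖w‖ := by
          have h := abs_norm_sub_norm_le (a + w) a
          simpa using h
        have hst3 : |s - t| ≤ 3 * ‖a‖ * ‖w‖ := by
          have e : s - t = (‖a + w‖ - ‖a‖)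
              * (‖a + w‖ + ‖a‖) := by rw [hsdef, htdef]; ring
          rw [e, abs_mul, abs_of_nonneg (by positivity : (0:ℝ) ≤
            ‖a + w‖ + ‖a‖)]
          have h3 : ‖a + w‖ + ‖a‖ ≤ 3 * ‖a‖ := by
            have h2' : ‖a + w‖ ≤ ‖a‖ + ‖w‖ :=
              norm_add_le a w
            linarith only [h2', hcase, norm_nonneg w]
          calc |‖a + w‖ - ‖a‖| * (‖a + w‖ + ‖a‖)
              ≤ ‖w‖ * (3 * ‖a‖) :=
                mul_le_mul hd1 h3 (by positivity) (norm_nonneg w)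
            _ = 3 * ‖a‖ * ‖w‖ := by ring
        have hst2 : |s - t| * |s - t| ≤ 9 * t * ‖w‖ ^ 2 := by
          have h := mul_le_mul hst3 hst3 (abs_nonneg _) (by positivity)
          calc |s - t| * |s - t|
              ≤ 3 * ‖a‖ * ‖w‖ * (3 * ‖a‖ * ‖w‖) := h
            _ = 9 * ‖a‖ ^ 2 * ‖w‖ ^ 2 := by ring
            _ = 9 * t * ‖w‖ ^ 2 := by rw [htdef]
        have hL4 : (t / 4) ^ (α - 2) * t ≤ 4 * B ^ (α - 1) := by
          have e : (t / 4 : ℝ) ^ (α - 1) = (t / 4) ^ (α - 2) * (t / 4) := by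
            rw [show α - 1 = (α - 2) + 1 by ring,
              Real.rpow_add (by linarith : (0:ℝ) < t / 4), rpow_one]
          have h4 : (t / 4 : ℝ) ^ (α - 1) ≤ B ^ (α - 1) :=
            rpow_le_rpow (by linarith) (by linarith) (by linarith)
          linarith only [e, h4]
        have hBB : B ^ (α - 2) * t ≤ B ^ (α - 1) := by
          have e : B ^ (α - 1) = B ^ (α - 2) * B := by
            rw [show α - 1 = (α - 2) + 1 by ring, Real.rpow_add hB0, rpow_one]
          have h := mul_le_mul_of_nonneg_left htB (rpow_pos_of_pos hB0 (α - 2)).le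
          linarith only [e, h]
        have hL0 : 0 ≤ C2 * ((t / 4) ^ (α - 2) + B ^ (α - 2)) := by
          apply mul_nonneg hC2p.le
          have := rpow_pos_of_pos (show (0:ℝ) < t / 4 by linarith) (α - 2)
          have := rpow_pos_of_pos hB0 (α - 2)
          linarith
        have hfin : |F s - F t - F' t * (s - t)| ≤ K2 * ‖w‖ ^ 2 := by
          calc |F s - F t - F' t * (s - t)|
              ≤ (C2 * ((t / 4) ^ (α - 2) + B ^ (α - 2))) * |s - t| * |s - t| := htay
            _ = (C2 * ((t / 4) ^ (α - 2) + B ^ (α - 2))) * (|s - t| * |s - t|) := by ring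
            _ ≤ (C2 * ((t / 4) ^ (α - 2) + B ^ (α - 2))) * (9 * t * ‖w‖ ^ 2) :=
                mul_le_mul_of_nonneg_left hst2 hL0
            _ ≤ K2 * ‖w‖ ^ 2 := by
                rw [hK2def]
                have h9 : (t / 4) ^ (α - 2) * t + B ^ (α - 2) * t ≤ 5 * B ^ (α - 1) := by
                  linarith only [hL4, hBB]
                have hmul := mul_le_mul_of_nonneg_left h9
                  (mul_nonneg hC2p.le (mul_nonneg (by norm_num : (0:ℝ) ≤ 9)
                    (sq_nonneg (‖w‖))))
                linarith only [hmul]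
        nlinarith only [hfin, hK1p, sq_nonneg (‖w‖)]
    have hF'M' : |F' t| ≤ M := hF'M t ht0 htB
    calc ‖Ga a w‖
        = ‖((F s - F t - F' t * (s - t) : ℝ) : ℂ) * (a + w)
            + ((F' t : ℝ) : ℂ) * X‖ := by rw [hid]
      _ ≤ ‖((F s - F t - F' t * (s - t) : ℝ) : ℂ) * (a + w)‖
            + ‖((F' t : ℝ) : ℂ) * X‖ := norm_add_le _ _
      _ = |F s - F t - F' t * (s - t)| * ‖a + w‖ + |F' t| * ‖X‖ := by
            rw [norm_mul, norm_mul, Complex.norm_real, Complex.norm_real, Real.norm_eq_abs, Real.norm_eq_abs]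
      _ ≤ ((K1 + K2) * ‖w‖ ^ 2) * (A + 1) + M * ((3 * A + 1) * ‖w‖ ^ 2) := by
            refine add_le_add
              (mul_le_mul hrem habsaw (norm_nonneg _)
                (by nlinarith only [hK1p, hK2p, sq_nonneg (‖w‖)])) ?_
            exact mul_le_mul hF'M' hXb (norm_nonneg _) hMp.le
      _ = ((K1 + K2) * (A + 1) + M * (3 * A + 1)) * ‖w‖ ^ 2 := by ring
      _ ≤ ((K1 + K2) * (A + 1) + M * (3 * A + 1) + 1) * ‖w‖ ^ 2 := by
            nlinarith only [sq_nonneg (‖w‖)]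
end

section
/- Let p > 10/3, p > q > 0, F(x) = x^{p/2}/(1 + x^{(p−q)/2}) for x ≥ 0 with F(0)=0, and F' its derivative (extended by F'(0)=0). For a ∈ ℂ define G_a(w) = F(|a+w|²)(a+w) − F(|a|²)a − [ F(|a|²) + F'(|a|²)|a|² ]·w − F'(|a|²)a²·conj(w). Then for every A > 0 there is a constant C > 0 such that for all a ∈ ℂ with |a| ≤ A and all w₁, w₂ ∈ ℂ with |w₁| ≤ 1 and |w₂| ≤ 1: | G_a(w₁) − G_a(w₂) | ≤ C·( |w₁| + |w₂| )·| w₁ − w₂ |. -/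
open Real

lemma lip_aux {X K : ℝ} (hX : 0 < X) {f f' : ℝ → ℝ}
    (hd : ∀ x, 0 < x → x ≤ X → HasDerivAt f (f' x) x)
    (hb : ∀ x, 0 < x → x ≤ X → |f' x| ≤ K)
    (h0b : ∀ x, 0 < x → x ≤ X → |f x - f 0| ≤ K * x) :
    ∀ x, 0 ≤ x → x ≤ X → ∀ y, 0 ≤ y → y ≤ X → |f x - f y| ≤ K * |x - y| := by
  have main : ∀ x, 0 < x → x ≤ X → ∀ y, 0 < y → y ≤ X → |f x - f y| ≤ K * |x - y| := by
    intro x hx hxX y hy hyX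
    have := Convex.norm_image_sub_le_of_norm_hasDerivWithin_le
      (f := f) (f' := f') (C := K) (s := Set.Icc (min x y) (max x y)) (x := y) (y := x)
      (fun t ht => (hd t (lt_of_lt_of_le (lt_min hx hy) ht.1) (le_trans ht.2 (max_le hxX hyX))).hasDerivWithinAt)
      (fun t ht => by
        simpa [Real.norm_eq_abs] using hb t (lt_of_lt_of_le (lt_min hx hy) ht.1) (le_trans ht.2 (max_le hxX hyX)))
      (convex_Icc _ _) ⟨min_le_right _ _, le_max_right _ _⟩ ⟨min_le_left _ _, le_max_left _ _⟩
    simpa [Real.norm_eq_abs] using this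
  intro x hx hxX y hy hyX
  rcases eq_or_lt_of_le hx with h0x | h0x
  · rcases eq_or_lt_of_le hy with h0y | h0y
    · simp [← h0x, ← h0y]
    · rw [abs_sub_comm]
      calc |f y - f x| = |f y - f 0| := by rw [← h0x]
        _ ≤ K * y := h0b y h0y hyX
        _ = K * |x - y| := by rw [← h0x]; simp [sub_zero, abs_of_nonneg hy]
  · rcases eq_or_lt_of_le hy with h0y | h0y
    · calc |f x - f y| = |f x - f 0| := by rw [← h0y]
        _ ≤ K * x := h0b x h0x hxX
        _ = K * |x - y| := by rw [← h0y]; simp [sub_zero, abs_of_nonneg hx]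
    · exact main x h0x hxX y h0y hyX

lemma deriv0_aux {f : ℂ → ℂ} {C t : ℝ} (ht : 0 < t) (h0 : f 0 = 0)
    (hb : ∀ z : ℂ, ‖z‖ ≤ 1 → ‖f z‖ ≤ C * ‖z‖ ^ t * ‖z‖) :
    HasFDerivAt f (0 : ℂ →L[ℝ] ℂ) 0 := by
  rw [hasFDerivAt_iff_isLittleO_nhds_zero]
  simp only [zero_add, h0, ContinuousLinearMap.zero_apply, sub_zero]
  rw [Asymptotics.isLittleO_iff]
  intro c hc
  have htend : Filter.Tendsto (fun z : ℂ => C * ‖z‖ ^ t) (nhds 0) (nhds 0) := by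
    have h1 : Filter.Tendsto (fun z : ℂ => ‖z‖) (nhds 0) (nhds 0) := by
      simpa using (continuous_norm (E := ℂ)).tendsto 0
    have h2 : Filter.Tendsto (fun y : ℝ => C * y ^ t) (nhds 0) (nhds 0) := by
      have : ContinuousAt (fun y : ℝ => y ^ t) 0 :=
        Real.continuousAt_rpow_const 0 t (Or.inr ht.le)
      have := (this.tendsto).const_mul C
      simpa [Real.zero_rpow ht.ne'] using this
    exact h2.comp h1
  have h1 : ∀ᶠ z : ℂ in nhds 0, C * ‖z‖ ^ t < c := htend.eventually (gt_mem_nhds hc)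
  have h2 : ∀ᶠ z : ℂ in nhds 0, ‖z‖ ≤ 1 := by
    have : Metric.closedBall (0:ℂ) 1 ∈ nhds (0:ℂ) := Metric.closedBall_mem_nhds 0 one_pos
    exact Filter.eventually_of_mem this (fun z hz => by simpa using hz)
  filter_upwards [h1, h2] with z hz1 hz2
  calc ‖f z‖ ≤ C * ‖z‖ ^ t * ‖z‖ := hb z hz2
    _ ≤ c * ‖z‖ := by
        apply mul_le_mul_of_nonneg_right hz1.le (norm_nonneg _)

noncomputable def Efun (s r : ℝ) (x : ℝ) : ℝ :=
  (s * x^(s-1) + (s-r)*x^(s+r-1)) / (1+x^r)^2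

noncomputable def E'fun (s r : ℝ) (x : ℝ) : ℝ :=
  ((s*(s-1)*x^(s-2) + (s-r)*(s+r-1)*x^(s+r-2)) * (1+x^r)^2
    - (s * x^(s-1) + (s-r)*x^(s+r-1)) * (2*(1+x^r)*(r*x^(r-1)))) / ((1+x^r)^2)^2

lemma den_pos {r x : ℝ} (hx : 0 < x) : (0:ℝ) < 1 + x^r := by positivity

lemma hasDerivAt_Ffun {s r x : ℝ} (hx : 0 < x) :
    HasDerivAt (fun y : ℝ => y^s/(1+y^r)) (Efun s r x) x := by
  have h1 : HasDerivAt (fun y : ℝ => y^s) (s*x^(s-1)) x := by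
    simpa [mul_comm] using Real.hasDerivAt_rpow_const (x := x) (p := s) (Or.inl hx.ne')
  have h2 : HasDerivAt (fun y : ℝ => 1+y^r) (r*x^(r-1)) x := by
    simpa [mul_comm] using
      (Real.hasDerivAt_rpow_const (x := x) (p := r) (Or.inl hx.ne')).const_add 1
  have hne : (1 + x^r) ≠ 0 := (den_pos hx).ne'
  have := h1.div h2 hne
  refine this.congr_deriv (Eq.symm ?_)
  rw [Efun]
  congr 1
  have e1 : x^(s-1)*x^r = x^(s+r-1) := by rw [← Real.rpow_add hx]; ring_nf
  have e2 : x^s*x^(r-1) = x^(s+r-1) := by rw [← Real.rpow_add hx]; ring_nf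
  linear_combination r * e2 - s * e1

lemma hasDerivAt_Efun {s r x : ℝ} (hx : 0 < x) :
    HasDerivAt (Efun s r) (E'fun s r x) x := by
  have hN : HasDerivAt (fun y : ℝ => s * y^(s-1) + (s-r)*y^(s+r-1))
      (s*(s-1)*x^(s-2) + (s-r)*(s+r-1)*x^(s+r-2)) x := by
    have h1 := (Real.hasDerivAt_rpow_const (x := x) (p := s-1) (Or.inl hx.ne')).const_mul s
    have h2 := (Real.hasDerivAt_rpow_const (x := x) (p := s+r-1) (Or.inl hx.ne')).const_mul (s-r)
    have := h1.add h2
    refine this.congr_deriv (Eq.symm ?_)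
    have : s - 1 - 1 = s - 2 := by ring
    rw [this]
    have : s + r - 1 - 1 = s + r - 2 := by ring
    rw [this]; ring
  have hD : HasDerivAt (fun y : ℝ => (1+y^r)^2) (2*(1+x^r)*(r*x^(r-1))) x := by
    have h2 : HasDerivAt (fun y : ℝ => 1+y^r) (r*x^(r-1)) x := by
      simpa [mul_comm] using
        (Real.hasDerivAt_rpow_const (x := x) (p := r) (Or.inl hx.ne')).const_add 1
    have := h2.pow 2
    refine this.congr_deriv (Eq.symm ?_)
    norm_num
  have hne : ((1 + x^r)^2) ≠ 0 := by positivity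
  have := hN.div hD hne
  exact this

lemma rpow_succ {x a : ℝ} (hx : 0 < x) : x ^ a * x = x ^ (a+1) := by
  have h : x ^ a * x ^ (1:ℝ) = x ^ (a+1) := by rw [← Real.rpow_add hx]
  rwa [Real.rpow_one] at h

lemma rpow_factor {x X a b : ℝ} (hx : 0 < x) (hxX : x ≤ X) (ha : 0 ≤ a) :
    x^(a+b) ≤ X^a * x^b := by
  rw [Real.rpow_add hx]
  exact mul_le_mul_of_nonneg_right (Real.rpow_le_rpow hx.le hxX ha)
    (Real.rpow_nonneg hx.le b)

lemma Nfun_bound {s r X x : ℝ} (hs : 1 < s) (hr : 0 < r) (hrs : r < s)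
    (hx : 0 < x) (hxX : x ≤ X) :
    s * x^(s-1) + (s-r)*x^(s+r-1) ≤ (s + s*X^r) * x^(s-1) := by
  have e1 : x^(s+r-1) ≤ X^r * x^(s-1) := by
    have : s + r - 1 = r + (s-1) := by ring
    rw [this]; exact rpow_factor hx hxX hr.le
  have hXr : 0 ≤ X^r := Real.rpow_nonneg (le_trans hx.le hxX) r
  have hxs : 0 ≤ x^(s-1) := Real.rpow_nonneg hx.le _
  have f1 : (s-r)*x^(s+r-1) ≤ (s-r)*(X^r*x^(s-1)) :=
    mul_le_mul_of_nonneg_left e1 (by linarith)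
  have f2 : (s-r)*(X^r*x^(s-1)) ≤ s*(X^r*x^(s-1)) :=
    mul_le_mul_of_nonneg_right (by linarith) (mul_nonneg hXr hxs)
  nlinarith [f1, f2]

lemma Efun_bound {s r X x : ℝ} (hs : 1 < s) (hr : 0 < r) (hrs : r < s)
    (hx : 0 < x) (hxX : x ≤ X) :
    |Efun s r x| ≤ (s + s*X^r) * x^(s-1) := by
  have hxr : 0 ≤ x^r := Real.rpow_nonneg hx.le r
  have hden : (1:ℝ) ≤ (1+x^r)^2 := by nlinarith
  have hNnn : 0 ≤ s * x^(s-1) + (s-r)*x^(s+r-1) := by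
    have h1 : 0 ≤ x^(s-1) := Real.rpow_nonneg hx.le _
    have h2 : 0 ≤ x^(s+r-1) := Real.rpow_nonneg hx.le _
    have a1 := mul_nonneg (by linarith : (0:ℝ) ≤ s) h1
    have a2 := mul_nonneg (by linarith : (0:ℝ) ≤ s - r) h2
    linarith
  rw [Efun, abs_of_nonneg (div_nonneg hNnn (by linarith))]
  calc (s * x^(s-1) + (s-r)*x^(s+r-1)) / (1+x^r)^2
      ≤ s * x^(s-1) + (s-r)*x^(s+r-1) := div_le_self hNnn hden
    _ ≤ (s + s*X^r) * x^(s-1) := Nfun_bound hs hr hrs hx hxX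

lemma quot_bound {N N' D D' : ℝ} (hD1 : 1 ≤ D) (hNnn : 0 ≤ N) (hN'nn : 0 ≤ N') (hD'nn : 0 ≤ D') :
    |(N' * D - N * D') / D^2| ≤ N' + N * D' := by
  have hD0 : (0:ℝ) < D := lt_of_lt_of_le one_pos hD1
  have hD2 : (0:ℝ) < D^2 := by positivity
  rw [abs_div, abs_of_nonneg hD2.le, div_le_iff₀ hD2]
  have h1 : |N' * D - N * D'| ≤ N' * D + N * D' := by
    calc |N' * D - N * D'| ≤ |N' * D| + |N * D'| := abs_sub _ _
      _ = N' * D + N * D' := by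
          rw [abs_of_nonneg (mul_nonneg hN'nn hD0.le), abs_of_nonneg (mul_nonneg hNnn hD'nn)]
  have g1 : N' * D ≤ N' * D^2 := mul_le_mul_of_nonneg_left (by nlinarith) hN'nn
  have g2 : N * D' ≤ N * D' * D^2 := by
    nlinarith [mul_nonneg (mul_nonneg hNnn hD'nn) (by nlinarith : (0:ℝ) ≤ D^2 - 1)]
  nlinarith [g1, g2]

set_option maxHeartbeats 2000000 in
lemma E'fun_bound {s r X x : ℝ} (hs : 1 < s) (hr : 0 < r) (hrs : r < s)
    (hx : 0 < x) (hxX : x ≤ X) :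
    |E'fun s r x| ≤ (s*s + 2*s*s*X^r + 2*(1+X^r)*r*(s+s*X^r)*X^r) * x^(s-2) := by
  have hX : 0 < X := lt_of_lt_of_le hx hxX
  have hxr : 0 ≤ x^r := Real.rpow_nonneg hx.le r
  have hXr : 0 ≤ X^r := Real.rpow_nonneg hX.le r
  have hxrX : x^r ≤ X^r := Real.rpow_le_rpow hx.le hxX hr.le
  have hxs1 : 0 ≤ x^(s-1) := Real.rpow_nonneg hx.le _
  have hxs2 : 0 ≤ x^(s-2) := Real.rpow_nonneg hx.le _
  have hxsr1 : 0 ≤ x^(s+r-1) := Real.rpow_nonneg hx.le _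
  have hxsr2 : 0 ≤ x^(s+r-2) := Real.rpow_nonneg hx.le _
  have hxr1 : 0 ≤ x^(r-1) := Real.rpow_nonneg hx.le _
  have hNnn : 0 ≤ s * x^(s-1) + (s-r)*x^(s+r-1) := by
    have a1 := mul_nonneg (by linarith : (0:ℝ) ≤ s) hxs1
    have a2 := mul_nonneg (by linarith : (0:ℝ) ≤ s - r) hxsr1
    linarith
  have hN'nn : 0 ≤ s*(s-1)*x^(s-2) + (s-r)*(s+r-1)*x^(s+r-2) := by
    have a1 := mul_nonneg (mul_nonneg (by linarith : (0:ℝ) ≤ s) (by linarith : (0:ℝ) ≤ s-1)) hxs2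
    have a2 := mul_nonneg (mul_nonneg (by linarith : (0:ℝ) ≤ s-r) (by linarith : (0:ℝ) ≤ s+r-1)) hxsr2
    linarith
  have hD'nn : 0 ≤ 2*(1+x^r)*(r*x^(r-1)) := by
    have := mul_nonneg (by linarith : (0:ℝ) ≤ 2*(1+x^r)) (mul_nonneg hr.le hxr1)
    linarith
  have key : |E'fun s r x| ≤ (s*(s-1)*x^(s-2) + (s-r)*(s+r-1)*x^(s+r-2))
      + (s * x^(s-1) + (s-r)*x^(s+r-1)) * (2*(1+x^r)*(r*x^(r-1))) :=
    quot_bound (by nlinarith) hNnn hN'nn hD'nn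
  have e1 : x^(s+r-2) ≤ X^r * x^(s-2) := by
    have h : s + r - 2 = r + (s-2) := by ring
    rw [h]; exact rpow_factor hx hxX hr.le
  have hN' : s*(s-1)*x^(s-2) + (s-r)*(s+r-1)*x^(s+r-2) ≤ (s*s + 2*s*s*X^r) * x^(s-2) := by
    have c1 : s*(s-1) ≤ s*s := by nlinarith
    have c2 : 0 ≤ (s-r)*(s+r-1) := by nlinarith
    have c3 : (s-r)*(s+r-1) ≤ 2*s*s := by nlinarith [sq_nonneg (2*r-1)]
    have f1 : (s-r)*(s+r-1)*x^(s+r-2) ≤ (s-r)*(s+r-1)*(X^r*x^(s-2)) :=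
      mul_le_mul_of_nonneg_left e1 c2
    have f2 : (s-r)*(s+r-1)*(X^r*x^(s-2)) ≤ (2*s*s)*(X^r*x^(s-2)) :=
      mul_le_mul_of_nonneg_right c3 (mul_nonneg hXr hxs2)
    have f3 : s*(s-1)*x^(s-2) ≤ s*s*x^(s-2) := mul_le_mul_of_nonneg_right c1 hxs2
    nlinarith [f1, f2, f3]
  have hND' : (s * x^(s-1) + (s-r)*x^(s+r-1)) * (2*(1+x^r)*(r*x^(r-1)))
      ≤ 2*(1+X^r)*r*(s+s*X^r)*X^r * x^(s-2) := by
    have hNb : s * x^(s-1) + (s-r)*x^(s+r-1) ≤ (s + s*X^r) * x^(s-1) :=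
      Nfun_bound hs hr hrs hx hxX
    have hD'b : 2*(1+x^r)*(r*x^(r-1)) ≤ 2*(1+X^r)*(r*x^(r-1)) := by
      have : 0 ≤ r*x^(r-1) := mul_nonneg hr.le hxr1
      nlinarith
    have hNb2 : 0 ≤ (s + s*X^r) * x^(s-1) := by
      have a1 := mul_nonneg (mul_nonneg (by linarith : (0:ℝ) ≤ s) hXr) hxs1
      have a2 := mul_nonneg (by linarith : (0:ℝ) ≤ s) hxs1
      nlinarith
    calc (s * x^(s-1) + (s-r)*x^(s+r-1)) * (2*(1+x^r)*(r*x^(r-1)))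
        ≤ ((s + s*X^r) * x^(s-1)) * (2*(1+X^r)*(r*x^(r-1))) :=
          mul_le_mul hNb hD'b hD'nn hNb2
      _ = 2*(1+X^r)*r*(s+s*X^r) * (x^(s-1) * x^(r-1)) := by ring
      _ = 2*(1+X^r)*r*(s+s*X^r) * x^(s+r-2) := by
          rw [← Real.rpow_add hx]; ring_nf
      _ ≤ 2*(1+X^r)*r*(s+s*X^r) * (X^r * x^(s-2)) := by
          apply mul_le_mul_of_nonneg_left e1 (by positivity)
      _ = 2*(1+X^r)*r*(s+s*X^r)*X^r * x^(s-2) := by ring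
  calc |E'fun s r x| ≤ _ := key
    _ ≤ (s*s + 2*s*s*X^r) * x^(s-2) + 2*(1+X^r)*r*(s+s*X^r)*X^r * x^(s-2) := by linarith
    _ = (s*s + 2*s*s*X^r + 2*(1+X^r)*r*(s+s*X^r)*X^r) * x^(s-2) := by ring

noncomputable def Ln (z : ℂ) : ℂ →L[ℝ] ℝ :=
  (2*z.re) • Complex.reCLM + (2*z.im) • Complex.imCLM

lemma Ln_apply (z v : ℂ) : Ln z v = 2*z.re*v.re + 2*z.im*v.im := by
  simp [Ln]

lemma Ln_bound (z v : ℂ) : ‖Ln z v‖ ≤ 4*‖z‖*‖v‖ := by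
  rw [Ln_apply, Real.norm_eq_abs]
  have h1 : |z.re| ≤ ‖z‖ := Complex.abs_re_le_norm z
  have h2 : |z.im| ≤ ‖z‖ := Complex.abs_im_le_norm z
  have h3 : |v.re| ≤ ‖v‖ := Complex.abs_re_le_norm v
  have h4 : |v.im| ≤ ‖v‖ := Complex.abs_im_le_norm v
  have hz : 0 ≤ ‖z‖ := norm_nonneg z
  have hv : 0 ≤ ‖v‖ := norm_nonneg v
  have e1 : |2*z.re*v.re| ≤ 2*(‖z‖*‖v‖) := by
    rw [abs_mul, abs_mul]
    have := mul_le_mul h1 h3 (abs_nonneg _) hz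
    rw [abs_two]
    nlinarith [abs_nonneg z.re, abs_nonneg v.re]
  have e2 : |2*z.im*v.im| ≤ 2*(‖z‖*‖v‖) := by
    rw [abs_mul, abs_mul]
    have := mul_le_mul h2 h4 (abs_nonneg _) hz
    rw [abs_two]
    nlinarith [abs_nonneg z.im, abs_nonneg v.im]
  calc |2*z.re*v.re + 2*z.im*v.im| ≤ |2*z.re*v.re| + |2*z.im*v.im| := abs_add_le _ _
    _ ≤ 4*‖z‖*‖v‖ := by linarith

lemma hasFDerivAt_normSq' (z : ℂ) : HasFDerivAt Complex.normSq (Ln z) z := by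
  have hre : HasFDerivAt (fun w : ℂ => w.re) Complex.reCLM z := Complex.reCLM.hasFDerivAt
  have him : HasFDerivAt (fun w : ℂ => w.im) Complex.imCLM z := Complex.imCLM.hasFDerivAt
  have h := (hre.mul hre).add (him.mul him)
  have heq : (fun w : ℂ => w.re * w.re + w.im * w.im) = Complex.normSq := by
    funext w; rw [Complex.normSq_apply]
  replace h : HasFDerivAt Complex.normSq _ z := h
  refine h.congr_fderiv (Eq.symm ?_)
  ext v
  simp [Ln]
  ring

noncomputable def Dhat (c₁ c₂ : ℂ) : ℂ →L[ℝ] ℂ :=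
  c₁ • (ContinuousLinearMap.id ℝ ℂ) + c₂ • (Complex.conjCLE : ℂ ≃L[ℝ] ℂ).toContinuousLinearMap

lemma Dhat_apply (c₁ c₂ v : ℂ) : Dhat c₁ c₂ v = c₁ * v + c₂ * (starRingEnd ℂ) v := by
  simp [Dhat, Complex.conjCLE]

lemma Dhat_norm (c₁ c₂ : ℂ) : ‖Dhat c₁ c₂‖ ≤ ‖c₁‖ + ‖c₂‖ := by
  apply ContinuousLinearMap.opNorm_le_bound _ (by positivity)
  intro v
  rw [Dhat_apply]
  calc ‖c₁ * v + c₂ * (starRingEnd ℂ) v‖ ≤ ‖c₁ * v‖ + ‖c₂ * (starRingEnd ℂ) v‖ := norm_add_le _ _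
    _ = ‖c₁‖*‖v‖ + ‖c₂‖*‖v‖ := by rw [norm_mul, norm_mul, RCLike.norm_conj]
    _ = (‖c₁‖ + ‖c₂‖)*‖v‖ := by ring

lemma Dhat_sub (a b c d : ℂ) : Dhat a b - Dhat c d = Dhat (a-c) (b-d) := by
  ext v
  simp [Dhat_apply]
  ring

lemma phi_deriv {F F' : ℝ → ℝ} {z : ℂ}
    (hd : HasDerivAt F (F' (Complex.normSq z)) (Complex.normSq z)) :
    HasFDerivAt (fun w => (F (Complex.normSq w) : ℂ) * w)
      (Dhat (F (Complex.normSq z) + F' (Complex.normSq z) * Complex.normSq z)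
        (F' (Complex.normSq z) * z * z)) z := by
  have h1 : HasFDerivAt (fun w : ℂ => F (Complex.normSq w))
      (F' (Complex.normSq z) • Ln z) z :=
    hd.comp_hasFDerivAt z (hasFDerivAt_normSq' z)
  have h2 : HasFDerivAt (fun w : ℂ => (F (Complex.normSq w) : ℂ))
      (Complex.ofRealCLM.comp (F' (Complex.normSq z) • Ln z)) z :=
    Complex.ofRealCLM.hasFDerivAt.comp z h1
  have h3 := h2.mul (hasFDerivAt_id z)
  refine h3.congr_fderiv (Eq.symm ?_)
  ext v
  rw [Dhat_apply]
  simp [Ln_apply, Complex.ext_iff, Complex.normSq_apply, Complex.mul_re, Complex.mul_im]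
  constructor <;> ring

set_option maxHeartbeats 1000000 in
lemma phi2_deriv {g g' : ℝ → ℝ} {z : ℂ}
    (hd : HasDerivAt g (g' (Complex.normSq z)) (Complex.normSq z)) :
    ∃ T : ℂ →L[ℝ] ℂ, HasFDerivAt (fun w => (g (Complex.normSq w) : ℂ) * w * w) T z ∧
      ‖T‖ ≤ 2*|g (Complex.normSq z)| * ‖z‖ + 4*|g' (Complex.normSq z)| * ‖z‖^3 := by
  have h1 : HasFDerivAt (fun w : ℂ => (g (Complex.normSq w) : ℂ))
      (Complex.ofRealCLM.comp (g' (Complex.normSq z) • Ln z)) z :=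
    Complex.ofRealCLM.hasFDerivAt.comp z (hd.comp_hasFDerivAt z (hasFDerivAt_normSq' z))
  have h2 := (h1.mul (hasFDerivAt_id z)).mul (hasFDerivAt_id z)
  refine ⟨_, h2, ?_⟩
  apply ContinuousLinearMap.opNorm_le_bound _ (by positivity)
  intro v
  simp only [ContinuousLinearMap.add_apply, ContinuousLinearMap.smul_apply,
    ContinuousLinearMap.coe_comp', Function.comp_apply, ContinuousLinearMap.coe_id', id_eq,
    smul_eq_mul]
  have hgz : ‖((g (Complex.normSq z) : ℝ) : ℂ)‖ = |g (Complex.normSq z)| := by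
    rw [Complex.norm_real, Real.norm_eq_abs]
  have n1 : ‖(g (Complex.normSq z) : ℂ) * z * v‖ ≤ |g (Complex.normSq z)| * ‖z‖ * ‖v‖ := by
    rw [norm_mul, norm_mul, hgz]
  have n2 : ‖Complex.ofRealCLM (g' (Complex.normSq z) * (Ln z) v)‖
      ≤ |g' (Complex.normSq z)| * (4*‖z‖*‖v‖) := by
    have : ‖Complex.ofRealCLM (g' (Complex.normSq z) * (Ln z) v)‖
        = |g' (Complex.normSq z)| * ‖(Ln z) v‖ := by
      simp [Complex.ofRealCLM_apply, Complex.norm_real, Real.norm_eq_abs, abs_mul]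
    rw [this]
    exact mul_le_mul_of_nonneg_left (Ln_bound z v) (abs_nonneg _)
  have n3 : ‖(g (Complex.normSq z) : ℂ) * v‖ ≤ |g (Complex.normSq z)| * ‖v‖ := by
    rw [norm_mul, hgz]
  have hz := norm_nonneg z
  have hv := norm_nonneg v
  calc ‖(g (Complex.normSq z) : ℂ) * z * v +
        z * ((g (Complex.normSq z) : ℂ) * v + z * Complex.ofRealCLM (g' (Complex.normSq z) * (Ln z) v))‖
      ≤ ‖(g (Complex.normSq z) : ℂ) * z * v‖ +
        ‖z‖ * (‖(g (Complex.normSq z) : ℂ) * v‖ + ‖z‖ * ‖Complex.ofRealCLM (g' (Complex.normSq z) * (Ln z) v)‖) := by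
        have := norm_add_le ((g (Complex.normSq z) : ℂ) * z * v)
          (z * ((g (Complex.normSq z) : ℂ) * v + z * Complex.ofRealCLM (g' (Complex.normSq z) * (Ln z) v)))
        have h4 : ‖z * ((g (Complex.normSq z) : ℂ) * v + z * Complex.ofRealCLM (g' (Complex.normSq z) * (Ln z) v))‖
            ≤ ‖z‖ * (‖(g (Complex.normSq z) : ℂ) * v‖ + ‖z‖ * ‖Complex.ofRealCLM (g' (Complex.normSq z) * (Ln z) v)‖) := by
          rw [norm_mul]
          apply mul_le_mul_of_nonneg_left _ hz
          calc ‖(g (Complex.normSq z) : ℂ) * v + z * Complex.ofRealCLM (g' (Complex.normSq z) * (Ln z) v)‖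
              ≤ ‖(g (Complex.normSq z) : ℂ) * v‖ + ‖z * Complex.ofRealCLM (g' (Complex.normSq z) * (Ln z) v)‖ :=
                norm_add_le _ _
            _ ≤ _ := by rw [norm_mul z]
        linarith
    _ ≤ (2*|g (Complex.normSq z)| * ‖z‖ + 4*|g' (Complex.normSq z)| * ‖z‖^3) * ‖v‖ := by
        nlinarith [mul_le_mul_of_nonneg_left n2 (mul_nonneg hz hz),
          mul_le_mul_of_nonneg_left n3 hz, abs_nonneg (g (Complex.normSq z)),
          abs_nonneg (g' (Complex.normSq z))]

lemma lip_gen {φ : ℂ → ℂ} {s : Set ℂ} (hs : Convex ℝ s) {K : ℝ}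
    (hder : ∀ z : ℂ, ∃ T : ℂ →L[ℝ] ℂ, z ∈ s → HasFDerivAt φ T z ∧ ‖T‖ ≤ K) :
    ∀ z₁ ∈ s, ∀ z₂ ∈ s, ‖φ z₁ - φ z₂‖ ≤ K * ‖z₁ - z₂‖ := by
  choose T hT using hder
  intro z₁ h₁ z₂ h₂
  exact Convex.norm_image_sub_le_of_norm_hasFDerivWithin_le
    (fun z hz => ((hT z hz).1).hasFDerivWithinAt) (fun z hz => (hT z hz).2) hs h₂ h₁

set_option maxHeartbeats 2000000 in
theorem stmt_11 (p q : ℝ) (hp : 10 / 3 < p) (hq : 0 < q) (hqp : q < p)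
    (F F' : ℝ → ℝ)
    (hF : ∀ x : ℝ, 0 ≤ x → F x = x ^ (p / 2) / (1 + x ^ ((p - q) / 2)))
    (hF' : ∀ x : ℝ, 0 < x → HasDerivAt F (F' x) x)
    (hF'0 : F' 0 = 0)
    (Ga : ℂ → ℂ → ℂ)
    (hGa : ∀ a w : ℂ, Ga a w =
      (F (‖a + w‖ ^ 2) : ℂ) * (a + w)
        - (F (‖a‖ ^ 2) : ℂ) * a
        - ((F (‖a‖ ^ 2) + F' (‖a‖ ^ 2) * ‖a‖ ^ 2 : ℝ) : ℂ) * w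
        - ((F' (‖a‖ ^ 2) : ℝ) : ℂ) * a ^ 2 * (starRingEnd ℂ) w) :
    ∀ A : ℝ, 0 < A → ∃ C : ℝ, 0 < C ∧
      ∀ a : ℂ, ‖a‖ ≤ A →
        ∀ w₁ w₂ : ℂ, ‖w₁‖ ≤ 1 → ‖w₂‖ ≤ 1 →
          ‖Ga a w₁ - Ga a w₂‖
            ≤ C * (‖w₁‖ + ‖w₂‖) * ‖w₁ - w₂‖ := by
  intro A hA
  set sp : ℝ := p / 2 with hsp_def
  set rp : ℝ := (p - q) / 2 with hrp_def
  have hsp : 1 < sp := by rw [hsp_def]; linarith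
  have hrp : 0 < rp := by rw [hrp_def]; linarith
  have hrs : rp < sp := by rw [hrp_def, hsp_def]; linarith
  -- basic facts about F
  have hF0 : F 0 = 0 := by
    rw [hF 0 le_rfl, Real.zero_rpow (by linarith : sp ≠ 0), Real.zero_rpow (by linarith : rp ≠ 0)]
    simp
  have hFb : ∀ x : ℝ, 0 ≤ x → |F x| ≤ x ^ sp := by
    intro x hx
    rw [hF x hx]
    have h1 : 0 ≤ x ^ sp := Real.rpow_nonneg hx _
    have h2 : 0 ≤ x ^ rp := Real.rpow_nonneg hx _
    rw [abs_of_nonneg (div_nonneg h1 (by linarith))]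
    exact div_le_self h1 (by linarith)
  have hFd : ∀ x : ℝ, 0 < x → HasDerivAt F (Efun sp rp x) x := by
    intro x hx
    apply (hasDerivAt_Ffun hx).congr_of_eventuallyEq
    filter_upwards [eventually_gt_nhds hx] with y hy
    exact hF y hy.le
  have hFE : ∀ x : ℝ, 0 < x → F' x = Efun sp rp x := fun x hx =>
    HasDerivAt.unique (hF' x hx) (hFd x hx)
  have hF'd : ∀ x : ℝ, 0 < x → HasDerivAt F' (E'fun sp rp x) x := by
    intro x hx
    apply (hasDerivAt_Efun hx).congr_of_eventuallyEq
    filter_upwards [eventually_gt_nhds hx] with y hy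
    exact hFE y hy
  -- constants
  set R : ℝ := A + 1 with hR_def
  have hR1 : 1 ≤ R := by rw [hR_def]; linarith
  have hR0 : 0 < R := by linarith
  set X : ℝ := R ^ 2 with hX_def
  have hX1 : 1 ≤ X := by rw [hX_def]; nlinarith
  have hX0 : 0 < X := by linarith
  have hXrp : 0 < X ^ rp := Real.rpow_pos_of_pos hX0 rp
  have hXsp1 : 0 < X ^ (sp - 1) := Real.rpow_pos_of_pos hX0 _
  set C₁ : ℝ := sp + sp * X ^ rp with hC₁_def
  have hC₁ : 0 < C₁ := by
    have := mul_pos (by linarith : (0:ℝ) < sp) hXrp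
    rw [hC₁_def]; linarith
  set C₂ : ℝ := sp*sp + 2*sp*sp*X^rp + 2*(1+X^rp)*rp*(sp+sp*X^rp)*X^rp with hC₂_def
  have hC₂ : 0 < C₂ := by
    have h1 : (0:ℝ) < sp*sp := by nlinarith
    have h2 : (0:ℝ) < 2*sp*sp*X^rp := by positivity
    have h3 : (0:ℝ) < 2*(1+X^rp)*rp*(sp+sp*X^rp)*X^rp := by
      apply mul_pos (mul_pos (mul_pos (by linarith) hrp) (by nlinarith)) hXrp
    rw [hC₂_def]; linarith
  have hmono : ∀ x : ℝ, 0 < x → x ≤ X → x ^ (sp-1) ≤ X ^ (sp-1) :=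
    fun x hx hxX => Real.rpow_le_rpow hx.le hxX (by linarith)
  have hF'b : ∀ x : ℝ, 0 < x → x ≤ X → |F' x| ≤ C₁ * x ^ (sp-1) := by
    intro x hx hxX
    rw [hFE x hx]
    exact Efun_bound hsp hrp hrs hx hxX
  have hE'b : ∀ x : ℝ, 0 < x → x ≤ X → |E'fun sp rp x| ≤ C₂ * x ^ (sp-2) :=
    fun x hx hxX => E'fun_bound hsp hrp hrs hx hxX
  -- Lipschitz of F on [0,X]
  set KF : ℝ := (C₁ + 1) * X ^ (sp-1) with hKF_def
  have hKF0 : 0 < KF := by positivity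
  have lipF : ∀ x, 0 ≤ x → x ≤ X → ∀ y, 0 ≤ y → y ≤ X → |F x - F y| ≤ KF * |x - y| := by
    apply lip_aux hX0 (f' := Efun sp rp) (fun x hx _ => hFd x hx)
    · intro x hx hxX
      calc |Efun sp rp x| ≤ C₁ * x ^ (sp-1) := Efun_bound hsp hrp hrs hx hxX
        _ ≤ C₁ * X ^ (sp-1) := mul_le_mul_of_nonneg_left (hmono x hx hxX) hC₁.le
        _ ≤ KF := by rw [hKF_def]; nlinarith
    · intro x hx hxX
      rw [hF0, sub_zero]
      calc |F x| ≤ x ^ sp := hFb x hx.le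
        _ = x ^ (sp-1) * x := by rw [rpow_succ hx]; congr 1; ring
        _ ≤ X ^ (sp-1) * x := mul_le_mul_of_nonneg_right (hmono x hx hxX) hx.le
        _ ≤ KF * x := mul_le_mul_of_nonneg_right (by rw [hKF_def]; nlinarith) hx.le
  -- Lipschitz of G = fun x => F' x * x on [0,X]
  set KG : ℝ := (2*C₁ + C₂) * X ^ (sp-1) with hKG_def
  have hKG0 : 0 < KG := by positivity
  have hgd : ∀ x, 0 < x → x ≤ X →
      HasDerivAt (fun y => F' y * y) (E'fun sp rp x * x + Efun sp rp x) x := by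
    intro x hx _
    have h := (hF'd x hx).mul (hasDerivAt_id x)
    refine h.congr_deriv (Eq.symm ?_)
    rw [hFE x hx]
    simp only [id_eq]
    ring
  have hxpow : ∀ x : ℝ, 0 < x → x ^ (sp-2) * x = x ^ (sp-1) := by
    intro x hx
    rw [rpow_succ hx]
    congr 1
    ring
  have lipG : ∀ x, 0 ≤ x → x ≤ X → ∀ y, 0 ≤ y → y ≤ X →
      |F' x * x - F' y * y| ≤ KG * |x - y| := by
    apply lip_aux hX0 (f' := fun x => E'fun sp rp x * x + Efun sp rp x) hgd
    · intro x hx hxX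
      have b1 : |E'fun sp rp x * x| ≤ C₂ * x ^ (sp-1) := by
        rw [abs_mul, abs_of_nonneg hx.le, ← hxpow x hx, ← mul_assoc]
        exact mul_le_mul_of_nonneg_right (hE'b x hx hxX) hx.le
      have b2 : |Efun sp rp x| ≤ C₁ * x ^ (sp-1) := Efun_bound hsp hrp hrs hx hxX
      have hm := hmono x hx hxX
      calc |E'fun sp rp x * x + Efun sp rp x|
          ≤ |E'fun sp rp x * x| + |Efun sp rp x| := abs_add_le _ _
        _ ≤ (C₂ + C₁) * x ^ (sp-1) := by nlinarith
        _ ≤ (C₂ + C₁) * X ^ (sp-1) := mul_le_mul_of_nonneg_left hm (by linarith)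
        _ ≤ KG := by rw [hKG_def]; nlinarith
    · intro x hx hxX
      rw [hF'0, zero_mul, sub_zero, abs_mul, abs_of_nonneg hx.le]
      have hm := hmono x hx hxX
      calc |F' x| * x ≤ (C₁ * x ^ (sp-1)) * x := mul_le_mul_of_nonneg_right (hF'b x hx hxX) hx.le
        _ ≤ (C₁ * X ^ (sp-1)) * x := mul_le_mul_of_nonneg_right (mul_le_mul_of_nonneg_left hm hC₁.le) hx.le
        _ ≤ KG * x := mul_le_mul_of_nonneg_right (by rw [hKG_def]; nlinarith) hx.le
  -- normSq facts
  have hnsq_eq : ∀ z : ℂ, Complex.normSq z = ‖z‖^2 := fun z => by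
    rw [Complex.normSq_eq_norm_sq]
  have hnsqX : ∀ z : ℂ, ‖z‖ ≤ R → Complex.normSq z ≤ X := by
    intro z hz
    rw [hnsq_eq, hX_def]
    nlinarith [norm_nonneg z]
  have hnorm_rpow : ∀ (z : ℂ) (t : ℝ), (Complex.normSq z) ^ t = ‖z‖ ^ (2*t) := by
    intro z t
    rw [hnsq_eq, ← Real.rpow_natCast ‖z‖ 2, ← Real.rpow_mul (norm_nonneg z)]
    norm_num
  -- Lipschitz bound for φ₂ on the closed ball
  set K₂ : ℝ := (2*C₁ + 4*C₂) * R ^ (2*sp - 1) with hK₂_def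
  have hRsp : 0 < R ^ (2*sp - 1) := Real.rpow_pos_of_pos hR0 _
  have hK₂0 : 0 < K₂ := by rw [hK₂_def]; nlinarith
  have hc2lip : ∀ z₁ ∈ Metric.closedBall (0:ℂ) R, ∀ z₂ ∈ Metric.closedBall (0:ℂ) R,
      ‖(F' (Complex.normSq z₁) : ℂ) * z₁ * z₁ - (F' (Complex.normSq z₂) : ℂ) * z₂ * z₂‖
        ≤ K₂ * ‖z₁ - z₂‖ := by
    apply lip_gen (convex_closedBall _ _)
    intro z
    by_cases hz : z = 0
    · refine ⟨0, fun _ => ⟨?_, by simp [hK₂0.le]⟩⟩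
      subst hz
      apply deriv0_aux (C := C₁) (t := 2*sp - 1) (by linarith) (by simp)
      intro v hv1
      by_cases hv : v = 0
      · simp [hv]
      · have hvpos : 0 < ‖v‖ := norm_pos_iff.mpr hv
        have hnv : 0 < Complex.normSq v := Complex.normSq_pos.mpr hv
        have hnv1 : Complex.normSq v ≤ X := by
          have : Complex.normSq v ≤ 1 := by rw [hnsq_eq]; nlinarith
          linarith
        have hb := hF'b _ hnv hnv1
        have e : ‖v‖^(2*(sp-1)) * ‖v‖ = ‖v‖^(2*sp-1) := by
          rw [rpow_succ hvpos]; congr 1; ring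
        calc ‖(F' (Complex.normSq v):ℂ) * v * v‖
            = |F' (Complex.normSq v)| * (‖v‖ * ‖v‖) := by
              rw [norm_mul, norm_mul, Complex.norm_real, Real.norm_eq_abs]; ring
          _ ≤ (C₁ * (Complex.normSq v) ^ (sp-1)) * (‖v‖*‖v‖) :=
              mul_le_mul_of_nonneg_right hb (by positivity)
          _ = (C₁ * (‖v‖^(2*(sp-1)) * ‖v‖)) * ‖v‖ := by rw [hnorm_rpow]; ring
          _ = C₁ * ‖v‖^(2*sp-1) * ‖v‖ := by rw [e]
    · have hnz : 0 < Complex.normSq z := Complex.normSq_pos.mpr hz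
      obtain ⟨T, hT, hTb⟩ := phi2_deriv (g := F') (g' := fun x => E'fun sp rp x) (hF'd _ hnz)
      refine ⟨T, fun hmem => ⟨hT, ?_⟩⟩
      have hzR : ‖z‖ ≤ R := by rwa [mem_closedBall_zero_iff] at hmem
      have hzpos : 0 < ‖z‖ := norm_pos_iff.mpr hz
      have hnX : Complex.normSq z ≤ X := hnsqX z hzR
      have b1 : |F' (Complex.normSq z)| ≤ C₁ * ‖z‖^(2*(sp-1)) := by
        rw [← hnorm_rpow]; exact hF'b _ hnz hnX
      have b2 : |E'fun sp rp (Complex.normSq z)| ≤ C₂ * ‖z‖^(2*(sp-2)) := by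
        rw [← hnorm_rpow]; exact hE'b _ hnz hnX
      have e1 : ‖z‖^(2*(sp-1)) * ‖z‖ = ‖z‖^(2*sp-1) := by
        rw [rpow_succ hzpos]; congr 1; ring
      have e3 : ‖z‖^(2*(sp-2)) * ‖z‖^(3:ℕ) = ‖z‖^(2*sp-1) := by
        rw [← Real.rpow_natCast ‖z‖ 3, ← Real.rpow_add hzpos]; congr 1; push_cast; ring
      have emon : ‖z‖^(2*sp-1) ≤ R^(2*sp-1) := Real.rpow_le_rpow hzpos.le hzR (by linarith)
      calc ‖T‖ ≤ 2*|F' (Complex.normSq z)| * ‖z‖ + 4*|E'fun sp rp (Complex.normSq z)| * ‖z‖^3 := hTb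
        _ ≤ 2*(C₁ * ‖z‖^(2*(sp-1))) * ‖z‖ + 4*(C₂ * ‖z‖^(2*(sp-2))) * ‖z‖^3 := by
            gcongr
        _ = 2*C₁ * (‖z‖^(2*(sp-1)) * ‖z‖) + 4*C₂ * (‖z‖^(2*(sp-2)) * ‖z‖^(3:ℕ)) := by ring
        _ = (2*C₁ + 4*C₂) * ‖z‖^(2*sp-1) := by rw [e1, e3]; ring
        _ ≤ (2*C₁ + 4*C₂) * R^(2*sp-1) := mul_le_mul_of_nonneg_left emon (by linarith)
        _ = K₂ := by rw [hK₂_def]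
  -- Lipschitz of normSq and of the c₁-coefficient
  have hnsq_diff : ∀ z₁ z₂ : ℂ, ‖z₁‖ ≤ R → ‖z₂‖ ≤ R →
      |Complex.normSq z₁ - Complex.normSq z₂| ≤ 2*R*‖z₁ - z₂‖ := by
    intro z₁ z₂ h₁ h₂
    rw [hnsq_eq, hnsq_eq]
    have h := abs_norm_sub_norm_le z₁ z₂
    have e : ‖z₁‖^2 - ‖z₂‖^2 = (‖z₁‖-‖z₂‖)*(‖z₁‖+‖z₂‖) := by ring
    rw [e, abs_mul, abs_of_nonneg (by positivity : (0:ℝ) ≤ ‖z₁‖+‖z₂‖)]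
    have hsum : ‖z₁‖+‖z₂‖ ≤ 2*R := by linarith
    calc |‖z₁‖-‖z₂‖| * (‖z₁‖+‖z₂‖) ≤ ‖z₁-z₂‖ * (2*R) :=
          mul_le_mul h hsum (by positivity) (norm_nonneg _)
      _ = 2*R*‖z₁-z₂‖ := by ring
  have hc1lip : ∀ z₁ z₂ : ℂ, ‖z₁‖ ≤ R → ‖z₂‖ ≤ R →
      |(F (Complex.normSq z₁) + F' (Complex.normSq z₁) * Complex.normSq z₁)
        - (F (Complex.normSq z₂) + F' (Complex.normSq z₂) * Complex.normSq z₂)|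
        ≤ (KF+KG)*(2*R)*‖z₁-z₂‖ := by
    intro z₁ z₂ h₁ h₂
    have hn₁ : 0 ≤ Complex.normSq z₁ := Complex.normSq_nonneg z₁
    have hn₂ : 0 ≤ Complex.normSq z₂ := Complex.normSq_nonneg z₂
    have hX₁ : Complex.normSq z₁ ≤ X := hnsqX z₁ h₁
    have hX₂ : Complex.normSq z₂ ≤ X := hnsqX z₂ h₂
    have l1 := lipF _ hn₁ hX₁ _ hn₂ hX₂
    have l2 := lipG _ hn₁ hX₁ _ hn₂ hX₂
    have l3 := hnsq_diff z₁ z₂ h₁ h₂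
    have habs : |(F (Complex.normSq z₁) + F' (Complex.normSq z₁) * Complex.normSq z₁)
        - (F (Complex.normSq z₂) + F' (Complex.normSq z₂) * Complex.normSq z₂)|
        ≤ |F (Complex.normSq z₁) - F (Complex.normSq z₂)|
          + |F' (Complex.normSq z₁) * Complex.normSq z₁ - F' (Complex.normSq z₂) * Complex.normSq z₂| := by
      have := abs_add_le (F (Complex.normSq z₁) - F (Complex.normSq z₂))
        (F' (Complex.normSq z₁) * Complex.normSq z₁ - F' (Complex.normSq z₂) * Complex.normSq z₂)
      calc _ ≤ _ := le_of_eq (by congr 1; ring)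
        _ ≤ _ := this
    have habs2 : |Complex.normSq z₁ - Complex.normSq z₂| ≥ 0 := abs_nonneg _
    nlinarith [mul_le_mul_of_nonneg_left l3 (by linarith : (0:ℝ) ≤ KF+KG)]
  -- derivative of Φ everywhere
  have hPhi : ∀ z : ℂ, HasFDerivAt (fun w => (F (Complex.normSq w):ℂ)*w)
      (Dhat ((F (Complex.normSq z) + F' (Complex.normSq z) * Complex.normSq z : ℝ) : ℂ)
        ((F' (Complex.normSq z):ℂ) * z * z)) z := by
    intro z
    by_cases hz : z = 0
    · subst hz
      have hD0 : Dhat ((F (Complex.normSq 0) + F' (Complex.normSq 0) * Complex.normSq (0:ℂ) : ℝ) : ℂ)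
          ((F' (Complex.normSq 0):ℂ) * 0 * 0) = 0 := by
        ext v
        simp [Dhat_apply, Complex.normSq_zero, hF0, hF'0]
      rw [hD0]
      apply deriv0_aux (C := 1) (t := 2*sp) (by linarith) (by simp)
      intro v hv1
      have hnvnn : 0 ≤ Complex.normSq v := Complex.normSq_nonneg v
      calc ‖(F (Complex.normSq v):ℂ)*v‖ = |F (Complex.normSq v)| * ‖v‖ := by
            rw [norm_mul, Complex.norm_real, Real.norm_eq_abs]
        _ ≤ (Complex.normSq v)^sp * ‖v‖ := mul_le_mul_of_nonneg_right (hFb _ hnvnn) (norm_nonneg v)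
        _ = ‖v‖^(2*sp) * ‖v‖ := by rw [hnorm_rpow]
        _ = 1 * ‖v‖^(2*sp) * ‖v‖ := by ring
    · have h := phi_deriv (hF' _ (Complex.normSq_pos.mpr hz))
      convert h using 2
      push_cast
      ring
  -- Lipschitz bound for the derivative
  set L : ℝ := (KF+KG)*(2*R) + K₂ with hL_def
  have hL0 : 0 < L := by rw [hL_def]; nlinarith
  have hDlip : ∀ z₁ z₂ : ℂ, ‖z₁‖ ≤ R → ‖z₂‖ ≤ R →
      ‖Dhat ((F (Complex.normSq z₁) + F' (Complex.normSq z₁) * Complex.normSq z₁ : ℝ) : ℂ)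
          ((F' (Complex.normSq z₁):ℂ) * z₁ * z₁)
        - Dhat ((F (Complex.normSq z₂) + F' (Complex.normSq z₂) * Complex.normSq z₂ : ℝ) : ℂ)
          ((F' (Complex.normSq z₂):ℂ) * z₂ * z₂)‖
        ≤ L * ‖z₁ - z₂‖ := by
    intro z₁ z₂ h₁ h₂
    rw [Dhat_sub]
    have e1 : ((F (Complex.normSq z₁) + F' (Complex.normSq z₁) * Complex.normSq z₁ : ℝ) : ℂ)
        - ((F (Complex.normSq z₂) + F' (Complex.normSq z₂) * Complex.normSq z₂ : ℝ) : ℂ)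
        = (((F (Complex.normSq z₁) + F' (Complex.normSq z₁) * Complex.normSq z₁)
          - (F (Complex.normSq z₂) + F' (Complex.normSq z₂) * Complex.normSq z₂) : ℝ) : ℂ) := by
      push_cast; ring
    have n1 : ‖((F (Complex.normSq z₁) + F' (Complex.normSq z₁) * Complex.normSq z₁ : ℝ) : ℂ)
        - ((F (Complex.normSq z₂) + F' (Complex.normSq z₂) * Complex.normSq z₂ : ℝ) : ℂ)‖
        ≤ (KF+KG)*(2*R)*‖z₁-z₂‖ := by
      rw [e1, Complex.norm_real, Real.norm_eq_abs]
      exact hc1lip z₁ z₂ h₁ h₂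
    have n2 : ‖(F' (Complex.normSq z₁):ℂ) * z₁ * z₁ - (F' (Complex.normSq z₂):ℂ) * z₂ * z₂‖
        ≤ K₂ * ‖z₁ - z₂‖ :=
      hc2lip z₁ (mem_closedBall_zero_iff.mpr h₁) z₂ (mem_closedBall_zero_iff.mpr h₂)
    calc ‖Dhat _ _‖ ≤ _ + _ := Dhat_norm _ _
      _ ≤ (KF+KG)*(2*R)*‖z₁-z₂‖ + K₂*‖z₁-z₂‖ := add_le_add n1 n2
      _ = L * ‖z₁-z₂‖ := by rw [hL_def]; ring
  -- conclusion
  refine ⟨L + 1, by linarith, ?_⟩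
  intro a ha w₁ w₂ hw₁ hw₂
  have haR : ‖a‖ ≤ R := by rw [hR_def]; linarith
  have hz₁R : ‖a + w₁‖ ≤ R := le_trans (norm_add_le a w₁) (by rw [hR_def]; linarith)
  have hz₂R : ‖a + w₂‖ ≤ R := le_trans (norm_add_le a w₂) (by rw [hR_def]; linarith)
  have hseg : segment ℝ (a + w₂) (a + w₁) ⊆ Metric.closedBall (0:ℂ) R :=
    (convex_closedBall (0:ℂ) R).segment_subset
      (mem_closedBall_zero_iff.mpr hz₂R) (mem_closedBall_zero_iff.mpr hz₁R)
  set Da : ℂ →L[ℝ] ℂ := Dhat ((F (Complex.normSq a) + F' (Complex.normSq a) * Complex.normSq a : ℝ) : ℂ)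
      ((F' (Complex.normSq a):ℂ) * a * a) with hDa_def
  have hder : ∀ z : ℂ, ∃ T : ℂ →L[ℝ] ℂ, z ∈ segment ℝ (a + w₂) (a + w₁) →
      HasFDerivAt (fun w => (F (Complex.normSq w):ℂ)*w - Da w) T z ∧ ‖T‖ ≤ L * (‖w₁‖+‖w₂‖) := by
    intro z
    refine ⟨Dhat ((F (Complex.normSq z) + F' (Complex.normSq z) * Complex.normSq z : ℝ) : ℂ)
      ((F' (Complex.normSq z):ℂ) * z * z) - Da, fun hmem => ⟨(hPhi z).sub (Da.hasFDerivAt), ?_⟩⟩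
    have hzR : ‖z‖ ≤ R := mem_closedBall_zero_iff.mp (hseg hmem)
    have hza : ‖z - a‖ ≤ ‖w₁‖ + ‖w₂‖ := by
      obtain ⟨t₁, t₂, ht₁, ht₂, hsum, heq⟩ := hmem
      have ht₂' : t₂ = 1 - t₁ := by linarith
      have ht₁1 : t₁ ≤ 1 := by linarith
      have ht₂1 : t₂ ≤ 1 := by linarith
      have hz_eq : z - a = t₁ • w₂ + t₂ • w₁ := by
        rw [← heq, ht₂']
        module
      rw [hz_eq]
      calc ‖t₁ • w₂ + t₂ • w₁‖ ≤ ‖t₁ • w₂‖ + ‖t₂ • w₁‖ := norm_add_le _ _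
        _ = t₁ * ‖w₂‖ + t₂ * ‖w₁‖ := by
            rw [norm_smul, norm_smul, Real.norm_eq_abs, Real.norm_eq_abs,
              abs_of_nonneg ht₁, abs_of_nonneg ht₂]
        _ ≤ ‖w₁‖ + ‖w₂‖ := by nlinarith [norm_nonneg w₁, norm_nonneg w₂]
    rw [hDa_def]
    calc ‖_ - _‖ ≤ L * ‖z - a‖ := hDlip z a hzR haR
      _ ≤ L * (‖w₁‖+‖w₂‖) := mul_le_mul_of_nonneg_left hza hL0.le
  have key := lip_gen (convex_segment (a+w₂) (a+w₁)) hder (a+w₁)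
    (right_mem_segment ℝ (a+w₂) (a+w₁)) (a+w₂) (left_mem_segment ℝ (a+w₂) (a+w₁))
  have hid : Ga a w₁ - Ga a w₂ =
      ((F (Complex.normSq (a+w₁)):ℂ)*(a+w₁) - Da (a+w₁))
        - ((F (Complex.normSq (a+w₂)):ℂ)*(a+w₂) - Da (a+w₂)) := by
    rw [hGa, hGa, hDa_def, Dhat_apply, Dhat_apply]
    simp only [Complex.sq_norm, map_add]
    push_cast
    ring
  have hsub : (a + w₁) - (a + w₂) = w₁ - w₂ := by ring
  have hfin : ‖Ga a w₁ - Ga a w₂‖ ≤ L * (‖w₁‖+‖w₂‖) * ‖w₁ - w₂‖ := by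
    rw [hid]
    calc ‖_ - _‖ ≤ L * (‖w₁‖+‖w₂‖) * ‖(a+w₁) - (a+w₂)‖ := key
      _ = L * (‖w₁‖+‖w₂‖) * ‖w₁ - w₂‖ := by rw [hsub]
  have hnn : 0 ≤ (‖w₁‖+‖w₂‖) * ‖w₁-w₂‖ := by positivity
  nlinarith [hfin, hnn]
end

section
/- Let p > 10/3, p > q > 0, F(x) = x^{p/2}/(1 + x^{(p−q)/2}) for x ≥ 0 with F(0)=0, and F' its derivative (extended by F'(0)=0). For R ≥ 0 and v ∈ ℂ define f₀(R, v) = F(|R+v|²)(R+v) − F(R²)R − ( F(R²) + F'(R²)R² )·v − F'(R²)R²·conj(v). Then for every R₀ > 0 there is a constant C > 0 such that for all real R with 0 ≤ R ≤ R₀ and all v₁, v₂ ∈ ℂ with |v₁| ≤ 1 and |v₂| ≤ 1: | f₀(R, v₁) − f₀(R, v₂) | ≤ C·( R·(|v₁| + |v₂|) + |v₁|^p + |v₂|^p )·| v₁ − v₂ |. -/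
open Real

private lemma rpow_diff_le {α a b : ℝ} (hα : 0 < α) (hb : 0 ≤ b) (hba : b ≤ a) :
    a ^ α - b ^ α ≤ max 1 α * (a ^ (α - 1) * (a - b)) := by
  have ha : 0 ≤ a := hb.trans hba
  rcases eq_or_lt_of_le hba with rfl | hlt
  · simp
  have hapos : 0 < a := lt_of_le_of_lt hb hlt
  have hsum : (α - 1) + 1 = α := by ring
  have ha' : a ^ (α - 1) * a = a ^ α := by
    rw [← Real.rpow_add_one hapos.ne' (α - 1), hsum]
  have hmain : a ^ α - b ^ α ≤ max 1 α * (a ^ (α - 1) * (a - b)) := by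
    rcases le_or_gt α 1 with h1 | h1
    · have key : a ^ (α - 1) * b ≤ b ^ α := by
        rcases eq_or_lt_of_le hb with rfl | hbpos
        · rw [mul_zero, Real.zero_rpow hα.ne']
        · have h2 : a ^ (α - 1) ≤ b ^ (α - 1) :=
            Real.rpow_le_rpow_of_nonpos hbpos hba (by linarith)
          have hb' : b ^ (α - 1) * b = b ^ α := by
            rw [← Real.rpow_add_one hbpos.ne' (α - 1), hsum]
          calc a ^ (α - 1) * b ≤ b ^ (α - 1) * b := mul_le_mul_of_nonneg_right h2 hb
            _ = b ^ α := hb'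
      have h3 : a ^ α - b ^ α ≤ a ^ (α - 1) * (a - b) := by nlinarith
      have h4 : (0:ℝ) ≤ a ^ (α - 1) * (a - b) := by
        have := Real.rpow_nonneg ha (α - 1)
        nlinarith
      calc a ^ α - b ^ α ≤ a ^ (α - 1) * (a - b) := h3
        _ = 1 * (a ^ (α - 1) * (a - b)) := by ring
        _ ≤ max 1 α * (a ^ (α - 1) * (a - b)) := by
            apply mul_le_mul_of_nonneg_right (le_max_left 1 α) h4
    · obtain ⟨c, hc, hc'⟩ := exists_hasDerivAt_eq_slope (fun x => x ^ α)
        (fun x => α * x ^ (α - 1)) hlt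
        (fun x _ => (Real.continuousAt_rpow_const x α (Or.inr hα.le)).continuousWithinAt)
        (fun x _ => Real.hasDerivAt_rpow_const (Or.inr h1.le))
      have hc0 : 0 ≤ c := hb.trans hc.1.le
      have hca : c ≤ a := hc.2.le
      have hcb : c ^ (α - 1) ≤ a ^ (α - 1) := Real.rpow_le_rpow hc0 hca (by linarith)
      have hab : a - b ≠ 0 := sub_ne_zero.2 hlt.ne'
      rw [eq_div_iff hab] at hc'
      have heq : a ^ α - b ^ α = α * c ^ (α - 1) * (a - b) := hc'.symm
      have hα1 : max 1 α = α := max_eq_right h1.le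
      rw [heq, hα1]
      rw [mul_assoc]
      exact mul_le_mul_of_nonneg_left
        (mul_le_mul_of_nonneg_right hcb (by linarith)) hα.le
  exact hmain

private lemma rpow_diff_nonneg {α a b : ℝ} (hα : 0 ≤ α) (hb : 0 ≤ b) (hba : b ≤ a) :
    0 ≤ a ^ α - b ^ α := sub_nonneg.2 (Real.rpow_le_rpow hb hba hα)

private lemma quot_lipschitz {X Y u v : ℝ} (hu : 0 ≤ u) (hv : 0 ≤ v) :
    |X / (1 + u) - Y / (1 + v)| ≤ |X - Y| + |Y| * |u - v| := by
  have hu1 : (0:ℝ) < 1 + u := by linarith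
  have hv1 : (0:ℝ) < 1 + v := by linarith
  have e : X / (1 + u) - Y / (1 + v)
      = (X - Y) / (1 + u) + (Y * (v - u)) / ((1 + u) * (1 + v)) := by
    field_simp
    ring
  rw [e]
  have h1 : |(X - Y) / (1 + u)| ≤ |X - Y| := by
    rw [abs_div, abs_of_pos hu1]
    exact div_le_self (abs_nonneg _) (by linarith)
  have h2 : |(Y * (v - u)) / ((1 + u) * (1 + v))| ≤ |Y| * |u - v| := by
    rw [abs_div, abs_mul, abs_of_pos (mul_pos hu1 hv1)]
    rw [abs_sub_comm v u]
    exact div_le_self (mul_nonneg (abs_nonneg _) (abs_nonneg _)) (by nlinarith)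
  calc |(X - Y) / (1 + u) + (Y * (v - u)) / ((1 + u) * (1 + v))|
      ≤ |(X - Y) / (1 + u)| + |(Y * (v - u)) / ((1 + u) * (1 + v))| := abs_add_le _ _
    _ ≤ |X - Y| + |Y| * |u - v| := add_le_add h1 h2

section
variable {r s M : ℝ}

private lemma key4 (hr : 1 < r) (hs : 0 < s) (hsr : s < r) (hM : 1 ≤ M)
    {F' : ℝ → ℝ}
    (hF'f : ∀ x : ℝ, 0 < x → F' x = (r * x ^ (r-1) + (r-s) * x ^ (r+s-1)) / (1 + x ^ s)^2)
    (hF'0 : F' 0 = 0) :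
    ∃ K : ℝ, 0 < K ∧ ∀ a : ℝ, 0 ≤ a → a ≤ M → |F' a| ≤ K * a ^ (r - 1) := by
  have hMs : (0:ℝ) < M ^ s := Real.rpow_pos_of_pos (by linarith) s
  refine ⟨r + (r-s) * M ^ s, by nlinarith, ?_⟩
  intro a h0 haM
  rcases eq_or_lt_of_le h0 with rfl | ha
  · simp [hF'0, Real.zero_rpow (by linarith : r - 1 ≠ 0)]
  rw [hF'f a ha]
  have hasn : (0:ℝ) ≤ a ^ s := Real.rpow_nonneg h0 s
  have har1 : (0:ℝ) ≤ a ^ (r-1) := Real.rpow_nonneg h0 _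
  have hars1 : (0:ℝ) ≤ a ^ (r+s-1) := Real.rpow_nonneg h0 _
  have hden : (1:ℝ) ≤ (1 + a^s)^2 := by nlinarith
  have hnum0 : 0 ≤ r * a^(r-1) + (r-s)*a^(r+s-1) := by
    apply add_nonneg (mul_nonneg (by linarith) har1) (mul_nonneg (by linarith) hars1)
  rw [abs_of_nonneg (div_nonneg hnum0 (by positivity))]
  have h1 := div_le_self hnum0 hden
  have h2 : a^(r+s-1) = a^(r-1) * a^s := by
    rw [← Real.rpow_add ha]; ring_nf
  have h3 : a^s ≤ M^s := Real.rpow_le_rpow h0 haM hs.le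
  have h5 : a^(r-1)*a^s ≤ a^(r-1)*M^s := mul_le_mul_of_nonneg_left h3 har1
  calc (r * a^(r-1) + (r-s)*a^(r+s-1)) / (1 + a^s)^2
      ≤ r * a^(r-1) + (r-s)*a^(r+s-1) := h1
    _ ≤ (r + (r-s) * M ^ s) * a ^ (r-1) := by rw [h2]; nlinarith

private lemma key1 (hr : 1 < r) (hs : 0 < s) (hsr : s < r) (hM : 1 ≤ M)
    {F : ℝ → ℝ}
    (hFf : ∀ x : ℝ, 0 ≤ x → F x = x ^ r / (1 + x ^ s)) :
    ∃ K : ℝ, 0 < K ∧ ∀ a b : ℝ, 0 ≤ b → b ≤ a → a ≤ M →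
      |F a - F b| ≤ K * (a ^ (r-1) * (a - b)) := by
  have hMs : (0:ℝ) < M ^ s := Real.rpow_pos_of_pos (by linarith) s
  refine ⟨max 1 r + max 1 s * M ^ s, by positivity, ?_⟩
  intro a b hb hba haM
  have ha0 : 0 ≤ a := hb.trans hba
  rcases eq_or_lt_of_le ha0 with rfl | ha
  · have : b = 0 := le_antisymm hba hb
    simp [this]
  rw [hFf a ha0, hFf b hb]
  have h0 := quot_lipschitz (X := a ^ r) (Y := b ^ r)
    (Real.rpow_nonneg ha0 s) (Real.rpow_nonneg hb s)
  have hdr : |a ^ r - b ^ r| = a ^ r - b ^ r :=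
    abs_of_nonneg (rpow_diff_nonneg (by linarith) hb hba)
  have hds : |a ^ s - b ^ s| = a ^ s - b ^ s :=
    abs_of_nonneg (rpow_diff_nonneg hs.le hb hba)
  have hbr : |b ^ r| = b ^ r := abs_of_nonneg (Real.rpow_nonneg hb r)
  rw [hdr, hds, hbr] at h0
  have h1 : a ^ r - b ^ r ≤ max 1 r * (a ^ (r-1) * (a-b)) :=
    rpow_diff_le (by linarith) hb hba
  have h2 : a ^ s - b ^ s ≤ max 1 s * (a ^ (s-1) * (a-b)) :=
    rpow_diff_le hs hb hba
  -- b^r * (a^(s-1) * (a-b)) ≤ M^s * (a^(r-1) * (a-b))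
  have h3 : b ^ r * a ^ (s-1) ≤ M ^ s * a ^ (r-1) := by
    have e1 : a ^ r * a ^ (s-1) = a ^ (r-1) * a ^ s := by
      rw [← Real.rpow_add ha, ← Real.rpow_add ha]; ring_nf
    have e2 : b ^ r ≤ a ^ r := Real.rpow_le_rpow hb hba (by linarith)
    have e3 : a ^ s ≤ M ^ s := Real.rpow_le_rpow ha0 haM hs.le
    have e4 : (0:ℝ) ≤ a ^ (s-1) := Real.rpow_nonneg ha0 _
    have e5 : (0:ℝ) ≤ a ^ (r-1) := Real.rpow_nonneg ha0 _
    calc b ^ r * a ^ (s-1) ≤ a ^ r * a ^ (s-1) := mul_le_mul_of_nonneg_right e2 e4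
      _ = a ^ (r-1) * a ^ s := e1
      _ ≤ a ^ (r-1) * M ^ s := mul_le_mul_of_nonneg_left e3 e5
      _ = M ^ s * a ^ (r-1) := by ring
  have hab : 0 ≤ a - b := by linarith
  have hbr0 : (0:ℝ) ≤ b ^ r := Real.rpow_nonneg hb r
  have h4 : b ^ r * (a ^ s - b ^ s) ≤ max 1 s * (M ^ s * (a ^ (r-1) * (a-b))) := by
    calc b ^ r * (a ^ s - b ^ s) ≤ b ^ r * (max 1 s * (a ^ (s-1) * (a-b))) :=
          mul_le_mul_of_nonneg_left h2 hbr0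
      _ = max 1 s * (b ^ r * a ^ (s-1) * (a-b)) := by ring
      _ ≤ max 1 s * (M ^ s * a ^ (r-1) * (a-b)) := by
          exact mul_le_mul_of_nonneg_left (mul_le_mul_of_nonneg_right h3 hab)
            (le_trans zero_le_one (le_max_left 1 s))
      _ = max 1 s * (M ^ s * (a ^ (r-1) * (a-b))) := by ring
  calc |a ^ r / (1 + a ^ s) - b ^ r / (1 + b ^ s)|
      ≤ (a ^ r - b ^ r) + b ^ r * (a ^ s - b ^ s) := h0
    _ ≤ max 1 r * (a ^ (r-1) * (a-b)) + max 1 s * (M ^ s * (a ^ (r-1) * (a-b))) :=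
        add_le_add h1 h4
    _ = (max 1 r + max 1 s * M ^ s) * (a ^ (r-1) * (a - b)) := by ring

end

private lemma quot_sq_lipschitz {X Y u v : ℝ} (hu : 0 ≤ u) (hv : 0 ≤ v) :
    |X / (1 + u)^2 - Y / (1 + v)^2| ≤ |X - Y| + |Y| * ((2 + u + v) * |u - v|) := by
  have e1 : (1+u)^2 = 1 + (2*u+u^2) := by ring
  have e2 : (1+v)^2 = 1 + (2*v+v^2) := by ring
  rw [e1, e2]
  have h := quot_lipschitz (X := X) (Y := Y) (u := 2*u+u^2) (v := 2*v+v^2)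
    (by nlinarith) (by nlinarith)
  have e3 : |2*u+u^2 - (2*v+v^2)| = (2 + u + v) * |u - v| := by
    have : 2*u+u^2 - (2*v+v^2) = (2 + u + v) * (u - v) := by ring
    rw [this, abs_mul, abs_of_nonneg (by linarith : (0:ℝ) ≤ 2 + u + v)]
  rw [e3] at h
  exact h

section
variable {r s M : ℝ}

private lemma key2 (hr : 1 < r) (hs : 0 < s) (hsr : s < r) (hM : 1 ≤ M)
    {F' : ℝ → ℝ}
    (hF'f : ∀ x : ℝ, 0 < x → F' x = (r * x ^ (r-1) + (r-s) * x ^ (r+s-1)) / (1 + x ^ s)^2)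
    (hF'0 : F' 0 = 0) :
    ∃ K : ℝ, 0 < K ∧ ∀ a b : ℝ, 0 ≤ b → b ≤ a → a ≤ M →
      |F' a * a - F' b * b| ≤ K * (a ^ (r-1) * (a - b)) := by
  obtain ⟨K4, hK4, hk4⟩ := key4 hr hs hsr hM hF'f hF'0
  have hMs : (0:ℝ) < M ^ s := Real.rpow_pos_of_pos (by linarith) s
  have hc1 : (0:ℝ) ≤ r * max 1 r + (r-s) * (max 1 (r+s) * M^s) :=
    add_nonneg (mul_nonneg (by linarith) (by positivity))
      (mul_nonneg (by linarith) (by positivity))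
  have hc2 : (0:ℝ) ≤ (r + (r-s)*M^s) * ((2+2*M^s) * (max 1 s * M^s)) :=
    mul_nonneg (by nlinarith) (by positivity)
  refine ⟨K4 + (r * max 1 r + (r-s) * (max 1 (r+s) * M^s))
      + (r + (r-s)*M^s) * ((2+2*M^s) * (max 1 s * M^s)), by linarith, ?_⟩
  intro a b hb hba haM
  have ha0 : 0 ≤ a := hb.trans hba
  have hab : 0 ≤ a - b := by linarith
  rcases eq_or_lt_of_le ha0 with rfl | ha
  · have hb0 : b = 0 := le_antisymm hba hb
    simp [hb0]
  have hE : (0:ℝ) ≤ a ^ (r-1) * (a - b) :=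
    mul_nonneg (Real.rpow_nonneg ha0 _) hab
  -- useful rpow facts
  have hrpadd : ∀ e : ℝ, a ^ e * a = a ^ (e+1) := fun e => (Real.rpow_add_one ha.ne' e).symm
  have hasM : a ^ s ≤ M ^ s := Real.rpow_le_rpow ha0 haM hs.le
  have haspos : 0 ≤ a ^ s := Real.rpow_nonneg ha0 s
  have har1 : (0:ℝ) ≤ a ^ (r-1) := Real.rpow_nonneg ha0 _
  have hsplit : a ^ (r+s-1) = a ^ (r-1) * a ^ s := by
    rw [← Real.rpow_add ha]; ring_nf
  rcases eq_or_lt_of_le hb with rfl | hbpos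
  · -- b = 0
    rw [hF'0]
    have habs : |F' a * a - 0 * 0| = |F' a| * a := by
      rw [mul_zero, sub_zero, abs_mul, abs_of_nonneg ha0]
    rw [habs]
    have h1 : |F' a| * a ≤ (K4 * a ^ (r-1)) * a :=
      mul_le_mul_of_nonneg_right (hk4 a ha0 haM) ha0
    have h2 : (K4 * a ^ (r-1)) * a = K4 * (a ^ (r-1) * (a - 0)) := by ring
    have e : (K4 + (r * max 1 r + (r-s) * (max 1 (r+s) * M^s))
        + (r + (r-s)*M^s) * ((2+2*M^s) * (max 1 s * M^s))) * (a ^ (r-1) * (a - 0))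
        = K4 * (a ^ (r-1) * (a - 0))
          + ((r * max 1 r + (r-s) * (max 1 (r+s) * M^s))
            + (r + (r-s)*M^s) * ((2+2*M^s) * (max 1 s * M^s))) * (a ^ (r-1) * (a - 0)) := by
      ring
    rw [e]
    have hpos : (0:ℝ) ≤ ((r * max 1 r + (r-s) * (max 1 (r+s) * M^s))
        + (r + (r-s)*M^s) * ((2+2*M^s) * (max 1 s * M^s))) * (a ^ (r-1) * (a - 0)) := by
      apply mul_nonneg (by linarith)
      simpa using hE
    linarith [h1, h2.symm.le]
  -- b > 0
  have hPa : F' a * a = (r * a^r + (r-s) * a^(r+s)) / (1 + a^s)^2 := by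
    rw [hF'f a ha, div_mul_eq_mul_div]
    congr 1
    rw [add_mul, mul_assoc, mul_assoc, hrpadd, hrpadd,
      show r - 1 + 1 = r by ring, show r + s - 1 + 1 = r + s by ring]
  have hPb : F' b * b = (r * b^r + (r-s) * b^(r+s)) / (1 + b^s)^2 := by
    rw [hF'f b hbpos, div_mul_eq_mul_div]
    congr 1
    rw [add_mul, mul_assoc, mul_assoc,
      (Real.rpow_add_one hbpos.ne' (r-1)).symm, (Real.rpow_add_one hbpos.ne' (r+s-1)).symm,
      show r - 1 + 1 = r by ring, show r + s - 1 + 1 = r + s by ring]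
  rw [hPa, hPb]
  have hbs : b ^ s ≤ M ^ s := Real.rpow_le_rpow hb (le_trans hba haM) hs.le
  have hbsn : 0 ≤ b ^ s := Real.rpow_nonneg hb s
  have hbrn : 0 ≤ b ^ r := Real.rpow_nonneg hb r
  have h0 := quot_sq_lipschitz (X := r * a^r + (r-s) * a^(r+s)) (Y := r * b^r + (r-s) * b^(r+s))
    haspos hbsn
  -- bound |X - Y|
  have hdr : (0:ℝ) ≤ a ^ r - b ^ r := rpow_diff_nonneg (by linarith) hb hba
  have hdrs : (0:ℝ) ≤ a ^ (r+s) - b ^ (r+s) := rpow_diff_nonneg (by linarith) hb hba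
  have h1 : a ^ r - b ^ r ≤ max 1 r * (a ^ (r-1) * (a-b)) :=
    rpow_diff_le (by linarith) hb hba
  have h2 : a ^ (r+s) - b ^ (r+s) ≤ max 1 (r+s) * (a ^ (r+s-1) * (a-b)) :=
    rpow_diff_le (by linarith) hb hba
  have h3 : a ^ (r+s-1) * (a - b) ≤ M^s * (a ^ (r-1) * (a-b)) := by
    rw [hsplit]
    calc a ^ (r-1) * a ^ s * (a-b) ≤ a ^ (r-1) * M ^ s * (a-b) :=
          mul_le_mul_of_nonneg_right (mul_le_mul_of_nonneg_left hasM har1) hab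
      _ = M^s * (a ^ (r-1) * (a-b)) := by ring
  have hm1 : (0:ℝ) ≤ max 1 (r+s) := le_trans zero_le_one (le_max_left _ _)
  have hXY : |r * a^r + (r-s) * a^(r+s) - (r * b^r + (r-s) * b^(r+s))|
      ≤ (r * max 1 r + (r-s) * (max 1 (r+s) * M^s)) * (a ^ (r-1) * (a-b)) := by
    have e : r * a^r + (r-s) * a^(r+s) - (r * b^r + (r-s) * b^(r+s))
        = r * (a^r - b^r) + (r-s) * (a^(r+s) - b^(r+s)) := by ring
    rw [e, abs_of_nonneg (by nlinarith)]
    have t1 : r * (a^r - b^r) ≤ r * (max 1 r * (a^(r-1)*(a-b))) :=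
      mul_le_mul_of_nonneg_left h1 (by linarith)
    have t2 : (r-s) * (a^(r+s) - b^(r+s))
        ≤ (r-s) * (max 1 (r+s) * (M^s * (a^(r-1)*(a-b)))) := by
      apply mul_le_mul_of_nonneg_left _ (by linarith)
      calc a^(r+s) - b^(r+s) ≤ max 1 (r+s) * (a^(r+s-1)*(a-b)) := h2
        _ ≤ max 1 (r+s) * (M^s * (a^(r-1)*(a-b))) := mul_le_mul_of_nonneg_left h3 hm1
    have e2 : (r * max 1 r + (r-s) * (max 1 (r+s) * M^s)) * (a ^ (r-1) * (a-b))
        = r * (max 1 r * (a^(r-1)*(a-b)))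
          + (r-s) * (max 1 (r+s) * (M^s * (a^(r-1)*(a-b)))) := by ring
    rw [e2]
    exact add_le_add t1 t2
  -- bound |Y| * ((2 + a^s + b^s) * |a^s - b^s|)
  have hY : |r * b^r + (r-s) * b^(r+s)| ≤ (r + (r-s)*M^s) * b ^ r := by
    have e : b ^ (r+s) = b ^ r * b ^ s := Real.rpow_add hbpos r s
    have hnn : (0:ℝ) ≤ r * b^r + (r-s) * b^(r+s) :=
      add_nonneg (mul_nonneg (by linarith) hbrn)
        (mul_nonneg (by linarith) (Real.rpow_nonneg hb _))
    rw [abs_of_nonneg hnn, e]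
    have t : (r-s)*(b^r*b^s) ≤ (r-s)*(b^r*M^s) :=
      mul_le_mul_of_nonneg_left (mul_le_mul_of_nonneg_left hbs hbrn) (by linarith)
    have e2 : (r + (r-s)*M^s)*b^r = r*b^r + (r-s)*(b^r*M^s) := by ring
    rw [e2]
    linarith [t]
  have hds : |a ^ s - b ^ s| = a ^ s - b ^ s :=
    abs_of_nonneg (rpow_diff_nonneg hs.le hb hba)
  have h2' : a ^ s - b ^ s ≤ max 1 s * (a ^ (s-1) * (a-b)) := rpow_diff_le hs hb hba
  have hfac : (2 + a^s + b^s) ≤ 2 + 2*M^s := by linarith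
  have hbra : b ^ r * (a ^ (s-1) * (a-b)) ≤ M ^ s * (a ^ (r-1) * (a-b)) := by
    have e1 : a ^ r * a ^ (s-1) = a ^ (r-1) * a ^ s := by
      rw [← Real.rpow_add ha, ← Real.rpow_add ha]; ring_nf
    have e2 : b ^ r ≤ a ^ r := Real.rpow_le_rpow hb hba (by linarith)
    have e4 : (0:ℝ) ≤ a ^ (s-1) := Real.rpow_nonneg ha0 _
    have e5 : b ^ r * a ^ (s-1) ≤ a ^ (r-1) * M ^ s := by
      calc b ^ r * a ^ (s-1) ≤ a ^ r * a ^ (s-1) := mul_le_mul_of_nonneg_right e2 e4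
        _ = a ^ (r-1) * a ^ s := e1
        _ ≤ a ^ (r-1) * M ^ s := mul_le_mul_of_nonneg_left hasM har1
    calc b ^ r * (a ^ (s-1) * (a-b)) = (b ^ r * a ^ (s-1)) * (a-b) := by ring
      _ ≤ (a ^ (r-1) * M ^ s) * (a-b) := mul_le_mul_of_nonneg_right e5 hab
      _ = M ^ s * (a ^ (r-1) * (a-b)) := by ring
  have hterm2 : |r * b^r + (r-s) * b^(r+s)| * ((2 + a^s + b^s) * |a ^ s - b ^ s|)
      ≤ (r + (r-s)*M^s) * ((2+2*M^s) * (max 1 s * M^s)) * (a ^ (r-1) * (a-b)) := by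
    rw [hds]
    have hrpos : (0:ℝ) ≤ r + (r-s)*M^s := add_nonneg (by linarith) (mul_nonneg (by linarith) hMs.le)
    have hz1 : (0:ℝ) ≤ (2 + a^s + b^s) := by linarith
    have hz2 : (0:ℝ) ≤ a ^ s - b ^ s := rpow_diff_nonneg hs.le hb hba
    have step2 : (2 + a^s + b^s) * (a ^ s - b ^ s)
        ≤ (2+2*M^s) * (max 1 s * (a ^ (s-1) * (a-b))) :=
      mul_le_mul hfac h2' hz2 (by positivity)
    have step3 : |r * b^r + (r-s) * b^(r+s)| * ((2 + a^s + b^s) * (a ^ s - b ^ s))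
        ≤ ((r + (r-s)*M^s) * b ^ r) * ((2+2*M^s) * (max 1 s * (a ^ (s-1) * (a-b)))) :=
      mul_le_mul hY step2 (mul_nonneg hz1 hz2) (mul_nonneg hrpos hbrn)
    have e : ((r + (r-s)*M^s) * b ^ r) * ((2+2*M^s) * (max 1 s * (a ^ (s-1) * (a-b))))
        = ((r + (r-s)*M^s) * ((2+2*M^s) * max 1 s)) * (b ^ r * (a ^ (s-1) * (a-b))) := by
      ring
    have step4 : ((r + (r-s)*M^s) * ((2+2*M^s) * max 1 s)) * (b ^ r * (a ^ (s-1) * (a-b)))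
        ≤ ((r + (r-s)*M^s) * ((2+2*M^s) * max 1 s)) * (M ^ s * (a ^ (r-1) * (a-b))) :=
      mul_le_mul_of_nonneg_left hbra
        (mul_nonneg hrpos (by positivity))
    calc |r * b^r + (r-s) * b^(r+s)| * ((2 + a^s + b^s) * (a ^ s - b ^ s))
        ≤ ((r + (r-s)*M^s) * b ^ r) * ((2+2*M^s) * (max 1 s * (a ^ (s-1) * (a-b)))) := step3
      _ = ((r + (r-s)*M^s) * ((2+2*M^s) * max 1 s)) * (b ^ r * (a ^ (s-1) * (a-b))) := e
      _ ≤ ((r + (r-s)*M^s) * ((2+2*M^s) * max 1 s)) * (M ^ s * (a ^ (r-1) * (a-b))) := step4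
      _ = (r + (r-s)*M^s) * ((2+2*M^s) * (max 1 s * M^s)) * (a ^ (r-1) * (a-b)) := by ring
  have hK4E : (0:ℝ) ≤ K4 * (a ^ (r-1) * (a-b)) := mul_nonneg hK4.le hE
  have efin : (K4 + (r * max 1 r + (r-s) * (max 1 (r+s) * M^s))
      + (r + (r-s)*M^s) * ((2+2*M^s) * (max 1 s * M^s))) * (a ^ (r-1) * (a - b))
      = K4 * (a ^ (r-1) * (a-b))
        + ((r * max 1 r + (r-s) * (max 1 (r+s) * M^s)) * (a ^ (r-1) * (a-b))
          + (r + (r-s)*M^s) * ((2+2*M^s) * (max 1 s * M^s)) * (a ^ (r-1) * (a-b))) := by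
    ring
  calc |(r * a^r + (r-s) * a^(r+s)) / (1 + a^s)^2 - (r * b^r + (r-s) * b^(r+s)) / (1 + b^s)^2|
      ≤ |r * a^r + (r-s) * a^(r+s) - (r * b^r + (r-s) * b^(r+s))|
        + |r * b^r + (r-s) * b^(r+s)| * ((2 + a^s + b^s) * |a ^ s - b ^ s|) := h0
    _ ≤ (r * max 1 r + (r-s) * (max 1 (r+s) * M^s)) * (a ^ (r-1) * (a-b))
        + (r + (r-s)*M^s) * ((2+2*M^s) * (max 1 s * M^s)) * (a ^ (r-1) * (a-b)) :=
        add_le_add hXY hterm2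
    _ ≤ _ := by rw [efin]; linarith
end

section
variable {r s M : ℝ}

private lemma key3 (hr : 1 < r) (hs : 0 < s) (hsr : s < r) (hM : 1 ≤ M)
    {F' : ℝ → ℝ}
    (hF'f : ∀ x : ℝ, 0 < x → F' x = (r * x ^ (r-1) + (r-s) * x ^ (r+s-1)) / (1 + x ^ s)^2)
    (hF'0 : F' 0 = 0) :
    ∃ K : ℝ, 0 < K ∧ ∀ a b : ℝ, 0 ≤ b → b ≤ a → a ≤ M →
      a * |F' a - F' b| ≤ K * (a ^ (r-1) * (a - b)) := by
  obtain ⟨K4, hK4, hk4⟩ := key4 hr hs hsr hM hF'f hF'0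
  have hMs : (0:ℝ) < M ^ s := Real.rpow_pos_of_pos (by linarith) s
  have hrpos : (0:ℝ) ≤ r + (r-s)*M^s := add_nonneg (by linarith) (mul_nonneg (by linarith) hMs.le)
  have hc1 : (0:ℝ) ≤ r * max 1 (r-1) + (r-s) * (max 1 (r+s-1) * M^s) :=
    add_nonneg (mul_nonneg (by linarith) (by positivity))
      (mul_nonneg (by linarith) (by positivity))
  have hc2 : (0:ℝ) ≤ (r + (r-s)*M^s) * ((2+2*M^s) * (max 1 s * M^s)) :=
    mul_nonneg hrpos (by positivity)
  refine ⟨K4 + (r * max 1 (r-1) + (r-s) * (max 1 (r+s-1) * M^s))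
      + (r + (r-s)*M^s) * ((2+2*M^s) * (max 1 s * M^s)), by linarith, ?_⟩
  intro a b hb hba haM
  have ha0 : 0 ≤ a := hb.trans hba
  have hab : 0 ≤ a - b := by linarith
  rcases eq_or_lt_of_le ha0 with rfl | ha
  · have hb0 : b = 0 := le_antisymm hba hb
    simp [hb0]
  have hE : (0:ℝ) ≤ a ^ (r-1) * (a - b) :=
    mul_nonneg (Real.rpow_nonneg ha0 _) hab
  have hrpadd : ∀ e : ℝ, a ^ e * a = a ^ (e+1) := fun e => (Real.rpow_add_one ha.ne' e).symm
  have hasM : a ^ s ≤ M ^ s := Real.rpow_le_rpow ha0 haM hs.le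
  have haspos : 0 ≤ a ^ s := Real.rpow_nonneg ha0 s
  have har1 : (0:ℝ) ≤ a ^ (r-1) := Real.rpow_nonneg ha0 _
  rcases eq_or_lt_of_le hb with rfl | hbpos
  · -- b = 0
    rw [hF'0, sub_zero]
    have h1 : a * |F' a| ≤ a * (K4 * a ^ (r-1)) :=
      mul_le_mul_of_nonneg_left (hk4 a ha0 haM) ha0
    have h2 : a * (K4 * a ^ (r-1)) = K4 * (a ^ (r-1) * (a - 0)) := by ring
    have hpos : (0:ℝ) ≤ ((r * max 1 (r-1) + (r-s) * (max 1 (r+s-1) * M^s))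
        + (r + (r-s)*M^s) * ((2+2*M^s) * (max 1 s * M^s))) * (a ^ (r-1) * (a - 0)) := by
      apply mul_nonneg (by linarith)
      simpa using hE
    have efin : (K4 + (r * max 1 (r-1) + (r-s) * (max 1 (r+s-1) * M^s))
        + (r + (r-s)*M^s) * ((2+2*M^s) * (max 1 s * M^s))) * (a ^ (r-1) * (a - 0))
        = K4 * (a ^ (r-1) * (a - 0))
          + ((r * max 1 (r-1) + (r-s) * (max 1 (r+s-1) * M^s))
            + (r + (r-s)*M^s) * ((2+2*M^s) * (max 1 s * M^s))) * (a ^ (r-1) * (a - 0)) := by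
      ring
    rw [efin]
    linarith [h1, h2.le]
  -- b > 0
  have hbs : b ^ s ≤ M ^ s := Real.rpow_le_rpow hb (le_trans hba haM) hs.le
  have hbsn : 0 ≤ b ^ s := Real.rpow_nonneg hb s
  have hbr1n : 0 ≤ b ^ (r-1) := Real.rpow_nonneg hb _
  have h0 : |F' a - F' b| ≤ |r * a^(r-1) + (r-s) * a^(r+s-1) - (r * b^(r-1) + (r-s) * b^(r+s-1))|
      + |r * b^(r-1) + (r-s) * b^(r+s-1)| * ((2 + a^s + b^s) * |a ^ s - b ^ s|) := by
    rw [hF'f a ha, hF'f b hbpos]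
    exact quot_sq_lipschitz haspos hbsn
  have hmul := mul_le_mul_of_nonneg_left h0 ha0
  -- first piece
  have hd1 : (0:ℝ) ≤ a ^ (r-1) - b ^ (r-1) := rpow_diff_nonneg (by linarith) hb hba
  have hd2 : (0:ℝ) ≤ a ^ (r+s-1) - b ^ (r+s-1) := rpow_diff_nonneg (by linarith) hb hba
  have h1 : a ^ (r-1) - b ^ (r-1) ≤ max 1 (r-1) * (a ^ (r-1-1) * (a-b)) :=
    rpow_diff_le (by linarith) hb hba
  have h2 : a ^ (r+s-1) - b ^ (r+s-1) ≤ max 1 (r+s-1) * (a ^ (r+s-1-1) * (a-b)) :=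
    rpow_diff_le (by linarith) hb hba
  have ear : a ^ (r-1-1) * a = a ^ (r-1) := by
    rw [hrpadd, show r-1-1+1 = r-1 by ring]
  have ears : a ^ (r+s-1-1) * a = a ^ (r+s-1) := by
    rw [hrpadd, show r+s-1-1+1 = r+s-1 by ring]
  have esplit : a ^ (r+s-1) = a ^ (r-1) * a ^ s := by
    rw [← Real.rpow_add ha]; ring_nf
  have hXYa : a * |r * a^(r-1) + (r-s) * a^(r+s-1) - (r * b^(r-1) + (r-s) * b^(r+s-1))|
      ≤ (r * max 1 (r-1) + (r-s) * (max 1 (r+s-1) * M^s)) * (a ^ (r-1) * (a-b)) := by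
    have e : r * a^(r-1) + (r-s) * a^(r+s-1) - (r * b^(r-1) + (r-s) * b^(r+s-1))
        = r * (a^(r-1) - b^(r-1)) + (r-s) * (a^(r+s-1) - b^(r+s-1)) := by ring
    rw [e, abs_of_nonneg (by nlinarith)]
    have t1 : a * (a ^ (r-1) - b ^ (r-1)) ≤ max 1 (r-1) * (a ^ (r-1) * (a-b)) := by
      calc a * (a ^ (r-1) - b ^ (r-1)) ≤ a * (max 1 (r-1) * (a ^ (r-1-1) * (a-b))) :=
            mul_le_mul_of_nonneg_left h1 ha0
        _ = max 1 (r-1) * ((a ^ (r-1-1) * a) * (a-b)) := by ring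
        _ = max 1 (r-1) * (a ^ (r-1) * (a-b)) := by rw [ear]
    have t2 : a * (a ^ (r+s-1) - b ^ (r+s-1)) ≤ max 1 (r+s-1) * (M^s * (a ^ (r-1) * (a-b))) := by
      calc a * (a ^ (r+s-1) - b ^ (r+s-1)) ≤ a * (max 1 (r+s-1) * (a ^ (r+s-1-1) * (a-b))) :=
            mul_le_mul_of_nonneg_left h2 ha0
        _ = max 1 (r+s-1) * ((a ^ (r+s-1-1) * a) * (a-b)) := by ring
        _ = max 1 (r+s-1) * (a ^ (r+s-1) * (a-b)) := by rw [ears]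
        _ = max 1 (r+s-1) * ((a ^ (r-1) * a ^ s) * (a-b)) := by rw [esplit]
        _ ≤ max 1 (r+s-1) * ((a ^ (r-1) * M ^ s) * (a-b)) := by
            apply mul_le_mul_of_nonneg_left _ (le_trans zero_le_one (le_max_left _ _))
            exact mul_le_mul_of_nonneg_right (mul_le_mul_of_nonneg_left hasM har1) hab
        _ = max 1 (r+s-1) * (M^s * (a ^ (r-1) * (a-b))) := by ring
    have efin : (r * max 1 (r-1) + (r-s) * (max 1 (r+s-1) * M^s)) * (a ^ (r-1) * (a-b))
        = r * (max 1 (r-1) * (a ^ (r-1) * (a-b)))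
          + (r-s) * (max 1 (r+s-1) * (M^s * (a ^ (r-1) * (a-b)))) := by ring
    have elhs : a * (r * (a^(r-1) - b^(r-1)) + (r-s) * (a^(r+s-1) - b^(r+s-1)))
        = r * (a * (a^(r-1) - b^(r-1))) + (r-s) * (a * (a^(r+s-1) - b^(r+s-1))) := by ring
    rw [elhs, efin]
    exact add_le_add (mul_le_mul_of_nonneg_left t1 (by linarith))
      (mul_le_mul_of_nonneg_left t2 (by linarith))
  -- second piece
  have hXb : |r * b^(r-1) + (r-s) * b^(r+s-1)| ≤ (r + (r-s)*M^s) * b ^ (r-1) := by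
    have e : b ^ (r+s-1) = b ^ (r-1) * b ^ s := by
      rw [← Real.rpow_add hbpos]; ring_nf
    have hnn : (0:ℝ) ≤ r * b^(r-1) + (r-s) * b^(r+s-1) :=
      add_nonneg (mul_nonneg (by linarith) hbr1n)
        (mul_nonneg (by linarith) (Real.rpow_nonneg hb _))
    rw [abs_of_nonneg hnn, e]
    have t : (r-s)*(b^(r-1)*b^s) ≤ (r-s)*(b^(r-1)*M^s) :=
      mul_le_mul_of_nonneg_left (mul_le_mul_of_nonneg_left hbs hbr1n) (by linarith)
    have e2 : (r + (r-s)*M^s)*b^(r-1) = r*b^(r-1) + (r-s)*(b^(r-1)*M^s) := by ring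
    rw [e2]
    linarith [t]
  have hds : |a ^ s - b ^ s| = a ^ s - b ^ s :=
    abs_of_nonneg (rpow_diff_nonneg hs.le hb hba)
  have h2' : a ^ s - b ^ s ≤ max 1 s * (a ^ (s-1) * (a-b)) := rpow_diff_le hs hb hba
  have hfac : (2 + a^s + b^s) ≤ 2 + 2*M^s := by linarith
  have hz1 : (0:ℝ) ≤ (2 + a^s + b^s) := by linarith
  have hz2 : (0:ℝ) ≤ a ^ s - b ^ s := rpow_diff_nonneg hs.le hb hba
  have step2 : (2 + a^s + b^s) * (a ^ s - b ^ s)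
      ≤ (2+2*M^s) * (max 1 s * (a ^ (s-1) * (a-b))) :=
    mul_le_mul hfac h2' hz2 (by positivity)
  have hterm2 : a * (|r * b^(r-1) + (r-s) * b^(r+s-1)| * ((2 + a^s + b^s) * |a ^ s - b ^ s|))
      ≤ (r + (r-s)*M^s) * ((2+2*M^s) * (max 1 s * M^s)) * (a ^ (r-1) * (a-b)) := by
    rw [hds]
    have step3 : |r * b^(r-1) + (r-s) * b^(r+s-1)| * ((2 + a^s + b^s) * (a ^ s - b ^ s))
        ≤ ((r + (r-s)*M^s) * b ^ (r-1)) * ((2+2*M^s) * (max 1 s * (a ^ (s-1) * (a-b)))) :=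
      mul_le_mul hXb step2 (mul_nonneg hz1 hz2) (mul_nonneg hrpos hbr1n)
    have step3' := mul_le_mul_of_nonneg_left step3 ha0
    have eas : a ^ (s-1) * a = a ^ s := by
      rw [hrpadd, show s-1+1 = s by ring]
    have e : a * (((r + (r-s)*M^s) * b ^ (r-1)) * ((2+2*M^s) * (max 1 s * (a ^ (s-1) * (a-b)))))
        = ((r + (r-s)*M^s) * ((2+2*M^s) * max 1 s)) * ((b ^ (r-1) * (a ^ (s-1) * a)) * (a-b)) := by
      ring
    have ebound : (b ^ (r-1) * (a ^ (s-1) * a)) * (a-b) ≤ (a ^ (r-1) * M ^ s) * (a-b) := by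
      apply mul_le_mul_of_nonneg_right _ hab
      rw [eas]
      exact mul_le_mul (Real.rpow_le_rpow hb hba (by linarith)) hasM haspos har1
    calc a * (|r * b^(r-1) + (r-s) * b^(r+s-1)| * ((2 + a^s + b^s) * (a ^ s - b ^ s)))
        ≤ a * (((r + (r-s)*M^s) * b ^ (r-1)) * ((2+2*M^s) * (max 1 s * (a ^ (s-1) * (a-b))))) :=
          step3'
      _ = ((r + (r-s)*M^s) * ((2+2*M^s) * max 1 s)) * ((b ^ (r-1) * (a ^ (s-1) * a)) * (a-b)) := e
      _ ≤ ((r + (r-s)*M^s) * ((2+2*M^s) * max 1 s)) * ((a ^ (r-1) * M ^ s) * (a-b)) :=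
          mul_le_mul_of_nonneg_left ebound (mul_nonneg hrpos (by positivity))
      _ = (r + (r-s)*M^s) * ((2+2*M^s) * (max 1 s * M^s)) * (a ^ (r-1) * (a-b)) := by ring
  have hK4E : (0:ℝ) ≤ K4 * (a ^ (r-1) * (a-b)) := mul_nonneg hK4.le hE
  have emul : a * (|r * a^(r-1) + (r-s) * a^(r+s-1) - (r * b^(r-1) + (r-s) * b^(r+s-1))|
      + |r * b^(r-1) + (r-s) * b^(r+s-1)| * ((2 + a^s + b^s) * |a ^ s - b ^ s|))
      = a * |r * a^(r-1) + (r-s) * a^(r+s-1) - (r * b^(r-1) + (r-s) * b^(r+s-1))|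
        + a * (|r * b^(r-1) + (r-s) * b^(r+s-1)| * ((2 + a^s + b^s) * |a ^ s - b ^ s|)) := by
    ring
  rw [emul] at hmul
  have efin : (K4 + (r * max 1 (r-1) + (r-s) * (max 1 (r+s-1) * M^s))
      + (r + (r-s)*M^s) * ((2+2*M^s) * (max 1 s * M^s))) * (a ^ (r-1) * (a - b))
      = K4 * (a ^ (r-1) * (a-b))
        + ((r * max 1 (r-1) + (r-s) * (max 1 (r+s-1) * M^s)) * (a ^ (r-1) * (a-b))
          + (r + (r-s)*M^s) * ((2+2*M^s) * (max 1 s * M^s)) * (a ^ (r-1) * (a-b))) := by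
    ring
  rw [efin]
  linarith [hmul, hXYa, hterm2]
end

set_option maxHeartbeats 2000000 in
theorem stmt_12 (p q : ℝ) (hp : 10 / 3 < p) (hq : 0 < q) (hqp : q < p)
    (F F' : ℝ → ℝ)
    (hF : ∀ x : ℝ, 0 ≤ x → F x = x ^ (p / 2) / (1 + x ^ ((p - q) / 2)))
    (hF' : ∀ x : ℝ, 0 < x → HasDerivAt F (F' x) x)
    (hF'0 : F' 0 = 0)
    (f₀ : ℝ → ℂ → ℂ)
    (hf₀ : ∀ (R : ℝ) (v : ℂ), f₀ R v =
      (F (‖(R : ℂ) + v‖ ^ 2) : ℂ) * ((R : ℂ) + v)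
        - (F (R ^ 2) : ℂ) * (R : ℂ)
        - ((F (R ^ 2) + F' (R ^ 2) * R ^ 2 : ℝ) : ℂ) * v
        - ((F' (R ^ 2) * R ^ 2 : ℝ) : ℂ) * (starRingEnd ℂ) v) :
    ∀ R₀ : ℝ, 0 < R₀ → ∃ C : ℝ, 0 < C ∧
      ∀ R : ℝ, 0 ≤ R → R ≤ R₀ →
        ∀ v₁ v₂ : ℂ, ‖v₁‖ ≤ 1 → ‖v₂‖ ≤ 1 →
          ‖f₀ R v₁ - f₀ R v₂‖
            ≤ C * (R * (‖v₁‖ + ‖v₂‖)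
                + ‖v₁‖ ^ p + ‖v₂‖ ^ p) * ‖v₁ - v₂‖ := by
  intro R₀ hR₀
  set r := p / 2 with hr_def
  set s := (p - q) / 2 with hs_def
  have hr1 : 1 < r := by rw [hr_def]; linarith
  have hs0 : 0 < s := by rw [hs_def]; linarith
  have hsr : s < r := by rw [hs_def, hr_def]; linarith
  set M := (R₀ + 2) ^ 2 with hM_def
  have hM1 : 1 ≤ M := by nlinarith
  -- F' formula
  have hF'eq : ∀ x : ℝ, 0 < x →
      F' x = (r * x ^ (r-1) + (r-s) * x ^ (r+s-1)) / (1 + x ^ s)^2 := by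
    intro x hx
    have hxs : (0:ℝ) ≤ x ^ s := Real.rpow_nonneg hx.le s
    have hden : (0:ℝ) < 1 + x ^ s := by linarith
    have hnum : HasDerivAt (fun y : ℝ => y ^ r) (r * x ^ (r-1)) x :=
      Real.hasDerivAt_rpow_const (Or.inl hx.ne')
    have hden' : HasDerivAt (fun y : ℝ => 1 + y ^ s) (s * x ^ (s-1)) x :=
      (Real.hasDerivAt_rpow_const (Or.inl hx.ne')).const_add 1
    have hdiv := hnum.div hden' hden.ne'
    have hev : F =ᶠ[nhds x] (fun y : ℝ => y ^ r / (1 + y ^ s)) := by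
      filter_upwards [isOpen_Ioi.mem_nhds hx] with y hy
      exact hF y (le_of_lt hy)
    have hdivF : HasDerivAt F
        ((r * x^(r-1) * (1 + x^s) - x^r * (s * x^(s-1))) / (1 + x^s)^2) x :=
      hdiv.congr_of_eventuallyEq hev
    have huni := (hF' x hx).unique hdivF
    rw [huni]
    congr 1
    have e1 : x ^ r * x ^ (s-1) = x ^ (r-1) * x ^ s := by
      rw [← Real.rpow_add hx, ← Real.rpow_add hx]; ring_nf
    have e2 : x ^ (r+s-1) = x ^ (r-1) * x ^ s := by
      rw [← Real.rpow_add hx]; ring_nf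
    rw [e2]
    linear_combination (-s) * e1
  -- continuity of F on [0, ∞)
  have hFcont : ContinuousOn F (Set.Ici 0) := by
    have hcont : ContinuousOn (fun x : ℝ => x ^ r / (1 + x ^ s)) (Set.Ici 0) := by
      intro x hx
      apply ContinuousWithinAt.div
      · exact (Real.continuousAt_rpow_const x r (Or.inr (by linarith))).continuousWithinAt
      · exact continuousWithinAt_const.add
          (Real.continuousAt_rpow_const x s (Or.inr hs0.le)).continuousWithinAt
      · have : (0:ℝ) ≤ x ^ s := Real.rpow_nonneg hx s
        intro h; linarith [h]
    exact hcont.congr (fun y hy => hF y hy)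
  -- mean value
  have hslope : ∀ a₁ a₂ : ℝ, 0 ≤ a₁ → 0 ≤ a₂ → ∃ ξ : ℝ,
      min a₁ a₂ ≤ ξ ∧ ξ ≤ max a₁ a₂ ∧ 0 ≤ ξ ∧ F a₁ - F a₂ = F' ξ * (a₁ - a₂) := by
    intro a₁ a₂ h₁ h₂
    rcases lt_trichotomy a₁ a₂ with h | h | h
    · obtain ⟨c, hc, hc'⟩ := exists_hasDerivAt_eq_slope F F' h
        (hFcont.mono (fun y hy => le_trans h₁ hy.1))
        (fun y hy => hF' y (lt_of_le_of_lt h₁ hy.1))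
      rw [eq_div_iff (sub_ne_zero.2 h.ne')] at hc'
      exact ⟨c, (min_le_left _ _).trans hc.1.le, hc.2.le.trans (le_max_right _ _),
        h₁.trans hc.1.le, by linear_combination hc'⟩
    · exact ⟨a₁, min_le_left _ _, le_max_left _ _, h₁, by rw [h]; ring⟩
    · obtain ⟨c, hc, hc'⟩ := exists_hasDerivAt_eq_slope F F' h
        (hFcont.mono (fun y hy => le_trans h₂ hy.1))
        (fun y hy => hF' y (lt_of_le_of_lt h₂ hy.1))
      rw [eq_div_iff (sub_ne_zero.2 h.ne')] at hc'
      exact ⟨c, (min_le_right _ _).trans hc.1.le, hc.2.le.trans (le_max_left _ _),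
        h₂.trans hc.1.le, by linear_combination -hc'⟩
  -- the four keys
  have hFf : ∀ x : ℝ, 0 ≤ x → F x = x ^ r / (1 + x ^ s) := hF
  obtain ⟨K1, hK1, hk1⟩ := key1 hr1 hs0 hsr hM1 hFf
  obtain ⟨K2, hK2, hk2⟩ := key2 hr1 hs0 hsr hM1 hF'eq hF'0
  obtain ⟨K3, hK3, hk3⟩ := key3 hr1 hs0 hsr hM1 hF'eq hF'0
  obtain ⟨K4, hK4, hk4⟩ := key4 hr1 hs0 hsr hM1 hF'eq hF'0
  -- symmetrized wrappers
  have W : ∀ (G : ℝ → ℝ) (KG : ℝ), 0 ≤ KG →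
      (∀ a b : ℝ, 0 ≤ b → b ≤ a → a ≤ M → |G a - G b| ≤ KG * (a ^ (r-1) * (a - b))) →
      ∀ a b X : ℝ, 0 ≤ a → 0 ≤ b → a ≤ X → b ≤ X → X ≤ M →
        |G a - G b| ≤ KG * (X ^ (r-1) * |a - b|) := by
    intro G KG hKG hG a b X ha hb haX hbX hXM
    rcases le_total b a with h | h
    · have h1 := hG a b hb h (haX.trans hXM)
      have h2 : a ^ (r-1) ≤ X ^ (r-1) := Real.rpow_le_rpow ha haX (by linarith)
      calc |G a - G b| ≤ KG * (a ^ (r-1) * (a - b)) := h1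
        _ ≤ KG * (X ^ (r-1) * |a - b|) := by
            apply mul_le_mul_of_nonneg_left _ hKG
            rw [abs_of_nonneg (by linarith : (0:ℝ) ≤ a - b)]
            exact mul_le_mul_of_nonneg_right h2 (by linarith)
    · have h1 := hG b a ha h (hbX.trans hXM)
      have h2 : b ^ (r-1) ≤ X ^ (r-1) := Real.rpow_le_rpow hb hbX (by linarith)
      calc |G a - G b| = |G b - G a| := abs_sub_comm _ _
        _ ≤ KG * (b ^ (r-1) * (b - a)) := h1
        _ ≤ KG * (X ^ (r-1) * |a - b|) := by
            apply mul_le_mul_of_nonneg_left _ hKG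
            rw [abs_sub_comm, abs_of_nonneg (by linarith : (0:ℝ) ≤ b - a)]
            exact mul_le_mul_of_nonneg_right h2 (by linarith)
  have W3 : ∀ x y X : ℝ, 0 ≤ x → 0 ≤ y → x ≤ X → y ≤ X → X ≤ M →
      y * |F' x - F' y| ≤ K3 * (X ^ (r-1) * |x - y|) := by
    intro x y X hx hy hxX hyX hXM
    rcases le_total y x with h | h
    · have h1 := hk3 x y hy h (hxX.trans hXM)
      have h2 : x ^ (r-1) ≤ X ^ (r-1) := Real.rpow_le_rpow hx hxX (by linarith)
      calc y * |F' x - F' y| ≤ x * |F' x - F' y| :=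
            mul_le_mul_of_nonneg_right h (abs_nonneg _)
        _ ≤ K3 * (x ^ (r-1) * (x - y)) := h1
        _ ≤ K3 * (X ^ (r-1) * |x - y|) := by
            apply mul_le_mul_of_nonneg_left _ hK3.le
            rw [abs_of_nonneg (by linarith : (0:ℝ) ≤ x - y)]
            exact mul_le_mul_of_nonneg_right h2 (by linarith)
    · have h1 := hk3 y x hx h (hyX.trans hXM)
      have h2 : y ^ (r-1) ≤ X ^ (r-1) := Real.rpow_le_rpow hy hyX (by linarith)
      calc y * |F' x - F' y| = y * |F' y - F' x| := by rw [abs_sub_comm]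
        _ ≤ K3 * (y ^ (r-1) * (y - x)) := h1
        _ ≤ K3 * (X ^ (r-1) * |x - y|) := by
            apply mul_le_mul_of_nonneg_left _ hK3.le
            rw [abs_sub_comm, abs_of_nonneg (by linarith : (0:ℝ) ≤ y - x)]
            exact mul_le_mul_of_nonneg_right h2 (by linarith)
  have W4 : ∀ x X : ℝ, 0 ≤ x → x ≤ X → X ≤ M → |F' x| ≤ K4 * X ^ (r-1) := by
    intro x X hx hxX hXM
    calc |F' x| ≤ K4 * x ^ (r-1) := hk4 x hx (hxX.trans hXM)
      _ ≤ K4 * X ^ (r-1) := mul_le_mul_of_nonneg_left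
          (Real.rpow_le_rpow hx hxX (by linarith)) hK4.le
  -- the constant
  set Ktot := 2*(K1+K2+K3+4*K4) with hKtot_def
  have hKtot : 0 < Ktot := by rw [hKtot_def]; linarith
  have h2p1 : (0:ℝ) < (2:ℝ)^(p-1) := Real.rpow_pos_of_pos two_pos _
  have hR0p : (0:ℝ) < R₀^(p-2) := Real.rpow_pos_of_pos hR₀ _
  have h2pp : (0:ℝ) < (2:ℝ)^p := Real.rpow_pos_of_pos two_pos _
  have hCpos : 0 < Ktot * 2^(p-1) * (R₀^(p-2) + 2^p) + 1 := by
    have := mul_pos (mul_pos hKtot h2p1) (by linarith : (0:ℝ) < R₀^(p-2) + 2^p)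
    linarith
  refine ⟨Ktot * 2^(p-1) * (R₀^(p-2) + 2^p) + 1, hCpos, ?_⟩
  intro R hR hRR₀ v₁ v₂ hv₁ hv₂
  by_cases hvv : v₁ = v₂
  · rw [hvv, sub_self, sub_self, norm_zero]
    simp
  -- main case
  set u₁ := ‖v₁‖ with hu₁_def
  set u₂ := ‖v₂‖ with hu₂_def
  set dd := ‖v₁ - v₂‖ with hdd_def
  have hdd0 : 0 < dd := by
    rw [hdd_def]
    exact norm_pos_iff.2 (sub_ne_zero.2 hvv)
  have hu₁0 : 0 ≤ u₁ := norm_nonneg _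
  have hu₂0 : 0 ≤ u₂ := norm_nonneg _
  set u := u₁ + u₂ with hu_def
  have hdd_u : dd ≤ u := by
    rw [hdd_def, hu_def, hu₁_def, hu₂_def]
    simpa using norm_sub_le v₁ v₂
  have hu0 : 0 < u := lt_of_lt_of_le hdd0 hdd_u
  have hu2 : u ≤ 2 := by rw [hu_def]; linarith
  set z₁ := (R:ℂ) + v₁ with hz₁_def
  set z₂ := (R:ℂ) + v₂ with hz₂_def
  set a₁ := ‖z₁‖ ^ 2 with ha₁_def
  set a₂ := ‖z₂‖ ^ 2 with ha₂_def
  set b := R ^ 2 with hb_def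
  have ha₁0 : 0 ≤ a₁ := by rw [ha₁_def]; positivity
  have ha₂0 : 0 ≤ a₂ := by rw [ha₂_def]; positivity
  have hb0 : 0 ≤ b := by rw [hb_def]; positivity
  have habsz₁ : ‖z₁‖ ≤ R + u₁ := by
    rw [hz₁_def]
    calc ‖(R:ℂ) + v₁‖ ≤ ‖(R:ℂ)‖ + u₁ := norm_add_le _ _
      _ = R + u₁ := by rw [Complex.norm_real, Real.norm_eq_abs, abs_of_nonneg hR]
  have habsz₂ : ‖z₂‖ ≤ R + u₂ := by
    rw [hz₂_def]
    calc ‖(R:ℂ) + v₂‖ ≤ ‖(R:ℂ)‖ + u₂ := norm_add_le _ _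
      _ = R + u₂ := by rw [Complex.norm_real, Real.norm_eq_abs, abs_of_nonneg hR]
  set X := (R + u) ^ 2 with hX_def
  have hRu0 : 0 < R + u := by linarith
  have hX0 : 0 ≤ X := by rw [hX_def]; positivity
  have hXM : X ≤ M := by
    rw [hX_def, hM_def]
    have h1 : R + u ≤ R₀ + 2 := by linarith
    exact pow_le_pow_left₀ (by linarith) h1 2
  have ha₁X : a₁ ≤ X := by
    rw [ha₁_def, hX_def]
    exact pow_le_pow_left₀ (norm_nonneg _) (by linarith [habsz₁]) 2
  have ha₂X : a₂ ≤ X := by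
    rw [ha₂_def, hX_def]
    exact pow_le_pow_left₀ (norm_nonneg _) (by linarith [habsz₂]) 2
  have hbX : b ≤ X := by
    rw [hb_def, hX_def]
    exact pow_le_pow_left₀ hR (by linarith) 2
  -- |a - b| bounds
  have hzR₁ : |‖z₁‖ - R| ≤ u₁ := by
    have h := abs_norm_sub_norm_le z₁ ((R:ℂ))
    rw [Complex.norm_real, Real.norm_eq_abs, abs_of_nonneg hR] at h
    have e : z₁ - (R:ℂ) = v₁ := by rw [hz₁_def]; ring
    rw [e] at h
    exact h
  have hzR₂ : |‖z₂‖ - R| ≤ u₂ := by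
    have h := abs_norm_sub_norm_le z₂ ((R:ℂ))
    rw [Complex.norm_real, Real.norm_eq_abs, abs_of_nonneg hR] at h
    have e : z₂ - (R:ℂ) = v₂ := by rw [hz₂_def]; ring
    rw [e] at h
    exact h
  have ha₁b : |a₁ - b| ≤ (2*R + u) * u := by
    have e : a₁ - b = (‖z₁‖ - R) * (‖z₁‖ + R) := by
      rw [ha₁_def, hb_def]; ring
    rw [e, abs_mul, abs_of_nonneg (by positivity : (0:ℝ) ≤ ‖z₁‖ + R)]
    calc |‖z₁‖ - R| * (‖z₁‖ + R) ≤ u₁ * (2*R + u) := by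
          apply mul_le_mul hzR₁ (by linarith [habsz₁]) (by positivity) hu₁0
      _ ≤ (2*R + u) * u := by
          have h := mul_le_mul_of_nonneg_right (by linarith : u₁ ≤ u)
            (by linarith : (0:ℝ) ≤ 2*R + u)
          linarith [h]
  have ha₂b : |a₂ - b| ≤ (2*R + u) * u := by
    have e : a₂ - b = (‖z₂‖ - R) * (‖z₂‖ + R) := by
      rw [ha₂_def, hb_def]; ring
    rw [e, abs_mul, abs_of_nonneg (by positivity : (0:ℝ) ≤ ‖z₂‖ + R)]
    calc |‖z₂‖ - R| * (‖z₂‖ + R) ≤ u₂ * (2*R + u) := by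
          apply mul_le_mul hzR₂ (by linarith [habsz₂]) (by positivity) hu₂0
      _ ≤ (2*R + u) * u := by
          have h := mul_le_mul_of_nonneg_right (by linarith : u₂ ≤ u)
            (by linarith : (0:ℝ) ≤ 2*R + u)
          linarith [h]
  obtain ⟨ξ, hξmin, hξmax, hξ0, hξeq⟩ := hslope a₁ a₂ ha₁0 ha₂0
  have hξX : ξ ≤ X := hξmax.trans (max_le ha₁X ha₂X)
  have hξb : |ξ - b| ≤ (2*R + u) * u := by
    rw [abs_le] at ha₁b ha₂b ⊢
    constructor
    · have h1 : b - (2*R+u)*u ≤ min a₁ a₂ :=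
        le_min (by linarith [ha₁b.1]) (by linarith [ha₂b.1])
      linarith [hξmin]
    · have h2 : max a₁ a₂ ≤ b + (2*R+u)*u :=
        max_le (by linarith [ha₁b.2]) (by linarith [ha₂b.2])
      linarith [hξmax]
  have ha₂ξ : |a₂ - ξ| ≤ 2*((2*R + u) * u) := by
    calc |a₂ - ξ| ≤ |a₂ - b| + |b - ξ| := abs_sub_le _ _ _
      _ ≤ 2*((2*R + u) * u) := by rw [abs_sub_comm b ξ]; linarith
  -- the identity
  have hXiC : ((F a₁ : ℝ) : ℂ) = ((F a₂ : ℝ) : ℂ)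
      + ((F' ξ : ℝ):ℂ) * (((a₁:ℝ):ℂ) - ((a₂:ℝ):ℂ)) := by
    have h := congrArg (fun t : ℝ => (t : ℂ)) hξeq
    push_cast at h
    linear_combination h
  have hA1 : ((a₁ : ℝ) : ℂ) = z₁ * ((R:ℂ) + (starRingEnd ℂ) v₁) := by
    calc ((a₁ : ℝ) : ℂ) = ((Complex.normSq z₁ : ℝ) : ℂ) := by rw [ha₁_def, Complex.sq_norm]
      _ = z₁ * (starRingEnd ℂ) z₁ := (Complex.mul_conj z₁).symm
      _ = z₁ * ((R:ℂ) + (starRingEnd ℂ) v₁) := by rw [hz₁_def, map_add, Complex.conj_ofReal]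
  have hA2 : ((a₂ : ℝ) : ℂ) = z₂ * ((R:ℂ) + (starRingEnd ℂ) v₂) := by
    calc ((a₂ : ℝ) : ℂ) = ((Complex.normSq z₂ : ℝ) : ℂ) := by rw [ha₂_def, Complex.sq_norm]
      _ = z₂ * (starRingEnd ℂ) z₂ := (Complex.mul_conj z₂).symm
      _ = z₂ * ((R:ℂ) + (starRingEnd ℂ) v₂) := by rw [hz₂_def, map_add, Complex.conj_ofReal]
  have hid : f₀ R v₁ - f₀ R v₂
      = ((F a₁ - F b : ℝ) : ℂ) * (v₁ - v₂)
        + ((F' ξ * a₂ - F' b * b : ℝ) : ℂ) * (v₁ - v₂)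
        + (((F' ξ : ℝ) : ℂ) * z₂^2 - ((F' b * b : ℝ) : ℂ))
            * ((starRingEnd ℂ) v₁ - (starRingEnd ℂ) v₂)
        + ((F' ξ : ℝ):ℂ) * ((v₁ - v₂) * ((starRingEnd ℂ) v₁ - (starRingEnd ℂ) v₂)) * z₂ := by
    rw [hf₀ R v₁, hf₀ R v₂, ← hz₁_def, ← hz₂_def, ← ha₁_def, ← ha₂_def, ← hb_def]
    push_cast
    linear_combination hXiC * ((R:ℂ) + v₂) + ((F' ξ:ℝ):ℂ) * ((R:ℂ) + v₂) * hA1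
      - ((F' ξ:ℝ):ℂ) * ((R:ℂ) + v₁) * hA2
  -- triangle inequality
  have htri : ‖f₀ R v₁ - f₀ R v₂‖
      ≤ |F a₁ - F b| * dd + |F' ξ * a₂ - F' b * b| * dd
        + ‖((F' ξ : ℝ):ℂ) * z₂^2 - ((F' b * b : ℝ):ℂ)‖ * dd
        + |F' ξ| * (dd * dd) * ‖z₂‖ := by
    rw [hid]
    have e1 : ‖((F a₁ - F b : ℝ):ℂ) * (v₁ - v₂)‖ = |F a₁ - F b| * dd := by
      rw [norm_mul, Complex.norm_real, Real.norm_eq_abs, hdd_def]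
    have e2 : ‖((F' ξ * a₂ - F' b * b : ℝ):ℂ) * (v₁ - v₂)‖
        = |F' ξ * a₂ - F' b * b| * dd := by
      rw [norm_mul, Complex.norm_real, Real.norm_eq_abs, hdd_def]
    have e3 : ‖(((F' ξ : ℝ):ℂ) * z₂^2 - ((F' b * b : ℝ):ℂ))
          * ((starRingEnd ℂ) v₁ - (starRingEnd ℂ) v₂)‖
        = ‖((F' ξ : ℝ):ℂ) * z₂^2 - ((F' b * b : ℝ):ℂ)‖ * dd := by
      rw [norm_mul, ← map_sub, Complex.norm_conj, hdd_def]
    have e4 : ‖((F' ξ : ℝ):ℂ)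
          * ((v₁ - v₂) * ((starRingEnd ℂ) v₁ - (starRingEnd ℂ) v₂)) * z₂‖
        = |F' ξ| * (dd * dd) * ‖z₂‖ := by
      rw [norm_mul, norm_mul, Complex.norm_real, Real.norm_eq_abs, norm_mul, ← map_sub, Complex.norm_conj, hdd_def]
    refine le_trans (le_trans (norm_add_le _ _) (add_le_add_left
      (le_trans (norm_add_le _ _) (add_le_add_left (norm_add_le _ _) _)) _)) ?_
    rw [e1, e2, e3, e4]
  -- split the T3 term
  have hT3 : ‖((F' ξ : ℝ):ℂ) * z₂^2 - ((F' b * b : ℝ):ℂ)‖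
      ≤ |F' ξ| * ‖z₂^2 - ((R:ℂ))^2‖ + |F' ξ - F' b| * b := by
    have e : ((F' ξ : ℝ):ℂ) * z₂^2 - ((F' b * b : ℝ):ℂ)
        = ((F' ξ : ℝ):ℂ) * (z₂^2 - ((R:ℂ))^2) + (((F' ξ - F' b) * b : ℝ):ℂ) := by
      push_cast [hb_def]
      ring
    rw [e]
    refine le_trans (norm_add_le _ _) ?_
    rw [norm_mul, Complex.norm_real, Real.norm_eq_abs, Complex.norm_real, Real.norm_eq_abs, abs_mul, abs_of_nonneg hb0]
  have hz₂R : ‖z₂^2 - ((R:ℂ))^2‖ ≤ (2*R + u) * u := by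
    have e : z₂^2 - ((R:ℂ))^2 = v₂ * (z₂ + (R:ℂ)) := by rw [hz₂_def]; ring
    rw [e, norm_mul]
    have h1 : ‖z₂ + (R:ℂ)‖ ≤ 2*R + u := by
      calc ‖z₂ + (R:ℂ)‖ ≤ ‖z₂‖ + ‖(R:ℂ)‖ :=
            norm_add_le _ _
        _ ≤ (R + u₂) + R := by
            rw [Complex.norm_real, Real.norm_eq_abs, abs_of_nonneg hR]; linarith [habsz₂]
        _ ≤ 2*R + u := by linarith
    calc ‖v₂‖ * ‖z₂ + (R:ℂ)‖ ≤ u₂ * (2*R + u) :=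
          mul_le_mul le_rfl h1 (norm_nonneg _) hu₂0
      _ ≤ (2*R + u) * u := by
          have h := mul_le_mul_of_nonneg_right (by linarith : u₂ ≤ u)
            (by linarith : (0:ℝ) ≤ 2*R + u)
          linarith [h]
  -- pointwise bounds
  have hXr0 : (0:ℝ) ≤ X ^ (r-1) := Real.rpow_nonneg hX0 _
  have hW4ξ := W4 ξ X hξ0 hξX hXM
  have nonneg1 : (0:ℝ) ≤ K4 * X^(r-1) := mul_nonneg hK4.le hXr0
  have P1 : |F a₁ - F b| ≤ K1 * (X^(r-1) * ((2*R+u)*u)) := by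
    refine le_trans (W F K1 hK1.le hk1 a₁ b X ha₁0 hb0 ha₁X hbX hXM) ?_
    exact mul_le_mul_of_nonneg_left (mul_le_mul_of_nonneg_left ha₁b hXr0) hK1.le
  have P2a : |F' ξ * ξ - F' b * b| ≤ K2 * (X^(r-1) * ((2*R+u)*u)) := by
    have h : |F' ξ * ξ - F' b * b| ≤ K2 * (X ^ (r-1) * |ξ - b|) :=
      W (fun x => F' x * x) K2 hK2.le hk2 ξ b X hξ0 hb0 hξX hbX hXM
    refine le_trans h ?_
    exact mul_le_mul_of_nonneg_left (mul_le_mul_of_nonneg_left hξb hXr0) hK2.le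
  have P2 : |F' ξ * a₂ - F' b * b|
      ≤ K2 * (X^(r-1) * ((2*R+u)*u)) + K4 * X^(r-1) * (2*((2*R+u)*u)) := by
    have e : F' ξ * a₂ - F' b * b = (F' ξ * ξ - F' b * b) + F' ξ * (a₂ - ξ) := by ring
    calc |F' ξ * a₂ - F' b * b| ≤ |F' ξ * ξ - F' b * b| + |F' ξ * (a₂ - ξ)| := by
          rw [e]; exact abs_add_le _ _
      _ = |F' ξ * ξ - F' b * b| + |F' ξ| * |a₂ - ξ| := by rw [abs_mul]
      _ ≤ K2 * (X^(r-1) * ((2*R+u)*u)) + K4 * X^(r-1) * (2*((2*R+u)*u)) :=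
          add_le_add P2a (mul_le_mul hW4ξ ha₂ξ (abs_nonneg _) nonneg1)
  have P3a : |F' ξ| * ‖z₂^2 - ((R:ℂ))^2‖ ≤ K4 * X^(r-1) * ((2*R+u)*u) :=
    mul_le_mul hW4ξ hz₂R (norm_nonneg _) nonneg1
  have P3b : |F' ξ - F' b| * b ≤ K3 * (X^(r-1) * ((2*R+u)*u)) := by
    rw [mul_comm]
    refine le_trans (W3 ξ b X hξ0 hb0 hξX hbX hXM) ?_
    exact mul_le_mul_of_nonneg_left (mul_le_mul_of_nonneg_left hξb hXr0) hK3.le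
  have P4 : |F' ξ| * (dd * dd) * ‖z₂‖ ≤ K4 * X^(r-1) * ((R+u) * u) * dd := by
    have h1 : |F' ξ| * (dd * dd) ≤ (K4 * X^(r-1)) * (u * dd) := by
      have hdd2 : dd * dd ≤ u * dd := mul_le_mul_of_nonneg_right hdd_u hdd0.le
      exact mul_le_mul hW4ξ hdd2 (mul_nonneg hdd0.le hdd0.le) nonneg1
    have h2 : ‖z₂‖ ≤ R + u := by linarith [habsz₂]
    calc |F' ξ| * (dd * dd) * ‖z₂‖ ≤ ((K4 * X^(r-1)) * (u * dd)) * (R + u) :=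
          mul_le_mul h1 h2 (norm_nonneg _)
            (mul_nonneg nonneg1 (mul_nonneg hu0.le hdd0.le))
      _ = K4 * X^(r-1) * ((R+u) * u) * dd := by ring
  -- combine
  have hnn : (0:ℝ) ≤ X^(r-1) * ((R+u)*u) * dd :=
    mul_nonneg (mul_nonneg hXr0 (mul_nonneg (by linarith) hu0.le)) hdd0.le
  have hBle : X^(r-1)*((2*R+u)*u) ≤ X^(r-1)*(2*((R+u)*u)) := by
    apply mul_le_mul_of_nonneg_left _ hXr0
    have h := mul_le_mul_of_nonneg_right (by linarith : 2*R+u ≤ 2*(R+u)) hu0.le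
    linarith [h]
  have htot : ‖f₀ R v₁ - f₀ R v₂‖ ≤ Ktot * (X^(r-1) * ((R+u)*u) * dd) := by
    have c1 := mul_le_mul_of_nonneg_right P1 hdd0.le
    have c2 := mul_le_mul_of_nonneg_right P2 hdd0.le
    have c3 := mul_le_mul_of_nonneg_right (le_trans hT3 (add_le_add P3a P3b)) hdd0.le
    have hS : (0:ℝ) ≤ K1+K2+K3+3*K4 := by linarith
    have step2 : (K1+K2+K3+3*K4) * (X^(r-1)*((2*R+u)*u)) * dd
        ≤ (K1+K2+K3+3*K4) * (X^(r-1)*(2*((R+u)*u))) * dd :=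
      mul_le_mul_of_nonneg_right (mul_le_mul_of_nonneg_left hBle hS) hdd0.le
    have t := mul_nonneg hK4.le hnn
    refine le_trans htri ?_
    rw [hKtot_def]
    linarith [c1, c2, c3, P4, step2, t]
  -- convert powers
  have hXr_eq : X^(r-1) = (R+u)^(p-2) := by
    rw [hX_def, ← Real.rpow_natCast (R+u) 2, ← Real.rpow_mul (by linarith : (0:ℝ) ≤ R+u)]
    congr 1
    rw [hr_def]; push_cast; ring
  have hstep : X^(r-1) * ((R+u)*u) = (R+u)^(p-1) * u := by
    rw [hXr_eq]
    calc (R+u)^(p-2) * ((R+u)*u) = ((R+u)^(p-2+1))*u := by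
          rw [Real.rpow_add_one hRu0.ne']; ring
      _ = (R+u)^(p-1)*u := by rw [show p-2+1 = p-1 by ring]
  have hsum : (R+u)^(p-1) ≤ 2^(p-1) * (R^(p-1) + u^(p-1)) := by
    have h1 : R + u ≤ 2 * max R u := by
      rcases le_total R u with h|h
      · rw [max_eq_right h]; linarith
      · rw [max_eq_left h]; linarith
    have hmax0 : 0 ≤ max R u := le_trans hR (le_max_left _ _)
    have h2 : (R+u)^(p-1) ≤ (2*max R u)^(p-1) :=
      Real.rpow_le_rpow (by linarith) h1 (by linarith)
    have h3 : (2*max R u)^(p-1) = 2^(p-1) * (max R u)^(p-1) :=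
      Real.mul_rpow (by norm_num) hmax0
    have h4 : (max R u)^(p-1) ≤ R^(p-1) + u^(p-1) := by
      rcases max_cases R u with ⟨he,_⟩|⟨he,_⟩ <;> rw [he]
      · linarith [Real.rpow_nonneg hu0.le (p-1)]
      · linarith [Real.rpow_nonneg hR (p-1)]
    calc (R+u)^(p-1) ≤ (2*max R u)^(p-1) := h2
      _ = 2^(p-1) * (max R u)^(p-1) := h3
      _ ≤ 2^(p-1) * (R^(p-1) + u^(p-1)) := mul_le_mul_of_nonneg_left h4 h2p1.le
  have hRp : R^(p-1) ≤ R₀^(p-2) * R := by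
    rcases eq_or_lt_of_le hR with h0|hRpos
    · rw [← h0, Real.zero_rpow (by linarith : p-1 ≠ 0), mul_zero]
    · calc R^(p-1) = R^(p-2) * R := by
            rw [show p-1 = p-2+1 by ring, Real.rpow_add_one hRpos.ne']
        _ ≤ R₀^(p-2) * R := mul_le_mul_of_nonneg_right
            (Real.rpow_le_rpow hR hRR₀ (by linarith)) hR
  have hup : u^(p-1) * u = u^p := by
    rw [← Real.rpow_add_one hu0.ne' (p-1), show p-1+1 = p by ring]
  have hu2p : u^p ≤ 2^p * (u₁^p + u₂^p) := by
    have h1 : u ≤ 2 * max u₁ u₂ := by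
      rcases le_total u₁ u₂ with h|h
      · rw [max_eq_right h, hu_def]; linarith
      · rw [max_eq_left h, hu_def]; linarith
    have hmax0 : 0 ≤ max u₁ u₂ := le_trans hu₁0 (le_max_left _ _)
    have h2 : u^p ≤ (2*max u₁ u₂)^p := Real.rpow_le_rpow hu0.le h1 (by linarith)
    have h3 : (2*max u₁ u₂)^p = 2^p * (max u₁ u₂)^p := Real.mul_rpow (by norm_num) hmax0
    have h4 : (max u₁ u₂)^p ≤ u₁^p + u₂^p := by
      rcases max_cases u₁ u₂ with ⟨he,_⟩|⟨he,_⟩ <;> rw [he]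
      · linarith [Real.rpow_nonneg hu₂0 p]
      · linarith [Real.rpow_nonneg hu₁0 p]
    calc u^p ≤ (2*max u₁ u₂)^p := h2
      _ = 2^p * (max u₁ u₂)^p := h3
      _ ≤ 2^p * (u₁^p + u₂^p) := mul_le_mul_of_nonneg_left h4 h2pp.le
  have hfin2 : Ktot * (((R+u)^(p-1) * u) * dd)
      ≤ Ktot * ((2^(p-1) * (R^(p-1) + u^(p-1))) * u * dd) := by
    apply mul_le_mul_of_nonneg_left _ hKtot.le
    apply mul_le_mul_of_nonneg_right _ hdd0.le
    exact mul_le_mul_of_nonneg_right hsum hu0.le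
  have hfin4 : Ktot * 2^(p-1) * ((R^(p-1)*u + u^(p-1)*u) * dd)
      ≤ Ktot * 2^(p-1) * ((R₀^(p-2)*R*u + 2^p*(u₁^p + u₂^p)) * dd) := by
    apply mul_le_mul_of_nonneg_left _ (mul_nonneg hKtot.le h2p1.le)
    apply mul_le_mul_of_nonneg_right _ hdd0.le
    have t1 : R^(p-1)*u ≤ R₀^(p-2)*R*u := mul_le_mul_of_nonneg_right hRp hu0.le
    have t2 : u^(p-1)*u ≤ 2^p*(u₁^p+u₂^p) := by rw [hup]; exact hu2p
    linarith [t1, t2]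
  have hfin5 : Ktot * 2^(p-1) * ((R₀^(p-2)*R*u + 2^p*(u₁^p + u₂^p)) * dd)
      ≤ (Ktot * 2^(p-1) * (R₀^(p-2) + 2^p) + 1) * (R * u + u₁^p + u₂^p) * dd := by
    have hKt2 : 0 < Ktot * 2^(p-1) := mul_pos hKtot h2p1
    have hRu_nn : 0 ≤ R * u := mul_nonneg hR hu0.le
    have hS_nn : 0 ≤ u₁^p + u₂^p :=
      add_nonneg (Real.rpow_nonneg hu₁0 p) (Real.rpow_nonneg hu₂0 p)
    have ha : Ktot * 2^(p-1) * R₀^(p-2) ≤ Ktot * 2^(p-1) * (R₀^(p-2) + 2^p) + 1 := by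
      have h := mul_pos hKt2 h2pp
      linarith [h]
    have hb' : Ktot * 2^(p-1) * 2^p ≤ Ktot * 2^(p-1) * (R₀^(p-2) + 2^p) + 1 := by
      have h := mul_pos hKt2 hR0p
      linarith [h]
    have t1 := mul_le_mul_of_nonneg_right ha (mul_nonneg hRu_nn hdd0.le)
    have t2 := mul_le_mul_of_nonneg_right hb' (mul_nonneg hS_nn hdd0.le)
    linarith [t1, t2]
  calc ‖f₀ R v₁ - f₀ R v₂‖
      ≤ Ktot * (X^(r-1) * ((R+u)*u) * dd) := htot
    _ = Ktot * (((R+u)^(p-1) * u) * dd) := by rw [hstep]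
    _ ≤ Ktot * ((2^(p-1) * (R^(p-1) + u^(p-1))) * u * dd) := hfin2
    _ = Ktot * 2^(p-1) * ((R^(p-1)*u + u^(p-1)*u) * dd) := by ring
    _ ≤ Ktot * 2^(p-1) * ((R₀^(p-2)*R*u + 2^p*(u₁^p + u₂^p)) * dd) := hfin4
    _ ≤ (Ktot * 2^(p-1) * (R₀^(p-2) + 2^p) + 1) * (R * u + u₁^p + u₂^p) * dd := hfin5
end
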